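/- arXiv:1210.2251 — 9 statements merged into one kernel-verified Lean document; each statement's English description precedes it below -/
import Mathlib

section
/- Let C ⊆ 𝒳 be measurable and ε > 0 with (1+ε)·F̃(C) < 1. Then inf{ H(G∣F̃) : G a probability measure on 𝒳 with dG/dF̃ ≥ 1+ε F̃-almost everywhere on C } = γ⁺_ε(F̃(C)). Moreover, the infimum is attained by the probability measure G* whose density with respect to F̃ equals 1+ε on C and equals (1−(1+ε)F̃(C))/(1−F̃(C)) on the complement of C. -/
open MeasureTheory Filter Topology ENNReal
open scoped Classical

noncomputable section

/-- Relative entropy (Kullback–Leibler divergence) `H(G ∣ μ) = ∫ log(dG/dμ) dG` when `G ≪ μ`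
(and the integrand is `G`-integrable), `+∞` otherwise. -/
def KL {X : Type*} [MeasurableSpace X] (G μ : Measure X) : ℝ≥0∞ :=
  if G ≪ μ ∧ Integrable (fun x => Real.log ((G.rnDeriv μ) x).toReal) G then
    ENNReal.ofReal (∫ x, Real.log ((G.rnDeriv μ) x).toReal ∂G)
  else ⊤

/-- `γ⁺_ε(s)` -/
def gammaPlus (ε s : ℝ) : ℝ :=
  (1 + ε) * s * Real.log (1 + ε)
    + (1 - (1 + ε) * s) * Real.log ((1 - (1 + ε) * s) / (1 - s))

lemma log_tangent {t c : ℝ} (ht : 0 < t) (hc : 0 < c) :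
    Real.log c + 1 - c / t ≤ Real.log t := by
  have h := Real.log_le_sub_one_of_pos (div_pos hc ht)
  rw [Real.log_div hc.ne' ht.ne'] at h
  linarith

lemma integral_log_piecewise {X : Type*} [MeasurableSpace X] (G : Measure X) [IsFiniteMeasure G]
    (C : Set X) (hC : MeasurableSet C) (A B : ℝ) :
    Integrable (fun x => Real.log (if x ∈ C then A else B)) G ∧
    ∫ x, Real.log (if x ∈ C then A else B) ∂G
      = (G C).toReal * Real.log A + (G Cᶜ).toReal * Real.log B := by
  have hfun : (fun x => Real.log (if x ∈ C then A else B))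
      = fun x => C.indicator (fun _ => Real.log A) x + Cᶜ.indicator (fun _ => Real.log B) x := by
    funext x; by_cases hx : x ∈ C <;> simp [Set.indicator, hx]
  have hI1 : Integrable (fun x => C.indicator (fun _ => Real.log A) x) G :=
    (integrable_const (Real.log A)).indicator hC
  have hI2 : Integrable (fun x => Cᶜ.indicator (fun _ => Real.log B) x) G :=
    (integrable_const (Real.log B)).indicator hC.compl
  constructor
  · rw [hfun]; exact hI1.add hI2
  · rw [hfun, integral_add hI1 hI2, integral_indicator_const _ hC,
      integral_indicator_const _ hC.compl]
    simp [smul_eq_mul]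
    rfl

theorem stmt4 {X : Type*} [MeasurableSpace X] [MetricSpace X] [CompleteSpace X]
    [TopologicalSpace.SeparableSpace X] [BorelSpace X]
    (Ftil : Measure X) [IsProbabilityMeasure Ftil]
    (C : Set X) (hC : MeasurableSet C) (ε : ℝ) (hε : 0 < ε)
    (hlt : (1 + ε) * (Ftil C).toReal < 1) :
    sInf { r : ℝ≥0∞ | ∃ G : Measure X, IsProbabilityMeasure G ∧
        (∀ᵐ x ∂Ftil, x ∈ C → 1 + ε ≤ ((G.rnDeriv Ftil) x).toReal) ∧ r = KL G Ftil }
      = ENNReal.ofReal (gammaPlus ε (Ftil C).toReal) ∧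
    ∃ Gstar : Measure X,
      Gstar = Ftil.withDensity (fun x => ENNReal.ofReal
        (if x ∈ C then 1 + ε
         else (1 - (1 + ε) * (Ftil C).toReal) / (1 - (Ftil C).toReal))) ∧
      IsProbabilityMeasure Gstar ∧
      (∀ᵐ x ∂Ftil, x ∈ C → 1 + ε ≤ ((Gstar.rnDeriv Ftil) x).toReal) ∧
      KL Gstar Ftil = ENNReal.ofReal (gammaPlus ε (Ftil C).toReal) := by
  set s : ℝ := (Ftil C).toReal with hsdef
  have hs0 : 0 ≤ s := ENNReal.toReal_nonneg
  have hε1 : (0:ℝ) < 1 + ε := by linarith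
  have hεs : 0 ≤ ε * s := mul_nonneg hε.le hs0
  have hs1 : s < 1 := by nlinarith
  set b : ℝ := (1 - (1 + ε) * s) / (1 - s) with hbdef
  have hb0 : 0 < b := div_pos (by linarith) (by linarith)
  have hb1 : b ≤ 1 := by
    rw [hbdef, div_le_one (by linarith)]; nlinarith
  have hbs : b * (1 - s) = 1 - (1 + ε) * s := by
    rw [hbdef, div_mul_cancel₀ _ (by linarith : (1:ℝ) - s ≠ 0)]
  set fr : X → ℝ := fun x => if x ∈ C then 1 + ε else b with hfrdef
  have hfr_pos : ∀ x, 0 < fr x := by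
    intro x; by_cases hx : x ∈ C <;> simp only [hfrdef, hx, if_true, if_false]
    · exact hε1
    · exact hb0
  have hfr_meas : Measurable fr := Measurable.ite hC measurable_const measurable_const
  set fe : X → ℝ≥0∞ := fun x => ENNReal.ofReal (fr x) with hfedef
  have hfe_meas : Measurable fe := hfr_meas.ennreal_ofReal
  have hFC : Ftil C = ENNReal.ofReal s := (ENNReal.ofReal_toReal (measure_ne_top _ _)).symm
  have hFCc : Ftil Cᶜ = ENNReal.ofReal (1 - s) := by
    rw [prob_compl_eq_one_sub hC, hFC, ← ENNReal.ofReal_one, ← ENNReal.ofReal_sub _ hs0]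
  set Gs : Measure X := Ftil.withDensity fe with hGsdef
  have hGsC : Gs C = ENNReal.ofReal ((1 + ε) * s) := by
    rw [hGsdef, withDensity_apply _ hC]
    rw [setLIntegral_congr_fun hC
      (fun x hx => by simp [hfedef, hfrdef, hx] : ∀ x, x ∈ C → fe x = ENNReal.ofReal (1 + ε))]
    rw [setLIntegral_const, hFC, ← ENNReal.ofReal_mul hε1.le]
  have hGsCc : Gs Cᶜ = ENNReal.ofReal (1 - (1 + ε) * s) := by
    rw [hGsdef, withDensity_apply _ hC.compl]
    rw [setLIntegral_congr_fun hC.compl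
      (fun x hx => by
        have hx' : x ∉ C := hx
        simp [hfedef, hfrdef, hx'] : ∀ x, x ∈ Cᶜ → fe x = ENNReal.ofReal b)]
    rw [setLIntegral_const, hFCc, ← ENNReal.ofReal_mul hb0.le, hbs]
  have hGs_prob : IsProbabilityMeasure Gs := by
    constructor
    rw [← measure_add_measure_compl (μ := Gs) hC, hGsC, hGsCc,
      ← ENNReal.ofReal_add (by nlinarith) (by nlinarith)]
    norm_num
  have hGs_rn : Gs.rnDeriv Ftil =ᶠ[ae Ftil] fe := Measure.rnDeriv_withDensity Ftil hfe_meas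
  have hGs_ac : Gs ≪ Ftil := withDensity_absolutelyContinuous _ _
  have hGs_cons : ∀ᵐ x ∂Ftil, x ∈ C → 1 + ε ≤ ((Gs.rnDeriv Ftil) x).toReal := by
    filter_upwards [hGs_rn] with x hx hxC
    rw [hx]
    simp [hfedef, hfrdef, hxC, ENNReal.toReal_ofReal hε1.le]
  have hlog_eq : (fun x => Real.log ((Gs.rnDeriv Ftil) x).toReal)
      =ᶠ[ae Gs] (fun x => Real.log (fr x)) := by
    filter_upwards [hGs_ac.ae_le hGs_rn] with x hx
    rw [hx, hfedef]
    simp [ENNReal.toReal_ofReal (hfr_pos x).le]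
  haveI := hGs_prob
  obtain ⟨hInt_fr, hInt_fr_val⟩ := integral_log_piecewise Gs C hC (1 + ε) b
  have hIntGs : Integrable (fun x => Real.log ((Gs.rnDeriv Ftil) x).toReal) Gs :=
    hInt_fr.congr hlog_eq.symm
  have hKLGs : KL Gs Ftil = ENNReal.ofReal (gammaPlus ε s) := by
    rw [KL, if_pos ⟨hGs_ac, hIntGs⟩]
    congr 1
    rw [integral_congr_ae hlog_eq, hInt_fr_val, hGsC, hGsCc,
      ENNReal.toReal_ofReal (by nlinarith), ENNReal.toReal_ofReal (by nlinarith)]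
    rw [gammaPlus]
  -- lower bound for arbitrary G
  have key : ∀ G : Measure X, IsProbabilityMeasure G →
      (∀ᵐ x ∂Ftil, x ∈ C → 1 + ε ≤ ((G.rnDeriv Ftil) x).toReal) →
      ENNReal.ofReal (gammaPlus ε s) ≤ KL G Ftil := by
    intro G hG hcons
    rw [KL]
    split_ifs with h
    · obtain ⟨hac, hint⟩ := h
      refine ENNReal.ofReal_le_ofReal ?_
      set g : X → ℝ := fun x => ((G.rnDeriv Ftil) x).toReal with hgdef
      have hg_meas : Measurable g := (Measure.measurable_rnDeriv G Ftil).ennreal_toReal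
      have hg_nonneg : ∀ x, 0 ≤ g x := fun x => ENNReal.toReal_nonneg
      have hGrepr : Ftil.withDensity (G.rnDeriv Ftil) = G :=
        Measure.withDensity_rnDeriv_eq _ _ hac
      have hg_pos : ∀ᵐ x ∂G, 0 < g x := by
        filter_upwards [Measure.rnDeriv_pos hac,
          hac.ae_le (Measure.rnDeriv_lt_top G Ftil)] with x h1 h2
        exact ENNReal.toReal_pos h1.ne' h2.ne
      -- G C ≥ (1+ε) s
      have hGC_ge : ENNReal.ofReal ((1 + ε) * s) ≤ G C := by
        have h1 : ∀ᵐ x ∂Ftil, x ∈ C → ENNReal.ofReal (1 + ε) ≤ G.rnDeriv Ftil x := by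
          filter_upwards [hcons, Measure.rnDeriv_lt_top G Ftil] with x hx hlttop hxC
          calc ENNReal.ofReal (1 + ε) ≤ ENNReal.ofReal ((G.rnDeriv Ftil x).toReal) :=
                ENNReal.ofReal_le_ofReal (hx hxC)
            _ = G.rnDeriv Ftil x := ENNReal.ofReal_toReal hlttop.ne
        calc ENNReal.ofReal ((1 + ε) * s) = ENNReal.ofReal (1 + ε) * Ftil C := by
              rw [hFC, ← ENNReal.ofReal_mul hε1.le]
          _ = ∫⁻ x in C, ENNReal.ofReal (1 + ε) ∂Ftil := (setLIntegral_const _ _).symm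
          _ ≤ ∫⁻ x in C, G.rnDeriv Ftil x ∂Ftil :=
              setLIntegral_mono_ae (Measure.measurable_rnDeriv G Ftil).aemeasurable h1
          _ = G C := by rw [← withDensity_apply _ hC, hGrepr]
      set t : ℝ := (G C).toReal with htdef
      have ht_ge : (1 + ε) * s ≤ t := by
        have := ENNReal.toReal_mono (measure_ne_top G C) hGC_ge
        rwa [ENNReal.toReal_ofReal (by nlinarith)] at this
      have htc : (G Cᶜ).toReal = 1 - t := by
        rw [prob_compl_eq_one_sub hC, ENNReal.toReal_sub_of_le prob_le_one one_ne_top]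
        simp [htdef]
      -- integrability of fr / g
      have hfrg_nonneg : ∀ x, 0 ≤ fr x / g x := fun x =>
        div_nonneg (hfr_pos x).le (hg_nonneg x)
      have hfrg_meas : Measurable (fun x => fr x / g x) := hfr_meas.div hg_meas
      have hlint_le : ∫⁻ x, ENNReal.ofReal (fr x / g x) ∂G ≤ 1 := by
        conv_lhs => rw [← hGrepr]
        rw [lintegral_withDensity_eq_lintegral_mul _ (Measure.measurable_rnDeriv G Ftil)
          hfrg_meas.ennreal_ofReal]
        have hpt : ∀ x, (G.rnDeriv Ftil x) * ENNReal.ofReal (fr x / g x)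
            ≤ ENNReal.ofReal (fr x) := by
          intro x
          by_cases hx : G.rnDeriv Ftil x = ⊤
          · have : g x = 0 := by simp [hgdef, hx]
            simp [this, _root_.div_zero]
          · rw [← ENNReal.ofReal_toReal hx,
              show (G.rnDeriv Ftil x).toReal = g x from rfl,
              ← ENNReal.ofReal_mul (hg_nonneg x)]
            refine ENNReal.ofReal_le_ofReal ?_
            by_cases hgx : g x = 0
            · simp [hgx, (hfr_pos x).le]
            · rw [mul_div_cancel₀ _ hgx]
        calc ∫⁻ x, (G.rnDeriv Ftil * fun x => ENNReal.ofReal (fr x / g x)) x ∂Ftil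
            ≤ ∫⁻ x, ENNReal.ofReal (fr x) ∂Ftil := lintegral_mono fun x => hpt x
          _ = Gs Set.univ := by
              rw [hGsdef, withDensity_apply _ MeasurableSet.univ, setLIntegral_univ]
          _ = 1 := hGs_prob.measure_univ
      have hI2 : Integrable (fun x => fr x / g x) G := by
        refine ⟨hfrg_meas.aestronglyMeasurable, ?_⟩
        rw [hasFiniteIntegral_iff_ofReal (Filter.Eventually.of_forall hfrg_nonneg)]
        exact lt_of_le_of_lt hlint_le one_lt_top
      have hI2_le : ∫ x, fr x / g x ∂G ≤ 1 := by
        rw [integral_eq_lintegral_of_nonneg_ae (Filter.Eventually.of_forall hfrg_nonneg)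
          hfrg_meas.aestronglyMeasurable]
        calc (∫⁻ x, ENNReal.ofReal (fr x / g x) ∂G).toReal ≤ (1 : ℝ≥0∞).toReal :=
            ENNReal.toReal_mono one_ne_top hlint_le
          _ = 1 := by simp
      obtain ⟨hI1, hI1_val⟩ := integral_log_piecewise G C hC (1 + ε) b
      have hI1' : Integrable (fun x => Real.log (fr x)) G := hI1
      -- pointwise inequality
      have hpt : (fun x => Real.log (fr x) + 1 - fr x / g x)
          ≤ᶠ[ae G] (fun x => Real.log (g x)) := by
        filter_upwards [hg_pos] with x hx
        exact log_tangent hx (hfr_pos x)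
      have hIlhs : Integrable (fun x => Real.log (fr x) + 1 - fr x / g x) G :=
        (hI1'.add (integrable_const 1)).sub hI2
      have hmono := integral_mono_ae hIlhs hint hpt
      have hsplit : ∫ a, (Real.log (fr a) + 1 - fr a / g a) ∂G
          = (∫ a, Real.log (fr a) ∂G + 1) - ∫ a, fr a / g a ∂G := by
        have hIadd : Integrable (fun x => Real.log (fr x) + 1) G :=
          hI1'.add (integrable_const 1)
        rw [integral_sub hIadd hI2, integral_add hI1' (integrable_const 1)]
        simp
      have hfrval : ∫ x, Real.log (fr x) ∂G
          = t * Real.log (1 + ε) + (1 - t) * Real.log b := by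
        rw [htc] at hI1_val; exact hI1_val
      rw [hsplit, hfrval] at hmono
      have hL : (0:ℝ) ≤ Real.log (1 + ε) := Real.log_nonneg (by linarith)
      have hB : Real.log b ≤ 0 := Real.log_nonpos hb0.le hb1
      rw [gammaPlus, ← hbdef]
      have hprod : 0 ≤ (t - (1 + ε) * s) * (Real.log (1 + ε) - Real.log b) :=
        mul_nonneg (sub_nonneg.mpr ht_ge) (sub_nonneg.mpr (hB.trans hL))
      nlinarith [hprod, hI2_le, hmono]
    · exact le_top
  constructor
  · apply le_antisymm
    · exact sInf_le ⟨Gs, hGs_prob, hGs_cons, hKLGs.symm⟩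
    · refine le_sInf ?_
      rintro r ⟨G, hG, hcons, rfl⟩
      exact key G hG hcons
  · exact ⟨Gs, rfl, hGs_prob, hGs_cons, hKLGs⟩
end
end

section
/- For t ≥ 0 let C_t = { x ∈ A : (dF/dF̃)(x) ≥ t }. Let δ > 0 and suppose there exists t̃ > 0 with F(C_{t̃}) = δ. Then inf{ J₊(C) : C ⊆ A measurable with F(C) ≥ δ } = J₊(C_{t̃}), i.e., the infimum over subsets of A of F-measure at least δ is attained by the likelihood-ratio level set C_{t̃}. -/
open MeasureTheory Filter Topology ENNReal
open scoped Classical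

noncomputable section

/-- The product `w·f` of the weight function `w = (dF/dF̃)·1_A` and the importance
function `f = 1_A`. -/
def wf {X : Type*} [MeasurableSpace X] (F Ftil : Measure X) (A : Set X) : X → ℝ :=
  Set.indicator A fun y => ((F.rnDeriv Ftil) y).toReal

/-- `G ∈ Γ ∩ Δ`: `G` is a probability measure with `∫ w f dG < ∞` and `H(G∣F̃) < ∞`. -/
def memGammaDelta {X : Type*} [MeasurableSpace X] (F Ftil : Measure X) (A : Set X)
    (G : Measure X) : Prop :=
  IsProbabilityMeasure G ∧ (∫⁻ x, ENNReal.ofReal (wf F Ftil A x) ∂G) ≠ ⊤ ∧ KL G Ftil ≠ ⊤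

/-- `J₊(C)`, with `inf ∅ = ∞`. -/
def Jplus {X : Type*} [MeasurableSpace X] (F Ftil : Measure X) (A : Set X) (ε : ℝ)
    (C : Set X) : ℝ≥0∞ :=
  sInf { r | ∃ G : Measure X, memGammaDelta F Ftil A G ∧
    (∀ᵐ x ∂Ftil, x ∈ C → 1 + ε ≤ ((G.rnDeriv Ftil) x).toReal) ∧ r = KL G Ftil }

/-- The likelihood-ratio level set `C_t = {x ∈ A : dF/dF̃(x) ≥ t}`. -/
def Ct {X : Type*} [MeasurableSpace X] (F Ftil : Measure X) (A : Set X) (t : ℝ) : Set X :=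
  {x ∈ A | ENNReal.ofReal t ≤ (F.rnDeriv Ftil) x}



lemma gibbs {X : Type*} [MeasurableSpace X] (μ ν : Measure X)
    [IsProbabilityMeasure μ] [IsProbabilityMeasure ν] (hμν : μ ≪ ν)
    (h_int : Integrable (llr μ ν) μ) : 0 ≤ ∫ x, llr μ ν x ∂μ := by
  have h1 : ∀ᵐ x ∂μ, 0 < ν.rnDeriv μ x ∧ ν.rnDeriv μ x < ⊤ ∧
      (ν.rnDeriv μ x)⁻¹ = μ.rnDeriv ν x := by
    filter_upwards [Measure.rnDeriv_lt_top ν μ, Measure.inv_rnDeriv hμν,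
      Measure.rnDeriv_pos hμν, hμν.ae_le (Measure.rnDeriv_lt_top μ ν)] with x h2 h3 h4 h5
    have hpos : 0 < ν.rnDeriv μ x := by
      rw [← h3] at *
      simp only [Pi.inv_apply] at *
      exact ENNReal.inv_pos.mpr h5.ne
    refine ⟨hpos, h2, ?_⟩
    have := h3
    simp only [Pi.inv_apply] at this
    rw [← this, inv_inv]
  have hInt2 : Integrable (fun x => (ν.rnDeriv μ x).toReal) μ :=
    Measure.integrable_toReal_rnDeriv
  have hle : ∀ᵐ x ∂μ, - llr μ ν x ≤ (ν.rnDeriv μ x).toReal - 1 := by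
    filter_upwards [h1] with x ⟨hp, ht, hinv⟩
    have htr : 0 < (ν.rnDeriv μ x).toReal := ENNReal.toReal_pos hp.ne' ht.ne
    have : llr μ ν x = - Real.log (ν.rnDeriv μ x).toReal := by
      rw [llr, ← hinv, ENNReal.toReal_inv, Real.log_inv]
    rw [this, neg_neg]
    exact Real.log_le_sub_one_of_pos htr
  have h2 : ∫ x, - llr μ ν x ∂μ ≤ ∫ x, ((ν.rnDeriv μ x).toReal - 1) ∂μ :=
    integral_mono_ae h_int.neg (hInt2.sub (integrable_const 1)) hle
  have h3 : ∫ x, ((ν.rnDeriv μ x).toReal - 1) ∂μ ≤ 0 := by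
    rw [integral_sub hInt2 (integrable_const 1), integral_const]
    simp only [measureReal_def, measure_univ, ENNReal.toReal_one, smul_eq_mul, one_mul]
    have : ∫ x, (ν.rnDeriv μ x).toReal ∂μ ≤ 1 := by
      rw [Measure.integral_toReal_rnDeriv']
      simp only [measureReal_def]
      have h1 : (ν Set.univ).toReal = 1 := by simp
      have h2 : (0:ℝ) ≤ ((ν.singularPart μ) Set.univ).toReal := ENNReal.toReal_nonneg
      linarith
    linarith
  rw [integral_neg] at h2
  linarith

lemma dv_bound {X : Type*} [MeasurableSpace X] (μ ν : Measure X)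
    [IsProbabilityMeasure μ] [IsProbabilityMeasure ν] (hμν : μ ≪ ν)
    (h_int : Integrable (llr μ ν) μ) {C : Set X} (hC : MeasurableSet C) {l : ℝ} (hl : 0 ≤ l) :
    l * (μ C).toReal - Real.log ((ν C).toReal * (Real.exp l - 1) + 1)
      ≤ ∫ x, llr μ ν x ∂μ := by
  set f : X → ℝ := C.indicator (fun _ => l) with hf
  have hfμ : Integrable f μ := (integrable_const l).indicator hC
  have hexp_eq : (fun x => Real.exp (f x))
      = fun x => C.indicator (fun _ => Real.exp l - 1) x + 1 := by
    funext x
    by_cases hx : x ∈ C <;> simp [hf, hx]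
  have hexpν : Integrable (fun x => Real.exp (f x)) ν := by
    rw [hexp_eq]
    exact ((integrable_const _).indicator hC).add (integrable_const 1)
  have hint_exp : ∫ x, Real.exp (f x) ∂ν = (ν C).toReal * (Real.exp l - 1) + 1 := by
    rw [hexp_eq, integral_add ((integrable_const _).indicator hC) (integrable_const 1),
      integral_indicator_const _ hC, integral_const]
    simp [smul_eq_mul, mul_comm, measureReal_def]
  have hint_f : ∫ x, f x ∂μ = l * (μ C).toReal := by
    rw [hf, integral_indicator_const _ hC]
    simp [smul_eq_mul, mul_comm, measureReal_def]
  have hprob : IsProbabilityMeasure (ν.tilted f) := isProbabilityMeasure_tilted hexpν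
  have hac2 : μ ≪ ν.tilted f := hμν.trans (absolutelyContinuous_tilted hexpν)
  have hint2 : Integrable (llr μ (ν.tilted f)) μ :=
    integrable_llr_tilted_right hμν hfμ h_int hexpν
  have hgibbs : 0 ≤ ∫ x, llr μ (ν.tilted f) x ∂μ := gibbs μ _ hac2 hint2
  rw [integral_llr_tilted_right hμν hfμ hexpν h_int, hint_f, hint_exp] at hgibbs
  linarith


lemma measurableSet_Ct {X : Type*} [MeasurableSpace X] (F Ftil : Measure X) {A : Set X}
    (hA : MeasurableSet A) (t : ℝ) : MeasurableSet (Ct F Ftil A t) :=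
  hA.inter ((Measure.measurable_rnDeriv F Ftil) measurableSet_Ici)

lemma np_lemma {X : Type*} [MeasurableSpace X] (F Ftil : Measure X)
    [IsProbabilityMeasure F] [IsProbabilityMeasure Ftil] {A : Set X} (hA : MeasurableSet A)
    (hac : F.restrict A ≪ Ftil) {t : ℝ} (ht : 0 < t) {C : Set X}
    (hC : MeasurableSet C) (hCA : C ⊆ A)
    (hFC : F (Ct F Ftil A t) ≤ F C) : Ftil (Ct F Ftil A t) ≤ Ftil C := by
  set D := Ct F Ftil A t with hD
  have hDm : MeasurableSet D := measurableSet_Ct F Ftil hA t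
  -- Step 1
  have h1 : ENNReal.ofReal t * Ftil (D \ C) ≤ F (D \ C) := by
    calc ENNReal.ofReal t * Ftil (D \ C)
        = ∫⁻ _ in D \ C, ENNReal.ofReal t ∂Ftil := by rw [setLIntegral_const, mul_comm]
      _ ≤ ∫⁻ x in D \ C, F.rnDeriv Ftil x ∂Ftil := by
          refine setLIntegral_mono (Measure.measurable_rnDeriv F Ftil) fun x hx => hx.1.2
      _ ≤ F (D \ C) := Measure.setLIntegral_rnDeriv_le _
  -- Step 2
  have h2 : F (C \ D) ≤ ENNReal.ofReal t * Ftil (C \ D) := by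
    have hsub : C \ D ⊆ A := fun x hx => hCA hx.1
    have hres : F (C \ D) = (F.restrict A) (C \ D) := by
      rw [Measure.restrict_apply (hC.diff hDm), Set.inter_eq_self_of_subset_left hsub]
    rw [hres, ← Measure.setLIntegral_rnDeriv' hac (hC.diff hDm)]
    calc ∫⁻ x in C \ D, (F.restrict A).rnDeriv Ftil x ∂Ftil
        = ∫⁻ x in C \ D, A.indicator (F.rnDeriv Ftil) x ∂Ftil :=
          lintegral_congr_ae (ae_restrict_of_ae (Measure.rnDeriv_restrict F Ftil hA))
      _ ≤ ∫⁻ _ in C \ D, ENNReal.ofReal t ∂Ftil := by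
          refine setLIntegral_mono measurable_const fun x hx => ?_
          rw [Set.indicator_of_mem (hsub hx)]
          exact le_of_not_ge fun hcon => hx.2 ⟨hsub hx, hcon⟩
      _ = ENNReal.ofReal t * Ftil (C \ D) := by rw [setLIntegral_const, mul_comm]
  -- Step 3
  have h3 : F (D \ C) ≤ F (C \ D) := by
    have e1 : F (D ∩ C) + F (D \ C) = F D := measure_inter_add_diff D hC
    have e2 : F (C ∩ D) + F (C \ D) = F C := measure_inter_add_diff C hDm
    have e3 : D ∩ C = C ∩ D := Set.inter_comm _ _
    have hne : F (D ∩ C) ≠ ⊤ := measure_ne_top _ _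
    have : F (D ∩ C) + F (D \ C) ≤ F (D ∩ C) + F (C \ D) := by
      rw [e1]
      calc F D ≤ F C := hFC
        _ = F (D ∩ C) + F (C \ D) := by rw [← e2, e3]
    exact (ENNReal.add_le_add_iff_left hne).mp this
  -- Step 4
  have h4 : Ftil (D \ C) ≤ Ftil (C \ D) := by
    have : ENNReal.ofReal t * Ftil (D \ C) ≤ ENNReal.ofReal t * Ftil (C \ D) :=
      le_trans h1 (le_trans h3 h2)
    exact (ENNReal.mul_le_mul_iff_right (ENNReal.ofReal_pos.mpr ht).ne' ENNReal.ofReal_ne_top).mp this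
  -- Step 5
  calc Ftil D = Ftil (D ∩ C) + Ftil (D \ C) := (measure_inter_add_diff D hC).symm
    _ ≤ Ftil (C ∩ D) + Ftil (C \ D) := by rw [Set.inter_comm]; exact add_le_add le_rfl h4
    _ = Ftil C := measure_inter_add_diff C hDm

lemma real_core (ε st s g : ℝ) (hε : 0 < ε) (hst : 0 ≤ st) (hlt : (1+ε)*st < 1)
    (hs : st ≤ s) (hg : (1+ε)*s ≤ g) :
    (1+ε)*st*Real.log (1+ε) + (1-(1+ε)*st) * Real.log ((1-(1+ε)*st)/(1-st))
      ≤ Real.log ((1+ε)*(1-st)/(1-(1+ε)*st)) * g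
        - Real.log (s*(Real.exp (Real.log ((1+ε)*(1-st)/(1-(1+ε)*st))) - 1) + 1) := by
  set a := 1 + ε with ha
  set u := 1 - a * st with hu
  set v := 1 - st with hv
  have hau : 0 < u := by linarith
  have hvu : u ≤ v := by nlinarith
  have hv0 : 0 < v := lt_of_lt_of_le hau hvu
  have ha1 : 1 < a := by linarith
  have havu : a * v = u + ε := by ring
  have hratio : 0 < a * v / u := by positivity
  set l := Real.log (a * v / u) with hl
  have hexp : Real.exp l = a * v / u := Real.exp_log hratio
  have hl_pos : 0 < l := Real.log_pos (by rw [lt_div_iff₀ hau]; nlinarith)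
  have hexp_sub : Real.exp l - 1 = ε / u := by
    rw [hexp]; field_simp
    linarith [havu]
  have hs0 : 0 ≤ s := le_trans hst hs
  -- positive log arguments
  have harg : s * (Real.exp l - 1) + 1 = (s * ε + u) / u := by
    rw [hexp_sub]; field_simp
  have hsu : 0 < s * ε + u := by positivity
  have hstu : st * ε + u = v := by ring
  have hstu' : 0 < st * ε + u := by rw [hstu]; exact hv0
  -- step 1: log ((s ε + u)/u) - log ((st ε + u)/u) ≤ ε (s - st) / v
  have hlog_diff : Real.log ((s*ε+u)/u) - Real.log ((st*ε+u)/u) ≤ ε * (s - st) / v := by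
    rw [Real.log_div hsu.ne' hau.ne', Real.log_div hstu'.ne' hau.ne']
    have h1 : Real.log (s*ε+u) - Real.log (st*ε+u) = Real.log ((s*ε+u)/(st*ε+u)) := by
      rw [Real.log_div hsu.ne' hstu'.ne']
    have h2 : Real.log ((s*ε+u)/(st*ε+u)) ≤ (s*ε+u)/(st*ε+u) - 1 :=
      Real.log_le_sub_one_of_pos (by positivity)
    have h3 : (s*ε+u)/(st*ε+u) - 1 = ε * (s - st) / v := by
      rw [div_sub_one hstu'.ne', hstu]; congr 1; rw [← hstu]; ring
    linarith
  -- step 2: l * a ≥ ε / v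
  have hla : ε / v ≤ l * a := by
    have h1 : 1 - l ≤ Real.exp (-l) := by
      have := Real.add_one_le_exp (-l); linarith
    have h2 : Real.exp (-l) = u / (a * v) := by
      rw [Real.exp_neg, hexp]; rw [inv_div]
    have h3 : 1 - u / (a*v) ≤ l := by rw [← h2]; linarith
    have h4 : (1 - u/(a*v)) * a ≤ l * a := by
      apply mul_le_mul_of_nonneg_right h3 (by linarith)
    have h5 : (1 - u/(a*v)) * a = a - u/v := by
      field_simp
    rw [h5] at h4
    have h6 : a - u/v = ε/v + (a*v - u - ε)/v := by field_simp; ring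
    have h7 : a*v - u - ε = 0 := by rw [havu]; ring
    rw [h6, h7] at h4
    simpa using h4
  -- step 3: monotonicity : value at s ≥ value at st
  have hmono : l * (a*st) - Real.log ((st*ε+u)/u) ≤ l * (a*s) - Real.log ((s*ε+u)/u) := by
    have key : ε * (s - st) / v ≤ l * a * (s - st) := by
      have h := mul_le_mul_of_nonneg_right hla (sub_nonneg.mpr hs)
      calc ε * (s - st) / v = ε / v * (s - st) := by ring
        _ ≤ l * a * (s - st) := h
    have h1 : Real.log ((s*ε+u)/u) - Real.log ((st*ε+u)/u) ≤ l * a * (s - st) :=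
      le_trans hlog_diff key
    have h2 : l * (a*s) - l * (a*st) = l * a * (s - st) := by ring
    linarith
  -- step 4: value at st equals φ
  have hval : l * (a*st) - Real.log ((st*ε+u)/u) =
      a*st*Real.log a + (1-a*st) * Real.log (u/v) := by
    rw [hstu]
    have h1 : Real.log (v/u) = Real.log v - Real.log u := Real.log_div hv0.ne' hau.ne'
    have h2 : Real.log (u/v) = Real.log u - Real.log v := Real.log_div hau.ne' hv0.ne'
    have h3 : l = Real.log a + Real.log v - Real.log u := by
      rw [hl, Real.log_div (by positivity) hau.ne', Real.log_mul (by linarith) hv0.ne']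
    rw [h1, h2, h3]; ring
  -- combine
  have hfinal : l * (a*s) - Real.log ((s*ε+u)/u) ≤ l * g - Real.log ((s*ε+u)/u) :=
    sub_le_sub_right (mul_le_mul_of_nonneg_left hg hl_pos.le) _
  rw [harg]
  calc a*st*Real.log a + (1-a*st) * Real.log (u/v)
      = l * (a*st) - Real.log ((st*ε+u)/u) := hval.symm
    _ ≤ l * (a*s) - Real.log ((s*ε+u)/u) := hmono
    _ ≤ l * g - Real.log ((s*ε+u)/u) := hfinal

lemma real_boundary (a st I : ℝ) (ha : 1 < a) (hast : a * st = 1)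
    (h : ∀ n : ℕ, (n : ℝ) - Real.log (st * (Real.exp n - 1) + 1) ≤ I) :
    Real.log a ≤ I := by
  have ha0 : 0 < a := by linarith
  have hst : st = a⁻¹ := by field_simp; linarith [hast]
  have hst0 : 0 < st := by rw [hst]; positivity
  have hst1 : st < 1 := by
    rw [hst]; exact inv_lt_one_of_one_lt₀ ha
  have t1 : Filter.Tendsto (fun n : ℕ => st + (1 - st) * Real.exp (-(n : ℝ)))
      atTop (nhds st) := by
    have h0 : Filter.Tendsto (fun n : ℕ => Real.exp (-(n : ℝ))) atTop (nhds 0) := by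
      have := Real.tendsto_exp_atBot
      exact this.comp (tendsto_neg_atBot_iff.mpr tendsto_natCast_atTop_atTop)
    have := (h0.const_mul (1 - st)).const_add st
    simpa using this
  have t2 : Filter.Tendsto (fun n : ℕ => -Real.log (st + (1 - st) * Real.exp (-(n : ℝ))))
      atTop (nhds (-Real.log st)) :=
    (((Real.continuousAt_log hst0.ne').tendsto.comp t1).neg)
  have hgoal : Real.log a = -Real.log st := by
    rw [hst, Real.log_inv]; ring
  rw [hgoal]
  refine le_of_tendsto' t2 fun n => ?_
  have hpos : 0 < st + (1 - st) * Real.exp (-(n : ℝ)) := by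
    nlinarith [Real.exp_pos (-(n : ℝ))]
  have hiden : st * (Real.exp n - 1) + 1
      = Real.exp n * (st + (1 - st) * Real.exp (-(n : ℝ))) := by
    rw [Real.exp_neg]
    field_simp [Real.exp_ne_zero]
    ring
  have := h n
  rw [hiden, Real.log_mul (Real.exp_ne_zero _) hpos.ne', Real.log_exp] at this
  linarith

section Helpers2

open Real

variable {X : Type*} [MeasurableSpace X]

lemma KL_props {G μ : Measure X} (h : KL G μ ≠ ⊤) :
    G ≪ μ ∧ Integrable (llr G μ) G ∧
      KL G μ = ENNReal.ofReal (∫ x, llr G μ x ∂G) := by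
  by_cases hc : G ≪ μ ∧ Integrable (fun x => Real.log ((G.rnDeriv μ) x).toReal) G
  · refine ⟨hc.1, ?_, ?_⟩
    · rw [llr_def]; exact hc.2
    · rw [KL, if_pos hc, llr_def]
  · exact absurd (by rw [KL, if_neg hc]) h

lemma constraint_measure (Ftil G : Measure X) [SigmaFinite G] [SigmaFinite Ftil] (hGac : G ≪ Ftil)
    {C : Set X} (hC : MeasurableSet C) {ε : ℝ}
    (hcons : ∀ᵐ x ∂Ftil, x ∈ C → 1 + ε ≤ ((G.rnDeriv Ftil) x).toReal) :
    ENNReal.ofReal (1 + ε) * Ftil C ≤ G C := by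
  rw [← Measure.setLIntegral_rnDeriv' hGac hC]
  calc ENNReal.ofReal (1 + ε) * Ftil C = ∫⁻ _ in C, ENNReal.ofReal (1 + ε) ∂Ftil := by
        rw [setLIntegral_const, mul_comm]
    _ ≤ ∫⁻ x in C, G.rnDeriv Ftil x ∂Ftil := by
        refine setLIntegral_mono_ae (Measure.measurable_rnDeriv G Ftil).aemeasurable ?_
        filter_upwards [hcons, Measure.rnDeriv_lt_top G Ftil] with x h1 h2 hx
        calc ENNReal.ofReal (1 + ε) ≤ ENNReal.ofReal ((G.rnDeriv Ftil x).toReal) :=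
              ENNReal.ofReal_le_ofReal (h1 hx)
          _ = G.rnDeriv Ftil x := ENNReal.ofReal_toReal h2.ne

lemma lower_bound (Ftil G : Measure X) [IsProbabilityMeasure Ftil] [IsProbabilityMeasure G]
    (hGac : G ≪ Ftil) (hGint : Integrable (llr G Ftil) G)
    {C : Set X} (hC : MeasurableSet C) {ε : ℝ} (hε : 0 < ε)
    (hcons : ∀ᵐ x ∂Ftil, x ∈ C → 1 + ε ≤ ((G.rnDeriv Ftil) x).toReal)
    {st : ℝ} (hst0 : 0 ≤ st) (hstle : st ≤ (Ftil C).toReal) :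
    (1+ε)*st*Real.log (1+ε) + (1-(1+ε)*st) * Real.log ((1-(1+ε)*st)/(1-st))
      ≤ ∫ x, llr G Ftil x ∂G := by
  set sC := (Ftil C).toReal with hsC
  set gC := (G C).toReal with hgCdef
  have hGC : ENNReal.ofReal (1 + ε) * Ftil C ≤ G C := constraint_measure Ftil G hGac hC hcons
  have hgC : (1+ε) * sC ≤ gC := by
    have h := ENNReal.toReal_mono (measure_ne_top G C) hGC
    rwa [ENNReal.toReal_mul, ENNReal.toReal_ofReal (by linarith)] at h
  have hgC1 : gC ≤ 1 := by
    have : G C ≤ 1 := prob_le_one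
    simpa [hgCdef] using ENNReal.toReal_mono one_ne_top this
  have hdv : ∀ l : ℝ, 0 ≤ l →
      l * gC - Real.log (sC * (Real.exp l - 1) + 1) ≤ ∫ x, llr G Ftil x ∂G := by
    intro l hl
    have h := dv_bound G Ftil hGac hGint hC hl
    rw [mul_comm (Ftil C).toReal _] at h
    rw [mul_comm sC _]
    exact h
  have hsC0 : 0 ≤ sC := ENNReal.toReal_nonneg
  have hle1 : (1+ε) * st ≤ 1 := by nlinarith
  rcases lt_or_eq_of_le hle1 with hlt | heq
  · -- main case
    set l := Real.log ((1+ε)*(1-st)/(1-(1+ε)*st)) with hldef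
    have hl0 : 0 ≤ l := by
      apply Real.log_nonneg
      rw [le_div_iff₀ (by linarith)]
      nlinarith
    calc (1+ε)*st*Real.log (1+ε) + (1-(1+ε)*st) * Real.log ((1-(1+ε)*st)/(1-st))
        ≤ l * gC - Real.log (sC * (Real.exp l - 1) + 1) :=
          real_core ε st sC gC hε hst0 hlt hstle hgC
      _ ≤ ∫ x, llr G Ftil x ∂G := hdv l hl0
  · -- boundary case
    have hsCst : sC = st := by nlinarith
    have hphi : (1+ε)*st*Real.log (1+ε) + (1-(1+ε)*st) * Real.log ((1-(1+ε)*st)/(1-st))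
        = Real.log (1+ε) := by
      have h0 : 1 - (1+ε)*st = 0 := by linarith
      rw [h0, heq]
      simp
    rw [hphi]
    have hgC1' : gC = 1 := le_antisymm hgC1 (by nlinarith)
    refine real_boundary (1+ε) st _ (by linarith) heq fun n => ?_
    have h := hdv n (Nat.cast_nonneg n)
    rw [hgC1', hsCst, mul_one] at h
    exact h

lemma upper_bound (F Ftil : Measure X) [IsProbabilityMeasure F] [IsProbabilityMeasure Ftil]
    {A D : Set X} (hA : MeasurableSet A) (hD : MeasurableSet D) (hDA : D ⊆ A) {ε : ℝ}
    (hε : 0 < ε) (hst1 : (1+ε) * (Ftil D).toReal ≤ 1) :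
    ∃ G : Measure X, memGammaDelta F Ftil A G ∧
      (∀ᵐ x ∂Ftil, x ∈ D → 1 + ε ≤ ((G.rnDeriv Ftil) x).toReal) ∧
      KL G Ftil = ENNReal.ofReal ((1+ε)*(Ftil D).toReal*Real.log (1+ε)
        + (1-(1+ε)*(Ftil D).toReal)
          * Real.log ((1-(1+ε)*(Ftil D).toReal)/(1-(Ftil D).toReal))) := by
  set st := (Ftil D).toReal with hstdef
  have hst0 : 0 ≤ st := ENNReal.toReal_nonneg
  have hstlt1 : st < 1 := by nlinarith
  set c := (1 - (1+ε)*st)/(1-st) with hcdef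
  have hc0 : 0 ≤ c := div_nonneg (by linarith) (by linarith)
  have hc1 : c ≤ 1 := by
    rw [div_le_one (by linarith)]
    nlinarith
  set g : X → ℝ≥0∞ := fun x => if x ∈ D then ENNReal.ofReal (1+ε) else ENNReal.ofReal c
    with hgdef
  have hg : Measurable g := Measurable.ite hD measurable_const measurable_const
  set G := Ftil.withDensity g with hGdef
  have hGD : G D = ENNReal.ofReal (1+ε) * Ftil D := by
    rw [hGdef, withDensity_apply _ hD]
    rw [setLIntegral_congr_fun hD (fun x hx => if_pos hx), setLIntegral_const,
      mul_comm]
  have hGDc : G Dᶜ = ENNReal.ofReal c * Ftil Dᶜ := by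
    rw [hGdef, withDensity_apply _ hD.compl]
    rw [setLIntegral_congr_fun hD.compl (fun x hx => if_neg hx),
      setLIntegral_const, mul_comm]
  have hFtilD : Ftil D = ENNReal.ofReal st :=
    (ENNReal.ofReal_toReal (measure_ne_top _ _)).symm
  have hFtilDc : Ftil Dᶜ = ENNReal.ofReal (1 - st) := by
    rw [prob_compl_eq_one_sub hD, hFtilD, ← ENNReal.ofReal_one,
      ← ENNReal.ofReal_sub _ hst0]
  have hcmul : c * (1 - st) = 1 - (1+ε)*st := by
    rw [hcdef, div_mul_eq_mul_div, mul_div_assoc, div_self (by linarith : (1:ℝ)-st ≠ 0), mul_one]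
  have huniv : G Set.univ = 1 := by
    have h := measure_add_measure_compl (μ := G) hD
    rw [hGD, hGDc, hFtilD, hFtilDc, ← ENNReal.ofReal_mul (by linarith),
      ← ENNReal.ofReal_mul hc0, ← ENNReal.ofReal_add (by nlinarith) (by nlinarith),
      hcmul] at h
    rw [← h]
    norm_num
  have hprob : IsProbabilityMeasure G := ⟨huniv⟩
  have hGac : G ≪ Ftil := withDensity_absolutelyContinuous _ _
  have hrn : G.rnDeriv Ftil =ᵐ[Ftil] g := Measure.rnDeriv_withDensity Ftil hg
  have hcons : ∀ᵐ x ∂Ftil, x ∈ D → 1 + ε ≤ ((G.rnDeriv Ftil) x).toReal := by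
    filter_upwards [hrn] with x hx hxD
    rw [hx, hgdef]
    simp only [if_pos hxD]
    rw [ENNReal.toReal_ofReal (by linarith)]
  have hllr_eq : llr G Ftil =ᵐ[G] fun x => if x ∈ D then Real.log (1+ε) else Real.log c := by
    filter_upwards [hGac.ae_le hrn] with x hx
    rw [llr, hx, hgdef]
    by_cases hxD : x ∈ D
    · simp only [if_pos hxD]; rw [ENNReal.toReal_ofReal (by linarith)]
    · simp only [if_neg hxD]; rw [ENNReal.toReal_ofReal hc0]
  have hite_eq : (fun x => if x ∈ D then Real.log (1+ε) else Real.log c)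
      = fun x => D.indicator (fun _ => Real.log (1+ε) - Real.log c) x + Real.log c := by
    funext x
    by_cases hxD : x ∈ D <;> simp [hxD]
  have hint_ite : Integrable (fun x => if x ∈ D then Real.log (1+ε) else Real.log c) G := by
    rw [hite_eq]
    exact (((integrable_const _).indicator hD)).add (integrable_const _)
  have hGint : Integrable (llr G Ftil) G := hint_ite.congr hllr_eq.symm
  have hGDr : (G D).toReal = (1+ε) * st := by
    rw [hGD, ENNReal.toReal_mul, ENNReal.toReal_ofReal (by linarith), hstdef]
  have hGDcr : (G Dᶜ).toReal = 1 - (1+ε)*st := by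
    rw [hGDc, ENNReal.toReal_mul, ENNReal.toReal_ofReal hc0, hFtilDc,
      ENNReal.toReal_ofReal (by linarith), hcmul]
  have hval : ∫ x, llr G Ftil x ∂G
      = (1+ε)*st*Real.log (1+ε) + (1-(1+ε)*st) * Real.log c := by
    rw [integral_congr_ae hllr_eq, hite_eq]
    rw [integral_add ((integrable_const _).indicator hD) (integrable_const _),
      integral_indicator_const _ hD, integral_const]
    rw [measureReal_def, hGDr]
    simp only [measureReal_def, measure_univ, ENNReal.toReal_one, smul_eq_mul, one_mul]
    ring
  have hKL : KL G Ftil = ENNReal.ofReal ((1+ε)*st*Real.log (1+ε)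
      + (1-(1+ε)*st) * Real.log c) := by
    rw [KL, if_pos ⟨hGac, by rw [← llr_def]; exact hGint⟩, ← llr_def, hval]
  -- Gamma condition
  have hGamma : (∫⁻ x, ENNReal.ofReal (wf F Ftil A x) ∂G) ≠ ⊤ := by
    have hle : ∀ x, ENNReal.ofReal (wf F Ftil A x) ≤ F.rnDeriv Ftil x := by
      intro x
      rw [wf]
      by_cases hxA : x ∈ A
      · rw [Set.indicator_of_mem hxA]
        exact ENNReal.ofReal_toReal_le
      · rw [Set.indicator_of_notMem hxA]
        simp
    have h1 : (∫⁻ x, ENNReal.ofReal (wf F Ftil A x) ∂G) ≤ ∫⁻ x, F.rnDeriv Ftil x ∂G :=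
      lintegral_mono hle
    have h2 : ∫⁻ x, F.rnDeriv Ftil x ∂G = ∫⁻ x, (g * F.rnDeriv Ftil) x ∂Ftil := by
      rw [hGdef]
      exact lintegral_withDensity_eq_lintegral_mul Ftil hg (Measure.measurable_rnDeriv F Ftil)
    have h3 : ∫⁻ x, (g * F.rnDeriv Ftil) x ∂Ftil
        ≤ ENNReal.ofReal (1+ε) * ∫⁻ x, F.rnDeriv Ftil x ∂Ftil := by
      rw [← lintegral_const_mul _ (Measure.measurable_rnDeriv F Ftil)]
      refine lintegral_mono fun x => ?_
      simp only [Pi.mul_apply]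
      gcongr
      rw [hgdef]
      by_cases hxD : x ∈ D
      · simp [hxD]
      · simp only [if_neg hxD]
        exact ENNReal.ofReal_le_ofReal (by linarith)
    have h4 : ∫⁻ x, F.rnDeriv Ftil x ∂Ftil ≤ 1 := by
      have := Measure.lintegral_rnDeriv_le (μ := F) (ν := Ftil)
      simpa using this
    have hfull : (∫⁻ x, ENNReal.ofReal (wf F Ftil A x) ∂G) ≤ ENNReal.ofReal (1+ε) := by
      calc (∫⁻ x, ENNReal.ofReal (wf F Ftil A x) ∂G)
          ≤ ∫⁻ x, F.rnDeriv Ftil x ∂G := h1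
        _ = ∫⁻ x, (g * F.rnDeriv Ftil) x ∂Ftil := h2
        _ ≤ ENNReal.ofReal (1+ε) * ∫⁻ x, F.rnDeriv Ftil x ∂Ftil := h3
        _ ≤ ENNReal.ofReal (1+ε) * 1 := by gcongr
        _ = ENNReal.ofReal (1+ε) := mul_one _
    exact ne_top_of_le_ne_top ENNReal.ofReal_ne_top hfull
  exact ⟨G, ⟨hprob, hGamma, by rw [hKL]; exact ENNReal.ofReal_ne_top⟩, hcons, hKL⟩

end Helpers2
theorem stmt6 {X : Type*} [MeasurableSpace X] [MetricSpace X] [CompleteSpace X]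
    [TopologicalSpace.SeparableSpace X] [BorelSpace X]
    (F Ftil : Measure X) [IsProbabilityMeasure F] [IsProbabilityMeasure Ftil]
    (A : Set X) (hA : MeasurableSet A) (hac : F.restrict A ≪ Ftil)
    (ε δ : ℝ) (hε : 0 < ε) (hδ : 0 < δ)
    (ttil : ℝ) (httil : 0 < ttil) (hlevel : F (Ct F Ftil A ttil) = ENNReal.ofReal δ) :
    (⨅ C : {C : Set X // C ⊆ A ∧ MeasurableSet C ∧ ENNReal.ofReal δ ≤ F C},
        Jplus F Ftil A ε C.1)
      = Jplus F Ftil A ε (Ct F Ftil A ttil) := by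
  classical
  set D := Ct F Ftil A ttil with hDdef
  have hDm : MeasurableSet D := measurableSet_Ct F Ftil hA ttil
  have hDA : D ⊆ A := fun x hx => hx.1
  set st := (Ftil D).toReal with hstdef
  have hst0 : 0 ≤ st := ENNReal.toReal_nonneg
  apply le_antisymm
  · exact iInf_le (fun C : {C : Set X // C ⊆ A ∧ MeasurableSet C ∧ ENNReal.ofReal δ ≤ F C} =>
      Jplus F Ftil A ε C.1) ⟨D, hDA, hDm, le_of_eq hlevel.symm⟩
  · refine le_iInf fun C' => ?_
    obtain ⟨C, hCA, hCm, hCF⟩ := C'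
    have hFDC : F D ≤ F C := by rw [hDdef, hlevel]; exact hCF
    have hNP : Ftil D ≤ Ftil C := np_lemma F Ftil hA hac httil hCm hCA hFDC
    have hstle : st ≤ (Ftil C).toReal := ENNReal.toReal_mono (measure_ne_top _ _) hNP
    by_cases hcase : (1 + ε) * st ≤ 1
    · obtain ⟨G, hmem, hcons, hKL⟩ := upper_bound F Ftil hA hDm hDA hε hcase
      have h1 : Jplus F Ftil A ε D ≤ ENNReal.ofReal ((1+ε)*(Ftil D).toReal*Real.log (1+ε)
          + (1-(1+ε)*(Ftil D).toReal)
            * Real.log ((1-(1+ε)*(Ftil D).toReal)/(1-(Ftil D).toReal))) := by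
        rw [← hKL]
        exact sInf_le ⟨G, hmem, hcons, rfl⟩
      have h2 : ENNReal.ofReal ((1+ε)*(Ftil D).toReal*Real.log (1+ε)
          + (1-(1+ε)*(Ftil D).toReal)
            * Real.log ((1-(1+ε)*(Ftil D).toReal)/(1-(Ftil D).toReal)))
          ≤ Jplus F Ftil A ε C := by
        refine le_sInf fun r hr => ?_
        obtain ⟨G', hmem', hcons', hr'⟩ := hr
        haveI := hmem'.1
        obtain ⟨hac', hint', hKL'⟩ := KL_props hmem'.2.2
        rw [hr', hKL']
        exact ENNReal.ofReal_le_ofReal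
          (lower_bound Ftil G' hac' hint' hCm hε hcons' hst0 hstle)
      exact h1.trans h2
    · have hC_top : Jplus F Ftil A ε C = ⊤ := by
        rw [Jplus, sInf_eq_top]
        rintro r ⟨G', hmem', hcons', hr'⟩
        haveI := hmem'.1
        obtain ⟨hac', hint', hKL'⟩ := KL_props hmem'.2.2
        exfalso
        have hGC := constraint_measure Ftil G' hac' hCm hcons'
        have h1 : (1+ε) * (Ftil C).toReal ≤ (G' C).toReal := by
          have h := ENNReal.toReal_mono (measure_ne_top G' C) hGC
          rwa [ENNReal.toReal_mul, ENNReal.toReal_ofReal (by linarith)] at h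
        have h2 : (G' C).toReal ≤ 1 := by
          have : G' C ≤ 1 := prob_le_one
          simpa using ENNReal.toReal_mono one_ne_top this
        have h3 : (1+ε) * st ≤ (1+ε) * (Ftil C).toReal :=
          mul_le_mul_of_nonneg_left hstle (by linarith)
        push_neg at hcase
        linarith
      rw [hC_top]
      exact le_top
end
end

section
/- For t ≥ 0 let C_t = { x ∈ A : (dF/dF̃)(x) ≥ t }. For every δ > 0 the following two-sided bound holds: sup{ J₊(C_t) : t > 0 with F(C_t) ≤ δ } ≤ inf{ J₊(C) : C ⊆ A measurable with F(C) ≥ δ } ≤ inf{ J₊(C_t) : t ≥ 0 with F(C_t) ≥ δ }. -/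
open MeasureTheory Filter Topology ENNReal
open scoped Classical

noncomputable section

namespace Stmt7Aux

open Set

/-! ### The binary Kullback–Leibler function and its monotonicity properties -/

noncomputable def kl2 (p q : ℝ) : ℝ :=
  p * Real.log p - p * Real.log q + ((1 - p) * Real.log (1 - p) - (1 - p) * Real.log (1 - q))

lemma continuous_kl2_left (q : ℝ) : Continuous fun p => kl2 p q := by
  unfold kl2
  exact ((Real.continuous_mul_log.sub (continuous_id.mul continuous_const)).add
    ((Real.continuous_mul_log.comp (continuous_const.sub continuous_id)).sub
      ((continuous_const.sub continuous_id).mul continuous_const)))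

lemma kl2_deriv_left {q p : ℝ} (hq : 0 < q) (hp : q < p) (hp1 : p < 1) :
    HasDerivAt (fun p => kl2 p q) ((Real.log p - Real.log q) + (Real.log (1 - q) - Real.log (1 - p))) p := by
  have hp0 : 0 < p := hq.trans hp
  have h1p : (0:ℝ) < 1 - p := by linarith
  have h1 : HasDerivAt (fun p : ℝ => p * Real.log p) (Real.log p + 1) p := Real.hasDerivAt_mul_log hp0.ne'
  have h2 : HasDerivAt (fun p : ℝ => p * Real.log q) (Real.log q) p := by
    simpa using (hasDerivAt_id p).mul_const (Real.log q)
  have hinner : HasDerivAt (fun p : ℝ => 1 - p) (-1) p := by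
    simpa using (hasDerivAt_id p).const_sub (1:ℝ)
  have h3 : HasDerivAt (fun p : ℝ => (1 - p) * Real.log (1 - p)) ((Real.log (1 - p) + 1) * (-1)) p :=
    (Real.hasDerivAt_mul_log h1p.ne').comp p hinner
  have h4 : HasDerivAt (fun p : ℝ => (1 - p) * Real.log (1 - q)) (-Real.log (1 - q)) p := by
    simpa using hinner.mul_const (Real.log (1 - q))
  have H := (h1.sub h2).add (h3.sub h4)
  simp only [kl2]
  refine H.congr_deriv ?_
  ring

lemma kl2_mono_left {q : ℝ} (hq0 : 0 < q) :
    MonotoneOn (fun p => kl2 p q) (Set.Icc q 1) := by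
  apply monotoneOn_of_deriv_nonneg (convex_Icc q 1) (continuous_kl2_left q).continuousOn
  · intro p hp
    rw [interior_Icc] at hp
    exact (kl2_deriv_left hq0 hp.1 hp.2).differentiableAt.differentiableWithinAt
  · intro p hp
    rw [interior_Icc] at hp
    obtain ⟨hpq, hp1⟩ := hp
    rw [(kl2_deriv_left hq0 hpq hp1).deriv]
    have l1 := Real.log_le_log hq0 hpq.le
    have l2 := Real.log_le_log (by linarith : (0:ℝ) < 1 - p) (by linarith : 1 - p ≤ 1 - q)
    linarith

lemma kl2_eps_deriv {a q : ℝ} (ha : 1 < a) (hq : 0 < q) (haq : a * q < 1) :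
    HasDerivAt (fun q => kl2 (a * q) q)
      (a * Real.log a - a * Real.log (1 - a * q) - a + a * Real.log (1 - q) + (1 - a * q) * (1 - q)⁻¹) q := by
  have ha0 : (0:ℝ) < a := by linarith
  have haq0 : (0:ℝ) < a * q := by positivity
  have h1aq : (0:ℝ) < 1 - a * q := by linarith
  have h1q : (0:ℝ) < 1 - q := by nlinarith
  have hinner : HasDerivAt (fun q : ℝ => a * q) a q := by
    simpa using (hasDerivAt_id q).const_mul a
  have hinner2 : HasDerivAt (fun q : ℝ => 1 - a * q) (-a) q := by
    simpa using hinner.const_sub (1:ℝ)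
  have hinner3 : HasDerivAt (fun q : ℝ => 1 - q) (-1) q := by
    simpa using (hasDerivAt_id q).const_sub (1:ℝ)
  have t1 : HasDerivAt (fun q : ℝ => (a * q) * Real.log (a * q)) ((Real.log (a * q) + 1) * a) q :=
    (Real.hasDerivAt_mul_log haq0.ne').comp q hinner
  have t2 : HasDerivAt (fun q : ℝ => (a * q) * Real.log q) (a * Real.log q + (a * q) * q⁻¹) q :=
    hinner.mul (Real.hasDerivAt_log hq.ne')
  have t3 : HasDerivAt (fun q : ℝ => (1 - a * q) * Real.log (1 - a * q))
      ((Real.log (1 - a * q) + 1) * (-a)) q :=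
    by have := (Real.hasDerivAt_mul_log h1aq.ne').comp q hinner2; exact this
  have hlog1q : HasDerivAt (fun q : ℝ => Real.log (1 - q)) ((1 - q)⁻¹ * (-1)) q :=
    (Real.hasDerivAt_log h1q.ne').comp q hinner3
  have t4 : HasDerivAt (fun q : ℝ => (1 - a * q) * Real.log (1 - q))
      ((-a) * Real.log (1 - q) + (1 - a * q) * ((1 - q)⁻¹ * (-1))) q := hinner2.mul hlog1q
  have H := (t1.sub t2).add (t3.sub t4)
  have hfun : (fun q => kl2 (a * q) q) = fun q : ℝ =>
      (a * q) * Real.log (a * q) - (a * q) * Real.log q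
        + ((1 - a * q) * Real.log (1 - a * q) - (1 - a * q) * Real.log (1 - q)) := by
    funext x; simp [kl2]
  rw [hfun]
  refine H.congr_deriv ?_
  rw [Real.log_mul ha0.ne' hq.ne']
  field_simp
  ring

lemma kl2_eps_mono {a : ℝ} (ha : 1 < a) :
    MonotoneOn (fun q => kl2 (a * q) q) (Set.Icc 0 (1/a)) := by
  have ha0 : (0:ℝ) < a := by linarith
  have hia : 1/a < 1 := by rw [div_lt_one ha0]; exact ha
  have hmaps : ∀ q ∈ Set.Icc (0:ℝ) (1/a), (1:ℝ) - q ≠ 0 := by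
    intro q hq; have := hq.2; nlinarith
  have hcont : ContinuousOn (fun q => kl2 (a * q) q) (Set.Icc 0 (1/a)) := by
    have hfun : (fun q => kl2 (a * q) q) = fun q : ℝ =>
        ((a * q) * Real.log (a * q) - a * (q * Real.log q))
          + ((1 - a * q) * Real.log (1 - a * q) - (1 - a * q) * Real.log (1 - q)) := by
      funext x; simp [kl2]; ring
    rw [hfun]
    have c1 : Continuous fun q : ℝ => (a * q) * Real.log (a * q) :=
      Real.continuous_mul_log.comp (continuous_const.mul continuous_id)
    have c2 : Continuous fun q : ℝ => a * (q * Real.log q) :=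
      continuous_const.mul Real.continuous_mul_log
    have c3 : Continuous fun q : ℝ => (1 - a * q) * Real.log (1 - a * q) :=
      Real.continuous_mul_log.comp (continuous_const.sub (continuous_const.mul continuous_id))
    have c4 : ContinuousOn (fun q : ℝ => Real.log (1 - q)) (Set.Icc 0 (1/a)) :=
      Real.continuousOn_log.comp (continuous_const.sub continuous_id).continuousOn
        (fun q hq => hmaps q hq)
    exact ((c1.sub c2).continuousOn).add
      ((c3.continuousOn).sub
        (((continuous_const.sub (continuous_const.mul continuous_id)).continuousOn).mul c4))
  apply monotoneOn_of_deriv_nonneg (convex_Icc 0 (1/a)) hcont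
  · intro q hq
    rw [interior_Icc] at hq
    have haq : a * q < 1 := by
      have := hq.2
      rw [lt_div_iff₀ ha0] at this
      linarith [this]
    exact (kl2_eps_deriv ha hq.1 haq).differentiableAt.differentiableWithinAt
  · intro q hq
    rw [interior_Icc] at hq
    obtain ⟨hq0, hq2⟩ := hq
    have haq : a * q < 1 := by
      rw [lt_div_iff₀ ha0] at hq2
      linarith [hq2]
    rw [(kl2_eps_deriv ha hq0 haq).deriv]
    have h1aq : (0:ℝ) < 1 - a * q := by linarith
    have h1q : (0:ℝ) < 1 - q := by nlinarith
    set u : ℝ := (1 - a * q) / (a * (1 - q)) with hu_def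
    have hu : 0 < u := div_pos h1aq (by positivity)
    have hlogu : Real.log u = Real.log (1 - a * q) - (Real.log a + Real.log (1 - q)) := by
      rw [hu_def, Real.log_div h1aq.ne' (by positivity), Real.log_mul ha0.ne' h1q.ne']
    have hX : Real.log (1 - a * q) = Real.log u + (Real.log a + Real.log (1 - q)) := by rw [hlogu]; ring
    have hau : (1 - a * q) * (1 - q)⁻¹ = a * u := by
      rw [hu_def]; field_simp
    have hkey := Real.log_le_sub_one_of_pos hu
    have hmul := mul_le_mul_of_nonneg_left hkey ha0.le
    rw [hX, hau]
    nlinarith [hmul]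

lemma kl2_eps_eq {ε q : ℝ} (hε : 0 < ε) (hq0 : 0 ≤ q) (hq1 : q < 1) :
    kl2 ((1+ε)*q) q
      = (1+ε)*q*Real.log (1+ε) + (1-(1+ε)*q) * Real.log ((1-(1+ε)*q)/(1-q)) := by
  have h1q : (0:ℝ) < 1 - q := by linarith
  have e1 : (1+ε)*q*Real.log ((1+ε)*q) - (1+ε)*q*Real.log q = (1+ε)*q*Real.log (1+ε) := by
    rcases eq_or_lt_of_le hq0 with h|h
    · simp [← h]
    · rw [Real.log_mul (by positivity) h.ne']; ring
  have e2 : (1-(1+ε)*q) * Real.log (1-(1+ε)*q) - (1-(1+ε)*q)*Real.log (1-q)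
      = (1-(1+ε)*q) * Real.log ((1-(1+ε)*q)/(1-q)) := by
    rcases eq_or_ne (1-(1+ε)*q) 0 with h|h
    · simp [h]
    · rw [Real.log_div h h1q.ne']; ring
  unfold kl2
  linarith [e1, e2]

/-! ### Measure-theoretic lemmas -/

open MeasureTheory

variable {X : Type*} [MeasurableSpace X]

lemma jensen_set (G Ftil : Measure X) [IsFiniteMeasure G] [IsFiniteMeasure Ftil]
    (hGac : G ≪ Ftil)
    (hInt : Integrable (fun x => Real.log ((G.rnDeriv Ftil) x).toReal) G)
    {S : Set X} (hS : MeasurableSet S) :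
    (G S).toReal * Real.log ((G S).toReal) - (G S).toReal * Real.log ((Ftil S).toReal)
      ≤ ∫ x in S, Real.log ((G.rnDeriv Ftil) x).toReal ∂G := by
  by_cases hq0 : Ftil S = 0
  · have hGS : G S = 0 := hGac hq0
    rw [Measure.restrict_eq_zero.mpr hGS]
    simp [hGS]
  by_cases hp0 : G S = 0
  · rw [Measure.restrict_eq_zero.mpr hp0]
    simp [hp0]
  have htrans : ∫ x in S, Real.log ((G.rnDeriv Ftil) x).toReal ∂G
      = ∫ x in S, ((G.rnDeriv Ftil) x).toReal * Real.log ((G.rnDeriv Ftil) x).toReal ∂Ftil := by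
    rw [← setIntegral_rnDeriv_smul hGac hS]
    simp [smul_eq_mul]
  set q : ℝ := (Ftil S).toReal with hq_def
  set p : ℝ := (G S).toReal with hp_def
  have hq : 0 < q := ENNReal.toReal_pos hq0 (measure_ne_top _ _)
  have hp : 0 < p := ENNReal.toReal_pos hp0 (measure_ne_top _ _)
  haveI : NeZero (Ftil.restrict S) := ⟨by rwa [ne_eq, Measure.restrict_eq_zero]⟩
  have hg_int : Integrable (fun x => ((G.rnDeriv Ftil) x).toReal) (Ftil.restrict S) :=
    (Measure.integrable_toReal_rnDeriv).restrict
  have hgl_int : Integrable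
      (fun x => ((G.rnDeriv Ftil) x).toReal * Real.log ((G.rnDeriv Ftil) x).toReal) Ftil := by
    have := (integrable_rnDeriv_smul_iff hGac).mpr hInt
    simpa [smul_eq_mul] using this
  have hJ := (Real.convexOn_mul_log).map_average_le Real.continuous_mul_log.continuousOn
      isClosed_Ici (ae_of_all _ fun x => ENNReal.toReal_nonneg) hg_int (by
        have := hgl_int.restrict (s := S); exact this)
  have hμuniv : (Ftil.restrict S) Set.univ = Ftil S := by simp
  have havg1 : ⨍ x, ((G.rnDeriv Ftil) x).toReal ∂(Ftil.restrict S) = p / q := by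
    rw [average_eq, measureReal_def, hμuniv, Measure.setIntegral_toReal_rnDeriv hGac S, measureReal_def, smul_eq_mul, ← hp_def,
      ← hq_def]
    ring
  have havg2 : ⨍ x, ((G.rnDeriv Ftil) x).toReal * Real.log ((G.rnDeriv Ftil) x).toReal
      ∂(Ftil.restrict S)
      = q⁻¹ * ∫ x in S,
          ((G.rnDeriv Ftil) x).toReal * Real.log ((G.rnDeriv Ftil) x).toReal ∂Ftil := by
    rw [average_eq, measureReal_def, hμuniv, smul_eq_mul, ← hq_def]
  rw [havg1, havg2] at hJ
  set I : ℝ := ∫ x in S, ((G.rnDeriv Ftil) x).toReal * Real.log ((G.rnDeriv Ftil) x).toReal ∂Ftil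
  rw [htrans]
  have hlogdiv : Real.log (p / q) = Real.log p - Real.log q := Real.log_div hp.ne' hq.ne'
  rw [hlogdiv] at hJ
  have h2 := mul_le_mul_of_nonneg_left hJ hq.le
  have e1 : q * (p / q * (Real.log p - Real.log q)) = p * Real.log p - p * Real.log q := by
    field_simp
  have e2 : q * (q⁻¹ * I) = I := by field_simp
  rw [e1, e2] at h2
  exact h2

lemma KL_ne_top_elim {G μ : Measure X} (h : KL G μ ≠ ⊤) :
    G ≪ μ ∧ Integrable (fun x => Real.log ((G.rnDeriv μ) x).toReal) G := by
  by_contra hcon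
  unfold KL at h
  rw [if_neg hcon] at h
  exact h rfl

lemma KL_eq {G μ : Measure X}
    (h : G ≪ μ ∧ Integrable (fun x => Real.log ((G.rnDeriv μ) x).toReal) G) :
    KL G μ = ENNReal.ofReal (∫ x, Real.log ((G.rnDeriv μ) x).toReal ∂G) := by
  unfold KL
  rw [if_pos h]

lemma constraint_measure_le {G Ftil : Measure X} [SigmaFinite G] [SigmaFinite Ftil] {C : Set X} {ε : ℝ}
    (hGac : G ≪ Ftil) (hC : MeasurableSet C)
    (hcons : ∀ᵐ x ∂Ftil, x ∈ C → 1 + ε ≤ ((G.rnDeriv Ftil) x).toReal) :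
    ENNReal.ofReal (1 + ε) * Ftil C ≤ G C := by
  have hae : ∀ᵐ x ∂Ftil, x ∈ C → ENNReal.ofReal (1 + ε) ≤ G.rnDeriv Ftil x :=
    hcons.mono fun x hx hxC => ENNReal.ofReal_le_of_le_toReal (hx hxC)
  calc ENNReal.ofReal (1 + ε) * Ftil C
      = ∫⁻ _ in C, ENNReal.ofReal (1 + ε) ∂Ftil := by rw [setLIntegral_const]
    _ ≤ ∫⁻ x in C, G.rnDeriv Ftil x ∂Ftil :=
        lintegral_mono_ae ((ae_restrict_iff' hC).mpr hae)
    _ = G C := Measure.setLIntegral_rnDeriv hGac C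

lemma constraint_toReal_le {G Ftil : Measure X} [IsFiniteMeasure G] [SigmaFinite Ftil] {C : Set X} {ε : ℝ}
    (hε : 0 < ε) (hGac : G ≪ Ftil) (hC : MeasurableSet C)
    (hcons : ∀ᵐ x ∂Ftil, x ∈ C → 1 + ε ≤ ((G.rnDeriv Ftil) x).toReal) :
    (1 + ε) * (Ftil C).toReal ≤ (G C).toReal := by
  have h := constraint_measure_le hGac hC hcons
  have h2 := ENNReal.toReal_mono (measure_ne_top G C) h
  rwa [ENNReal.toReal_mul, ENNReal.toReal_ofReal (by linarith)] at h2

lemma KL_lower {G Ftil : Measure X} [IsProbabilityMeasure G] [IsProbabilityMeasure Ftil]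
    {C : Set X} {ε : ℝ} (hε : 0 < ε) (hGac : G ≪ Ftil)
    (hInt : Integrable (fun x => Real.log ((G.rnDeriv Ftil) x).toReal) G)
    (hC : MeasurableSet C)
    (hcons : ∀ᵐ x ∂Ftil, x ∈ C → 1 + ε ≤ ((G.rnDeriv Ftil) x).toReal)
    (hle : (1 + ε) * (Ftil C).toReal ≤ 1) :
    kl2 ((1 + ε) * (Ftil C).toReal) ((Ftil C).toReal)
      ≤ ∫ x, Real.log ((G.rnDeriv Ftil) x).toReal ∂G := by
  set q : ℝ := (Ftil C).toReal with hq_def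
  set p : ℝ := (G C).toReal with hp_def
  have hq0 : 0 ≤ q := ENNReal.toReal_nonneg
  have hpq : (1 + ε) * q ≤ p := constraint_toReal_le hε hGac hC hcons
  have hp1 : p ≤ 1 := by
    have := ENNReal.toReal_mono ENNReal.one_ne_top (prob_le_one (μ := G) (s := C))
    simpa using this
  have hsplit : ∫ x, Real.log ((G.rnDeriv Ftil) x).toReal ∂G
      = (∫ x in C, Real.log ((G.rnDeriv Ftil) x).toReal ∂G)
        + ∫ x in Cᶜ, Real.log ((G.rnDeriv Ftil) x).toReal ∂G :=
    (integral_add_compl hC hInt).symm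
  have j1 := jensen_set G Ftil hGac hInt hC
  have j2 := jensen_set G Ftil hGac hInt hC.compl
  have hGc : (G Cᶜ).toReal = 1 - p := by
    rw [prob_compl_eq_one_sub hC,
      ENNReal.toReal_sub_of_le prob_le_one ENNReal.one_ne_top]
    simp [hp_def]
  have hFc : (Ftil Cᶜ).toReal = 1 - q := by
    rw [prob_compl_eq_one_sub hC,
      ENNReal.toReal_sub_of_le prob_le_one ENNReal.one_ne_top]
    simp [hq_def]
  rw [hGc, hFc] at j2
  have hklpq : kl2 p q ≤ ∫ x, Real.log ((G.rnDeriv Ftil) x).toReal ∂G := by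
    rw [hsplit]
    unfold kl2
    linarith [j1, j2]
  refine le_trans ?_ hklpq
  rcases eq_or_lt_of_le hq0 with h|h
  · have hFC0 : Ftil C = 0 := by
      rcases (ENNReal.toReal_eq_zero_iff _).mp h.symm with h'|h'
      · exact h'
      · exact absurd h' (measure_ne_top _ _)
    have hp0 : p = 0 := by rw [hp_def, hGac hFC0]; simp
    simp [← h, hp0]
  · have hq1 : q < 1 := by nlinarith
    exact kl2_mono_left h ⟨by nlinarith, hle⟩ ⟨by nlinarith, hp1⟩ hpq

/-! ### The upper-bound construction -/

lemma Ct_meas (F Ftil : Measure X) {A : Set X} (hA : MeasurableSet A) (t : ℝ) :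
    MeasurableSet (Ct F Ftil A t) := by
  have h : Ct F Ftil A t = A ∩ {x | ENNReal.ofReal t ≤ F.rnDeriv Ftil x} := rfl
  rw [h]
  exact hA.inter (measurableSet_le measurable_const (Measure.measurable_rnDeriv F Ftil))

lemma Jplus_le_kl2 (F Ftil : Measure X) [IsProbabilityMeasure F] [IsProbabilityMeasure Ftil]
    (A : Set X) (hA : MeasurableSet A) {C' : Set X} (hC' : MeasurableSet C') {ε : ℝ}
    (hε : 0 < ε) (hq : (1 + ε) * (Ftil C').toReal ≤ 1) :
    Jplus F Ftil A ε C'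
      ≤ ENNReal.ofReal (kl2 ((1 + ε) * (Ftil C').toReal) ((Ftil C').toReal)) := by
  set q' : ℝ := (Ftil C').toReal with hq'_def
  have hq'0 : 0 ≤ q' := ENNReal.toReal_nonneg
  have hq'1 : q' < 1 := by nlinarith
  have h1q' : (0:ℝ) < 1 - q' := by linarith
  have hnum : (0:ℝ) ≤ 1 - (1+ε)*q' := by linarith
  set c : ℝ := (1 - (1+ε)*q') / (1 - q') with hc_def
  have hc0 : 0 ≤ c := div_nonneg hnum h1q'.le
  have hc1 : c ≤ 1 := by rw [hc_def, div_le_one h1q']; nlinarith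
  set ρ : X → ℝ≥0∞ := fun x => if x ∈ C' then ENNReal.ofReal (1+ε) else ENNReal.ofReal c
    with hρ_def
  have hρm : Measurable ρ := Measurable.ite hC' measurable_const measurable_const
  set G' : Measure X := Ftil.withDensity ρ with hG'_def
  have hFC' : Ftil C' = ENNReal.ofReal q' := (ENNReal.ofReal_toReal (measure_ne_top _ _)).symm
  have hFC'c : Ftil C'ᶜ = ENNReal.ofReal (1 - q') := by
    rw [prob_compl_eq_one_sub hC', hFC', ← ENNReal.ofReal_one, ← ENNReal.ofReal_sub _ hq'0]
  have hint1 : ∫⁻ x in C', ρ x ∂Ftil = ENNReal.ofReal ((1+ε) * q') := by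
    rw [setLIntegral_congr_fun hC' (fun x (hx : x ∈ C') => if_pos hx),
      setLIntegral_const, hFC', ← ENNReal.ofReal_mul (by linarith)]
  have hint2 : ∫⁻ x in C'ᶜ, ρ x ∂Ftil = ENNReal.ofReal (c * (1 - q')) := by
    rw [setLIntegral_congr_fun hC'.compl (fun x (hx : x ∈ C'ᶜ) => if_neg hx),
      setLIntegral_const, hFC'c, ← ENNReal.ofReal_mul hc0]
  have hcmul : c * (1 - q') = 1 - (1+ε)*q' := by
    rw [hc_def]; field_simp
  have huniv : G' Set.univ = 1 := by
    rw [hG'_def, withDensity_apply _ MeasurableSet.univ, Measure.restrict_univ,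
      ← lintegral_add_compl ρ hC', hint1, hint2,
      ← ENNReal.ofReal_add (by positivity) (by positivity), hcmul]
    norm_num
  haveI hGP : IsProbabilityMeasure G' := ⟨huniv⟩
  have hG'ac : G' ≪ Ftil := withDensity_absolutelyContinuous _ _
  have hrn : G'.rnDeriv Ftil =ᵐ[Ftil] ρ := Measure.rnDeriv_withDensity Ftil hρm
  have hcons : ∀ᵐ x ∂Ftil, x ∈ C' → 1 + ε ≤ ((G'.rnDeriv Ftil) x).toReal := by
    filter_upwards [hrn] with x hx hxC
    rw [hx, hρ_def]
    simp only [if_pos hxC]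
    rw [ENNReal.toReal_ofReal (by linarith)]
  set L : X → ℝ := fun x => if x ∈ C' then Real.log (1+ε) else Real.log c with hL_def
  have hrnG' : (fun x => Real.log ((G'.rnDeriv Ftil) x).toReal) =ᵐ[G'] L := by
    have hrn' : G'.rnDeriv Ftil =ᵐ[G'] ρ := hrn.filter_mono hG'ac.ae_le
    filter_upwards [hrn'] with x hx
    rw [hx, hL_def]
    by_cases hxC : x ∈ C'
    · simp only [hρ_def, if_pos hxC, ENNReal.toReal_ofReal (by linarith : (0:ℝ) ≤ 1+ε)]
    · simp only [hρ_def, if_neg hxC, ENNReal.toReal_ofReal hc0]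
  have hLalt : L = fun x =>
      Set.indicator C' (fun _ => Real.log (1+ε) - Real.log c) x + Real.log c := by
    funext x
    by_cases hxC : x ∈ C' <;> simp [hL_def, hxC]
  have hLint : Integrable L G' := by
    rw [hLalt]
    exact ((integrable_const _).indicator hC').add (integrable_const _)
  have hInt' : Integrable (fun x => Real.log ((G'.rnDeriv Ftil) x).toReal) G' :=
    hLint.congr hrnG'.symm
  have hG'C : (G' C').toReal = (1+ε) * q' := by
    rw [hG'_def, withDensity_apply _ hC', hint1, ENNReal.toReal_ofReal (by positivity)]
  have hIL : ∫ x, L x ∂G' = (1+ε)*q'*Real.log (1+ε) + (1-(1+ε)*q') * Real.log c := by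
    rw [hLalt, integral_add ((integrable_const _).indicator hC') (integrable_const _),
      integral_indicator_const _ hC', integral_const]
    simp only [measureReal_def, hG'C, measure_univ, ENNReal.toReal_one, smul_eq_mul, one_mul]
    ring
  have hKLval : KL G' Ftil = ENNReal.ofReal (kl2 ((1+ε)*q') q') := by
    rw [KL_eq ⟨hG'ac, hInt'⟩, integral_congr_ae hrnG', hIL, kl2_eps_eq hε hq'0 hq'1, ← hc_def]
  have hwfm : Measurable (wf F Ftil A) := by
    unfold wf
    exact ((Measure.measurable_rnDeriv F Ftil).ennreal_toReal).indicator hA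
  have hwf_meas : Measurable fun x => ENNReal.ofReal (wf F Ftil A x) :=
    ENNReal.measurable_ofReal.comp hwfm
  have hgam : (∫⁻ x, ENNReal.ofReal (wf F Ftil A x) ∂G') ≠ ⊤ := by
    rw [hG'_def, lintegral_withDensity_eq_lintegral_mul _ hρm hwf_meas]
    have hbound : ∀ x, (ρ * fun x => ENNReal.ofReal (wf F Ftil A x)) x
        ≤ ENNReal.ofReal (1+ε) * Set.indicator A (F.rnDeriv Ftil) x := by
      intro x
      simp only [Pi.mul_apply]
      refine mul_le_mul' ?_ ?_
      · rw [hρ_def]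
        by_cases hxC : x ∈ C'
        · simp [hxC]
        · simp only [if_neg hxC]
          exact ENNReal.ofReal_le_ofReal (by linarith)
      · unfold wf
        by_cases hxA : x ∈ A
        · rw [Set.indicator_of_mem hxA, Set.indicator_of_mem hxA]
          exact ENNReal.ofReal_toReal_le
        · rw [Set.indicator_of_notMem hxA, Set.indicator_of_notMem hxA]
          simp
    refine ne_top_of_le_ne_top ?_ (lintegral_mono hbound)
    rw [lintegral_const_mul _ ((Measure.measurable_rnDeriv F Ftil).indicator hA),
      lintegral_indicator hA]
    exact ENNReal.mul_ne_top ENNReal.ofReal_ne_top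
      (((Measure.setLIntegral_rnDeriv_le A).trans_lt (measure_lt_top F A)).ne)
  have hmem : memGammaDelta F Ftil A G' :=
    ⟨hGP, hgam, by rw [hKLval]; exact ENNReal.ofReal_ne_top⟩
  exact sInf_le ⟨G', hmem, hcons, hKLval.symm⟩

/-! ### Comparing `F̃`-measures of level sets -/

lemma F_eq_setLIntegral {F Ftil : Measure X} [IsFiniteMeasure F] [SigmaFinite Ftil]
    {A S : Set X} (hA : MeasurableSet A) (hac : F.restrict A ≪ Ftil)
    (hS : MeasurableSet S) (hSA : S ⊆ A) :
    F S = ∫⁻ x in S, F.rnDeriv Ftil x ∂Ftil := by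
  have h0 : F S = (F.restrict A) S := by
    rw [Measure.restrict_apply hS, Set.inter_eq_self_of_subset_left hSA]
  rw [h0, ← Measure.setLIntegral_rnDeriv hac S]
  refine lintegral_congr_ae ?_
  filter_upwards [ae_restrict_of_ae (Measure.rnDeriv_restrict F Ftil hA), ae_restrict_mem hS]
    with x hx hxS
  rw [hx, Set.indicator_of_mem (hSA hxS)]

lemma Ftil_mono {F Ftil : Measure X} [IsProbabilityMeasure F] [IsProbabilityMeasure Ftil]
    {A : Set X} (hA : MeasurableSet A) (hac : F.restrict A ≪ Ftil)
    {t : ℝ} (ht : 0 < t) {C : Set X} (hC : MeasurableSet C) (hCA : C ⊆ A)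
    (hle : F (Ct F Ftil A t) ≤ F C) :
    Ftil (Ct F Ftil A t) ≤ Ftil C := by
  set D := Ct F Ftil A t with hD_def
  have hDm : MeasurableSet D := Ct_meas F Ftil hA t
  have hDA : D ⊆ A := fun x hx => hx.1
  have hF1 : F (C \ D) ≤ ENNReal.ofReal t * Ftil (C \ D) := by
    rw [F_eq_setLIntegral hA hac (hC.diff hDm) (fun x hx => hCA hx.1)]
    calc ∫⁻ x in C \ D, F.rnDeriv Ftil x ∂Ftil
        ≤ ∫⁻ _ in C \ D, ENNReal.ofReal t ∂Ftil := by
          refine lintegral_mono_ae ((ae_restrict_iff' (hC.diff hDm)).mpr (ae_of_all _ ?_))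
          rintro x ⟨hxC, hxD⟩
          by_contra hcon
          exact hxD ⟨hCA hxC, (not_le.mp hcon).le⟩
      _ = ENNReal.ofReal t * Ftil (C \ D) := by rw [setLIntegral_const]
  have hF2 : ENNReal.ofReal t * Ftil (D \ C) ≤ F (D \ C) := by
    rw [F_eq_setLIntegral hA hac (hDm.diff hC) (fun x hx => hDA hx.1)]
    refine le_trans (le_of_eq (setLIntegral_const _ _).symm) ?_
    refine lintegral_mono_ae ((ae_restrict_iff' (hDm.diff hC)).mpr (ae_of_all _ ?_))
    rintro x ⟨hxD, -⟩
    exact hxD.2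
  have hFd : F (D \ C) ≤ F (C \ D) := by
    have h1 : F (D \ C) + F (D ∩ C) = F D := measure_diff_add_inter D hC
    have h2 : F (C \ D) + F (C ∩ D) = F C := measure_diff_add_inter C hDm
    rw [Set.inter_comm D C] at h1
    have h3 : F (D \ C) + F (C ∩ D) ≤ F (C \ D) + F (C ∩ D) := by
      rw [h1, h2]; exact hle
    exact (ENNReal.add_le_add_iff_right (measure_ne_top F _)).mp h3
  have hFtd : Ftil (D \ C) ≤ Ftil (C \ D) := by
    have hchain : ENNReal.ofReal t * Ftil (D \ C) ≤ ENNReal.ofReal t * Ftil (C \ D) :=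
      hF2.trans (hFd.trans hF1)
    exact (ENNReal.mul_le_mul_iff_right (ENNReal.ofReal_pos.mpr ht).ne' ENNReal.ofReal_ne_top).mp
      hchain
  calc Ftil D = Ftil (D \ C) + Ftil (D ∩ C) := (measure_diff_add_inter D hC).symm
    _ ≤ Ftil (C \ D) + Ftil (C ∩ D) := by
        rw [Set.inter_comm D C]; exact add_le_add hFtd le_rfl
    _ = Ftil C := measure_diff_add_inter C hDm

/-! ### The key comparison -/

lemma Jplus_eq_top {F Ftil : Measure X} [IsProbabilityMeasure Ftil] {A C : Set X} {ε : ℝ}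
    (hε : 0 < ε) (hC : MeasurableSet C) (hbig : ¬ (1 + ε) * (Ftil C).toReal ≤ 1) :
    Jplus F Ftil A ε C = ⊤ := by
  have hempty : { r | ∃ G : Measure X, memGammaDelta F Ftil A G ∧
      (∀ᵐ x ∂Ftil, x ∈ C → 1 + ε ≤ ((G.rnDeriv Ftil) x).toReal) ∧ r = KL G Ftil } = ∅ := by
    rw [Set.eq_empty_iff_forall_notMem]
    rintro r ⟨G, ⟨hGp, hgam, hKLne⟩, hcons, rfl⟩
    haveI := hGp
    obtain ⟨hGac, hInt⟩ := KL_ne_top_elim hKLne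
    have h1 := constraint_toReal_le hε hGac hC hcons
    have h2 : (G C).toReal ≤ 1 := by
      have := ENNReal.toReal_mono ENNReal.one_ne_top (prob_le_one (μ := G) (s := C))
      simpa using this
    exact hbig (h1.trans h2)
  unfold Jplus
  rw [hempty, sInf_empty]

lemma key (F Ftil : Measure X) [IsProbabilityMeasure F] [IsProbabilityMeasure Ftil]
    (A : Set X) (hA : MeasurableSet A) (hac : F.restrict A ≪ Ftil) {ε : ℝ} (hε : 0 < ε)
    {t : ℝ} (ht : 0 < t) {C : Set X} (hCA : C ⊆ A) (hC : MeasurableSet C)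
    (hFle : F (Ct F Ftil A t) ≤ F C) :
    Jplus F Ftil A ε (Ct F Ftil A t) ≤ Jplus F Ftil A ε C := by
  by_cases hbig : (1 + ε) * (Ftil C).toReal ≤ 1
  · set q : ℝ := (Ftil C).toReal with hq_def
    set q' : ℝ := (Ftil (Ct F Ftil A t)).toReal with hq'_def
    have hCtm : MeasurableSet (Ct F Ftil A t) := Ct_meas F Ftil hA t
    have hq'q : q' ≤ q :=
      ENNReal.toReal_mono (measure_ne_top _ _) (Ftil_mono hA hac ht hC hCA hFle)
    have hq'le : (1 + ε) * q' ≤ 1 :=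
      le_trans (mul_le_mul_of_nonneg_left hq'q (by linarith)) hbig
    have h1 := Jplus_le_kl2 F Ftil A hA hCtm hε hq'le
    have h2 : kl2 ((1 + ε) * q') q' ≤ kl2 ((1 + ε) * q) q := by
      have hmono := kl2_eps_mono (a := 1 + ε) (by linarith)
      have hm1 : q' ∈ Set.Icc (0:ℝ) (1/(1+ε)) :=
        ⟨ENNReal.toReal_nonneg, by rw [le_div_iff₀ (by linarith), mul_comm]; exact hq'le⟩
      have hm2 : q ∈ Set.Icc (0:ℝ) (1/(1+ε)) :=
        ⟨ENNReal.toReal_nonneg, by rw [le_div_iff₀ (by linarith), mul_comm]; exact hbig⟩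
      exact hmono hm1 hm2 hq'q
    have h3 : ENNReal.ofReal (kl2 ((1 + ε) * q) q) ≤ Jplus F Ftil A ε C := by
      refine le_sInf ?_
      rintro r ⟨G, ⟨hGp, hgam, hKLne⟩, hcons, rfl⟩
      haveI := hGp
      obtain ⟨hGac, hInt⟩ := KL_ne_top_elim hKLne
      rw [KL_eq ⟨hGac, hInt⟩]
      exact ENNReal.ofReal_le_ofReal (KL_lower hε hGac hInt hC hcons hbig)
    exact h1.trans ((ENNReal.ofReal_le_ofReal h2).trans h3)
  · rw [Jplus_eq_top hε hC hbig]
    exact le_top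

end Stmt7Aux

theorem stmt7 {X : Type*} [MeasurableSpace X] [MetricSpace X] [CompleteSpace X]
    [TopologicalSpace.SeparableSpace X] [BorelSpace X]
    (F Ftil : Measure X) [IsProbabilityMeasure F] [IsProbabilityMeasure Ftil]
    (A : Set X) (hA : MeasurableSet A) (hac : F.restrict A ≪ Ftil)
    (ε δ : ℝ) (hε : 0 < ε) (hδ : 0 < δ) :
    (⨆ t : {t : ℝ // 0 < t ∧ F (Ct F Ftil A t) ≤ ENNReal.ofReal δ},
        Jplus F Ftil A ε (Ct F Ftil A t.1))
      ≤ (⨅ C : {C : Set X // C ⊆ A ∧ MeasurableSet C ∧ ENNReal.ofReal δ ≤ F C},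
          Jplus F Ftil A ε C.1) ∧
    (⨅ C : {C : Set X // C ⊆ A ∧ MeasurableSet C ∧ ENNReal.ofReal δ ≤ F C},
        Jplus F Ftil A ε C.1)
      ≤ ⨅ t : {t : ℝ // 0 ≤ t ∧ ENNReal.ofReal δ ≤ F (Ct F Ftil A t)},
          Jplus F Ftil A ε (Ct F Ftil A t.1) := by
  constructor
  · refine iSup_le ?_
    rintro ⟨t, ht, hFt⟩
    refine le_iInf ?_
    rintro ⟨C, hCA, hC, hFC⟩
    exact Stmt7Aux.key F Ftil A hA hac hε ht hCA hC (hFt.trans hFC)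
  · refine le_iInf ?_
    rintro ⟨t, ht, hFt⟩
    exact iInf_le_of_le ⟨Ct F Ftil A t, fun x hx => hx.1, Stmt7Aux.Ct_meas F Ftil hA t, hFt⟩
      le_rfl
end
end

section
/- Let C ⊆ 𝒳 be measurable, ε ∈ (0,1), and F̃(C) < 1. Then inf{ H(G∣F̃) : G a probability measure on 𝒳 with dG/dF̃ ≤ 1−ε F̃-almost everywhere on C } = γ⁻_ε(F̃(C)). Moreover, the infimum is attained by the probability measure G_* whose density with respect to F̃ equals 1−ε on C and equals (1−(1−ε)F̃(C))/(1−F̃(C)) on the complement of C. -/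
open MeasureTheory Filter Topology ENNReal
open scoped Classical

noncomputable section

/-- `γ⁻_ε(s)` -/
def gammaMinus (ε s : ℝ) : ℝ :=
  (1 - ε) * s * Real.log (1 - ε)
    + (1 - (1 - ε) * s) * Real.log ((1 - (1 - ε) * s) / (1 - s))

section Aux

variable {X : Type*} [MeasurableSpace X]

lemma twoVal_eq_indicator (C : Set X) (p q : ℝ) :
    (fun x => if x ∈ C then p else q)
      = fun x => C.indicator (fun _ => p) x + Cᶜ.indicator (fun _ => q) x := by
  funext x
  by_cases h : x ∈ C <;> simp [Set.indicator, h]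

lemma twoVal_integrable (G : Measure X) [IsFiniteMeasure G] {C : Set X}
    (hC : MeasurableSet C) (p q : ℝ) :
    Integrable (fun x => if x ∈ C then p else q) G := by
  rw [twoVal_eq_indicator]
  exact ((integrable_const p).indicator hC).add ((integrable_const q).indicator hC.compl)

lemma twoVal_integral (G : Measure X) [IsFiniteMeasure G] {C : Set X}
    (hC : MeasurableSet C) (p q : ℝ) :
    ∫ x, (if x ∈ C then p else q) ∂G = p * (G C).toReal + q * (G Cᶜ).toReal := by
  rw [twoVal_eq_indicator,
    integral_add ((integrable_const p).indicator hC) ((integrable_const q).indicator hC.compl),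
    integral_indicator_const _ hC, integral_indicator_const _ hC.compl]
  simp [smul_eq_mul, measureReal_def]; ring

lemma ennreal_mul_inv_le_one (y : ℝ≥0∞) : y * y⁻¹ ≤ 1 := by
  rcases eq_or_ne y 0 with h | h; · simp [h]
  rcases eq_or_ne y ⊤ with h' | h'; · simp [h']
  rw [ENNReal.mul_inv_cancel h h']

end Aux

theorem stmt9 {X : Type*} [MeasurableSpace X] [MetricSpace X] [CompleteSpace X]
    [TopologicalSpace.SeparableSpace X] [BorelSpace X]
    (Ftil : Measure X) [IsProbabilityMeasure Ftil]
    (C : Set X) (hC : MeasurableSet C) (ε : ℝ) (hε : ε ∈ Set.Ioo (0 : ℝ) 1)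
    (hlt : Ftil C < 1) :
    sInf { r : ℝ≥0∞ | ∃ G : Measure X, IsProbabilityMeasure G ∧
        (∀ᵐ x ∂Ftil, x ∈ C → ((G.rnDeriv Ftil) x).toReal ≤ 1 - ε) ∧ r = KL G Ftil }
      = ENNReal.ofReal (gammaMinus ε (Ftil C).toReal) ∧
    ∃ Gstar : Measure X,
      Gstar = Ftil.withDensity (fun x => ENNReal.ofReal
        (if x ∈ C then 1 - ε
         else (1 - (1 - ε) * (Ftil C).toReal) / (1 - (Ftil C).toReal))) ∧
      IsProbabilityMeasure Gstar ∧
      (∀ᵐ x ∂Ftil, x ∈ C → ((Gstar.rnDeriv Ftil) x).toReal ≤ 1 - ε) ∧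
      KL Gstar Ftil = ENNReal.ofReal (gammaMinus ε (Ftil C).toReal) := by
  obtain ⟨hε0, hε1⟩ := hε
  set s : ℝ := (Ftil C).toReal with hs_def
  set a : ℝ := 1 - ε with ha_def
  set b : ℝ := (1 - a * s) / (1 - s) with hb_def
  have ha0 : 0 < a := by simp only [ha_def]; linarith
  have ha1 : a < 1 := by simp only [ha_def]; linarith
  have hFC_ne_top : Ftil C ≠ ⊤ := (measure_lt_top _ _).ne
  have hsnn : 0 ≤ s := ENNReal.toReal_nonneg
  have hs1 : s < 1 := by
    have := ENNReal.toReal_strict_mono one_ne_top hlt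
    simpa using this
  have has_le : a * s ≤ s := by nlinarith
  have has1 : a * s < 1 := lt_of_le_of_lt has_le hs1
  have hb0 : 0 < b := div_pos (by linarith) (by linarith)
  have hb1 : 1 ≤ b := (one_le_div (by linarith)).mpr (by nlinarith)
  have hbs : b * (1 - s) = 1 - a * s := by
    rw [hb_def, div_mul_cancel₀]; linarith
  -- the density
  set φ : X → ℝ := fun x => if x ∈ C then a else b with hφ_def
  have hφpos : ∀ x, 0 < φ x := fun x => by
    by_cases h : x ∈ C <;> simp [hφ_def, h, ha0, hb0]
  have hφmeas : Measurable φ := Measurable.ite hC measurable_const measurable_const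
  set f : X → ℝ≥0∞ := fun x => ENNReal.ofReal (φ x) with hf_def
  have hfmeas : Measurable f := ENNReal.measurable_ofReal.comp hφmeas
  have hf_ite : f = fun x => if x ∈ C then ENNReal.ofReal a else ENNReal.ofReal b := by
    funext x; simp only [hf_def, hφ_def]; split_ifs <;> rfl
  have hFC : Ftil C = ENNReal.ofReal s := (ENNReal.ofReal_toReal hFC_ne_top).symm
  have hFCc : Ftil Cᶜ = ENNReal.ofReal (1 - s) := by
    rw [measure_compl hC hFC_ne_top, measure_univ, hFC,
      ← ENNReal.ofReal_one, ← ENNReal.ofReal_sub _ hsnn]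
  have hf_lint : ∫⁻ x, f x ∂Ftil = 1 := by
    have : (fun x => if x ∈ C then ENNReal.ofReal a else ENNReal.ofReal b)
        = fun x => C.indicator (fun _ => ENNReal.ofReal a) x
            + Cᶜ.indicator (fun _ => ENNReal.ofReal b) x := by
      funext x; by_cases h : x ∈ C <;> simp [Set.indicator, h]
    rw [hf_ite, this, lintegral_add_left (measurable_const.indicator hC),
      lintegral_indicator_const hC, lintegral_indicator_const hC.compl, hFC, hFCc,
      ← ENNReal.ofReal_mul ha0.le, ← ENNReal.ofReal_mul hb0.le,
      ← ENNReal.ofReal_add (by nlinarith) (by nlinarith), hbs]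
    norm_num
  set Gstar : Measure X := Ftil.withDensity f with hGstar_def
  have hGstar_prob : IsProbabilityMeasure Gstar := by
    constructor
    rw [hGstar_def, withDensity_apply _ MeasurableSet.univ, setLIntegral_univ, hf_lint]
  have hGstar_ac : Gstar ≪ Ftil := withDensity_absolutelyContinuous _ _
  have hGstar_rn : Gstar.rnDeriv Ftil =ᵐ[Ftil] f := Measure.rnDeriv_withDensity Ftil hfmeas
  have hGstar_ae : ∀ᵐ x ∂Ftil, x ∈ C → ((Gstar.rnDeriv Ftil) x).toReal ≤ 1 - ε := by
    filter_upwards [hGstar_rn] with x hx hxC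
    rw [hx, hf_def]
    simp only [hφ_def, if_pos hxC]
    rw [ENNReal.toReal_ofReal ha0.le]
  have hGstarC : Gstar C = ENNReal.ofReal (a * s) := by
    rw [hGstar_def, withDensity_apply _ hC]
    calc ∫⁻ x in C, f x ∂Ftil = ∫⁻ _ in C, ENNReal.ofReal a ∂Ftil := by
          refine setLIntegral_congr_fun hC (fun x hx => ?_)
          simp [hf_def, hφ_def, hx]
      _ = ENNReal.ofReal a * Ftil C := setLIntegral_const _ _
      _ = ENNReal.ofReal (a * s) := by rw [hFC, ← ENNReal.ofReal_mul ha0.le]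
  have hGstarCc : Gstar Cᶜ = ENNReal.ofReal (1 - a * s) := by
    rw [hGstar_def, withDensity_apply _ hC.compl]
    calc ∫⁻ x in Cᶜ, f x ∂Ftil = ∫⁻ _ in Cᶜ, ENNReal.ofReal b ∂Ftil := by
          refine setLIntegral_congr_fun hC.compl (fun x hx => ?_)
          simp only [hf_def, hφ_def, if_neg (show x ∉ C from hx)]
      _ = ENNReal.ofReal b * Ftil Cᶜ := setLIntegral_const _ _
      _ = ENNReal.ofReal (1 - a * s) := by
          rw [hFCc, ← ENNReal.ofReal_mul hb0.le, hbs]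
  -- log density function
  set h : X → ℝ := fun x => Real.log (φ x) with hh_def
  have hh_ite : h = fun x => if x ∈ C then Real.log a else Real.log b := by
    funext x; simp only [hh_def, hφ_def, apply_ite Real.log]
  have hgamma : gammaMinus ε s = a * s * Real.log a + (1 - a * s) * Real.log b := by
    simp only [gammaMinus, ha_def, hb_def]
  -- KL of Gstar
  have hGstar_rn' : Gstar.rnDeriv Ftil =ᵐ[Gstar] f := hGstar_ac.ae_le hGstar_rn
  have hGstar_logrn : (fun x => Real.log ((Gstar.rnDeriv Ftil) x).toReal) =ᵐ[Gstar] h := by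
    filter_upwards [hGstar_rn'] with x hx
    rw [hx, hf_def, ENNReal.toReal_ofReal (hφpos x).le]
  have hh_int : ∀ (G : Measure X) [IsFiniteMeasure G], Integrable h G := by
    intro G _
    rw [hh_ite]
    exact twoVal_integrable G hC _ _
  have hGstar_int : Integrable (fun x => Real.log ((Gstar.rnDeriv Ftil) x).toReal) Gstar :=
    (hh_int Gstar).congr hGstar_logrn.symm
  have hKLGstar : KL Gstar Ftil = ENNReal.ofReal (gammaMinus ε s) := by
    rw [KL, if_pos ⟨hGstar_ac, hGstar_int⟩]
    congr 1
    rw [integral_congr_ae hGstar_logrn, hh_ite, twoVal_integral Gstar hC, hGstarC, hGstarCc,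
      ENNReal.toReal_ofReal (by nlinarith), ENNReal.toReal_ofReal (by nlinarith), hgamma]
    ring
  -- lower bound for any admissible G
  have hlower : ∀ (G : Measure X), IsProbabilityMeasure G →
      (∀ᵐ x ∂Ftil, x ∈ C → ((G.rnDeriv Ftil) x).toReal ≤ 1 - ε) →
      ENNReal.ofReal (gammaMinus ε s) ≤ KL G Ftil := by
    intro G hGprob hGae
    rw [KL]
    split_ifs with hcond
    · obtain ⟨hac, hint⟩ := hcond
      apply ENNReal.ofReal_le_ofReal
      set g : X → ℝ≥0∞ := G.rnDeriv Ftil with hg_def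
      have hgmeas : Measurable g := Measure.measurable_rnDeriv _ _
      have hpos : ∀ᵐ x ∂G, 0 < g x := Measure.rnDeriv_pos hac
      have hltF : ∀ᵐ x ∂Ftil, g x < ⊤ := Measure.rnDeriv_lt_top G Ftil
      have hltG : ∀ᵐ x ∂G, g x < ⊤ := hac.ae_le hltF
      -- Step A : (G C).toReal ≤ a * s
      have hGC : G C = ∫⁻ x in C, g x ∂Ftil := (Measure.setLIntegral_rnDeriv hac C).symm
      have hboundC : ∫⁻ x in C, g x ∂Ftil ≤ ENNReal.ofReal a * Ftil C := by
        have hres : ∀ᵐ x ∂(Ftil.restrict C), g x ≤ ENNReal.ofReal a := by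
          rw [ae_restrict_iff' hC]
          filter_upwards [hGae, hltF] with x hx hlt hxC
          calc g x = ENNReal.ofReal (g x).toReal := (ENNReal.ofReal_toReal hlt.ne).symm
            _ ≤ ENNReal.ofReal a := ENNReal.ofReal_le_ofReal (hx hxC)
        calc ∫⁻ x in C, g x ∂Ftil ≤ ∫⁻ _ in C, ENNReal.ofReal a ∂Ftil :=
              lintegral_mono_ae hres
          _ = ENNReal.ofReal a * Ftil C := setLIntegral_const _ _
      have ht : (G C).toReal ≤ a * s := by
        have h2 : G C ≤ ENNReal.ofReal a * Ftil C := hGC ▸ hboundC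
        calc (G C).toReal ≤ (ENNReal.ofReal a * Ftil C).toReal :=
              ENNReal.toReal_mono (ENNReal.mul_ne_top ENNReal.ofReal_ne_top hFC_ne_top) h2
          _ = a * s := by rw [ENNReal.toReal_mul, ENNReal.toReal_ofReal ha0.le]
      -- Step B : Gibbs inequality  ∫ h dG ≤ ∫ log rnDeriv dG
      set ψ : X → ℝ := fun x => φ x / (g x).toReal with hψ_def
      have hψ_nonneg : ∀ x, 0 ≤ ψ x := fun x =>
        div_nonneg (hφpos x).le ENNReal.toReal_nonneg
      have hψ_meas : Measurable ψ := hφmeas.div hgmeas.ennreal_toReal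
      have key : ∫⁻ x, ENNReal.ofReal (ψ x) ∂G ≤ 1 := by
        have heq : ∀ᵐ x ∂G, ENNReal.ofReal (ψ x) = f x * (g x)⁻¹ := by
          filter_upwards [hpos, hltG] with x hxpos hxlt
          have hgt : 0 < (g x).toReal := ENNReal.toReal_pos hxpos.ne' hxlt.ne
          rw [hψ_def]
          simp only
          rw [ENNReal.ofReal_div_of_pos hgt, ENNReal.ofReal_toReal hxlt.ne,
            div_eq_mul_inv]
        calc ∫⁻ x, ENNReal.ofReal (ψ x) ∂G = ∫⁻ x, f x * (g x)⁻¹ ∂G :=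
              lintegral_congr_ae heq
          _ = ∫⁻ x, g x * (f x * (g x)⁻¹) ∂Ftil := by
              conv_lhs => rw [← Measure.withDensity_rnDeriv_eq G Ftil hac]
              refine (lintegral_withDensity_eq_lintegral_mul _ hgmeas (hfmeas.mul hgmeas.inv)).trans ?_
              rfl
          _ ≤ ∫⁻ x, f x ∂Ftil := by
              refine lintegral_mono fun x => ?_
              calc g x * (f x * (g x)⁻¹) = f x * (g x * (g x)⁻¹) := by ring
                _ ≤ f x * 1 := mul_le_mul_right (ennreal_mul_inv_le_one _) _
                _ = f x := mul_one _
          _ = 1 := hf_lint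
      have hψ_int : Integrable ψ G := by
        refine ⟨hψ_meas.aestronglyMeasurable, ?_⟩
        rw [hasFiniteIntegral_iff_norm]
        calc ∫⁻ x, ENNReal.ofReal ‖ψ x‖ ∂G = ∫⁻ x, ENNReal.ofReal (ψ x) ∂G := by
              refine lintegral_congr fun x => ?_
              rw [Real.norm_eq_abs, abs_of_nonneg (hψ_nonneg x)]
          _ ≤ 1 := key
          _ < ⊤ := one_lt_top
      have hψ_integral_le : ∫ x, ψ x ∂G ≤ 1 := by
        rw [integral_eq_lintegral_of_nonneg_ae (ae_of_all _ hψ_nonneg)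
          hψ_meas.aestronglyMeasurable]
        calc (∫⁻ x, ENNReal.ofReal (ψ x) ∂G).toReal ≤ (1 : ℝ≥0∞).toReal :=
              ENNReal.toReal_mono one_ne_top key
          _ = 1 := by simp
      have hmono : ∀ᵐ x ∂G, h x - Real.log ((g x).toReal) ≤ ψ x - 1 := by
        filter_upwards [hpos, hltG] with x hxpos hxlt
        have hgt : 0 < (g x).toReal := ENNReal.toReal_pos hxpos.ne' hxlt.ne
        have : h x - Real.log ((g x).toReal) = Real.log (ψ x) := by
          rw [hψ_def, hh_def]
          simp only
          rw [Real.log_div (hφpos x).ne' hgt.ne']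
        rw [this]
        exact Real.log_le_sub_one_of_pos (div_pos (hφpos x) hgt)
      have hstepB : ∫ x, h x ∂G ≤ ∫ x, Real.log ((g x).toReal) ∂G := by
        have hint' : Integrable (fun x => Real.log ((g x).toReal)) G := hint
        have h1 : ∫ x, (h x - Real.log ((g x).toReal)) ∂G ≤ ∫ x, (ψ x - 1) ∂G :=
          integral_mono_ae ((hh_int G).sub hint') (hψ_int.sub (integrable_const 1)) hmono
        rw [integral_sub (hh_int G) hint', integral_sub hψ_int (integrable_const 1),
          integral_const, probReal_univ] at h1
        simp only [ENNReal.toReal_one, smul_eq_mul, one_mul] at h1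
        linarith
      -- Step C : gammaMinus ≤ ∫ h dG
      have hGCc : (G Cᶜ).toReal = 1 - (G C).toReal := by
        rw [measure_compl hC (measure_lt_top _ _).ne, measure_univ,
          ENNReal.toReal_sub_of_le prob_le_one one_ne_top, ENNReal.toReal_one]
      have hinth : ∫ x, h x ∂G
          = Real.log a * (G C).toReal + Real.log b * (G Cᶜ).toReal := by
        rw [hh_ite, twoVal_integral G hC]
      have hstepC : gammaMinus ε s ≤ ∫ x, h x ∂G := by
        rw [hinth, hGCc, hgamma]
        have hla : Real.log a < 0 := Real.log_neg ha0 ha1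
        have hlb : 0 ≤ Real.log b := Real.log_nonneg hb1
        nlinarith [mul_nonneg (sub_nonneg.mpr ht) (sub_nonneg.mpr (hla.le.trans hlb))]
      exact hstepC.trans hstepB
    · exact le_top
  constructor
  · refine le_antisymm (sInf_le ⟨Gstar, hGstar_prob, hGstar_ae, hKLGstar.symm⟩) ?_
    refine le_sInf fun r hr => ?_
    obtain ⟨G, hGprob, hGae, rfl⟩ := hr
    exact hlower G hGprob hGae
  · exact ⟨Gstar, rfl, hGstar_prob, hGstar_ae, hKLGstar⟩
end
end

section
/- Let α ∈ (0,1), q ≥ a, and set k(x) = 1_{(q,∞)}(x)·w(x) and M(λ) = ∫ e^{λ k(x)} dF̃(x). Suppose λ ≥ 0 satisfies M(λ) < ∞, ∫ k e^{λk} dF̃ < ∞, and ∫ k e^{λk} dF̃ / M(λ) = α. Then inf{ H(G∣F̃) : G a probability measure on ℝ with ∫ k dG ≥ α } = λα − log M(λ), and the infimum is attained by the probability measure G*_α with density dG*_α/dF̃ = e^{λ k}/M(λ). -/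
open MeasureTheory Filter Topology ENNReal
open scoped Classical

noncomputable section

/-- pointwise `ℝ≥0∞` inequality used for the Gibbs lower bound. -/
lemma aux_ofReal_ineq (c L m h' : ℝ) (hc : 0 ≤ c) (hm : 0 ≤ m) (hh : 0 ≤ h')
    (hineq : c + 1 ≤ L + m + h') :
    ENNReal.ofReal c + 1 + ENNReal.ofReal (-L)
      ≤ ENNReal.ofReal L + ENNReal.ofReal m + ENNReal.ofReal h' := by
  rcases le_total 0 L with hL | hL
  · have h1 : ENNReal.ofReal (-L) = 0 := by simp [ENNReal.ofReal_eq_zero]; linarith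
    calc ENNReal.ofReal c + 1 + ENNReal.ofReal (-L) = ENNReal.ofReal (c + 1) := by
          rw [h1, add_zero, ENNReal.ofReal_add hc zero_le_one, ENNReal.ofReal_one]
    _ ≤ ENNReal.ofReal (L + m + h') := ENNReal.ofReal_le_ofReal hineq
    _ = ENNReal.ofReal L + ENNReal.ofReal m + ENNReal.ofReal h' := by
          rw [ENNReal.ofReal_add (by linarith) hh, ENNReal.ofReal_add hL hm]
  · have h1 : ENNReal.ofReal L = 0 := by simp [ENNReal.ofReal_eq_zero]; exact hL
    calc ENNReal.ofReal c + 1 + ENNReal.ofReal (-L) = ENNReal.ofReal (c + 1 + (-L)) := by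
          rw [ENNReal.ofReal_add (by linarith) (by linarith), ENNReal.ofReal_add hc zero_le_one,
            ENNReal.ofReal_one]
    _ ≤ ENNReal.ofReal (m + h') := ENNReal.ofReal_le_ofReal (by linarith)
    _ = ENNReal.ofReal L + ENNReal.ofReal m + ENNReal.ofReal h' := by
          rw [h1, zero_add, ENNReal.ofReal_add hm hh]

theorem stmt11 (F Ftil : Measure ℝ) [IsProbabilityMeasure F] [IsProbabilityMeasure Ftil]
    (a : ℝ) (hac : F.restrict (Set.Ioi a) ≪ Ftil)
    -- the weight function `w = (dF/dF̃)·1_{(a,∞)}`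
    (w : ℝ → ℝ) (hw : w = Set.indicator (Set.Ioi a) fun y => ((F.rnDeriv Ftil) y).toReal)
    (α : ℝ) (hα : α ∈ Set.Ioo (0 : ℝ) 1) (q : ℝ) (hq : a ≤ q)
    -- `k = 1_{(q,∞)}·w`
    (k : ℝ → ℝ) (hk : k = Set.indicator (Set.Ioi q) fun y => w y)
    (lam : ℝ) (hlam : 0 ≤ lam)
    (hM : Integrable (fun x => Real.exp (lam * k x)) Ftil)
    (hM' : Integrable (fun x => k x * Real.exp (lam * k x)) Ftil)
    (heq : (∫ x, k x * Real.exp (lam * k x) ∂Ftil) / (∫ x, Real.exp (lam * k x) ∂Ftil) = α) :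
    sInf { r : ℝ≥0∞ | ∃ G : Measure ℝ, IsProbabilityMeasure G ∧
        ENNReal.ofReal α ≤ ∫⁻ x, ENNReal.ofReal (k x) ∂G ∧ r = KL G Ftil }
      = ENNReal.ofReal (lam * α - Real.log (∫ x, Real.exp (lam * k x) ∂Ftil)) ∧
    ∃ Gstar : Measure ℝ,
      Gstar = Ftil.withDensity (fun x => ENNReal.ofReal
        (Real.exp (lam * k x) / ∫ y, Real.exp (lam * k y) ∂Ftil)) ∧
      IsProbabilityMeasure Gstar ∧
      ENNReal.ofReal α ≤ (∫⁻ x, ENNReal.ofReal (k x) ∂Gstar) ∧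
      KL Gstar Ftil
        = ENNReal.ofReal (lam * α - Real.log (∫ x, Real.exp (lam * k x) ∂Ftil)) := by
  have hk0 : ∀ x, 0 ≤ k x := by
    intro x
    rw [hk]
    apply Set.indicator_nonneg
    intro y _
    rw [hw]
    apply Set.indicator_nonneg
    intro z _
    positivity
  have hkm : Measurable k := by
    rw [hk, hw]
    exact ((Measure.measurable_rnDeriv F Ftil).ennreal_toReal.indicator
      measurableSet_Ioi).indicator measurableSet_Ioi
  set M : ℝ := ∫ x, Real.exp (lam * k x) ∂Ftil with hMdef
  have hM1 : (1 : ℝ) ≤ M := by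
    have h1 : (1 : ℝ) = ∫ _x, (1 : ℝ) ∂Ftil := by simp
    rw [hMdef, h1]
    refine integral_mono (integrable_const 1) hM fun x => ?_
    exact Real.one_le_exp (by have := hk0 x; positivity)
  have hM0 : (0 : ℝ) < M := lt_of_lt_of_le one_pos hM1
  have hlogM0 : 0 ≤ Real.log M := Real.log_nonneg hM1
  set ρ : ℝ → ℝ≥0∞ := fun x => ENNReal.ofReal (Real.exp (lam * k x) / M) with hρdef
  have hρm : Measurable ρ := (((hkm.const_mul lam).exp).div_const M).ennreal_ofReal
  have hρ1 : ∫⁻ x, ρ x ∂Ftil = 1 := by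
    rw [hρdef]
    rw [← ofReal_integral_eq_lintegral_ofReal (hM.div_const M)
      (ae_of_all _ fun x => by positivity)]
    rw [integral_div, ← hMdef, div_self hM0.ne']
    simp
  set Gstar : Measure ℝ := Ftil.withDensity ρ with hGdef
  have hGprob : IsProbabilityMeasure Gstar := by
    constructor
    rw [hGdef, withDensity_apply _ MeasurableSet.univ, setLIntegral_univ, hρ1]
  have habs : Gstar ≪ Ftil := withDensity_absolutelyContinuous _ _
  have hk_lint : ∫⁻ x, ENNReal.ofReal (k x) ∂Gstar = ENNReal.ofReal α := by
    rw [hGdef, lintegral_withDensity_eq_lintegral_mul _ hρm hkm.ennreal_ofReal]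
    have hptw : ∀ x, (ρ * fun x => ENNReal.ofReal (k x)) x
        = ENNReal.ofReal (k x * Real.exp (lam * k x) / M) := by
      intro x
      simp only [Pi.mul_apply, hρdef]
      rw [← ENNReal.ofReal_mul (by positivity)]
      ring_nf
    rw [lintegral_congr hptw,
      ← ofReal_integral_eq_lintegral_ofReal (hM'.div_const M)
        (ae_of_all _ fun x => by have := hk0 x; positivity),
      integral_div, heq]
  -- the Radon–Nikodym derivative of Gstar
  have hrnG : Gstar.rnDeriv Ftil =ᵐ[Ftil] ρ := Measure.rnDeriv_withDensity Ftil hρm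
  have hlog : ∀ᵐ x ∂Ftil,
      Real.log ((Gstar.rnDeriv Ftil x).toReal) = lam * k x - Real.log M := by
    filter_upwards [hrnG] with x hx
    rw [hx, hρdef, ENNReal.toReal_ofReal (by positivity),
      Real.log_div (Real.exp_ne_zero _) hM0.ne', Real.log_exp]
  have hlogG : ∀ᵐ x ∂Gstar,
      Real.log ((Gstar.rnDeriv Ftil x).toReal) = lam * k x - Real.log M :=
    habs.ae_le hlog
  have hkint : Integrable k Gstar := by
    rw [hGdef, integrable_withDensity_iff hρm (ae_of_all _ fun x => ENNReal.ofReal_lt_top)]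
    refine (hM'.div_const M).congr (ae_of_all _ fun x => ?_)
    show k x * Real.exp (lam * k x) / M
      = k x * (ENNReal.ofReal (Real.exp (lam * k x) / M)).toReal
    rw [ENNReal.toReal_ofReal (div_nonneg (Real.exp_nonneg _) hM0.le)]
    ring
  have hint_affine : Integrable (fun x => lam * k x - Real.log M) Gstar :=
    (hkint.const_mul lam).sub (integrable_const _)
  have hllr_int : Integrable (fun x => Real.log ((Gstar.rnDeriv Ftil x).toReal)) Gstar :=
    hint_affine.congr (hlogG.mono fun x hx => hx.symm)
  have hkG : ∫ x, k x ∂Gstar = α := by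
    rw [integral_eq_lintegral_of_nonneg_ae (ae_of_all _ hk0) hkint.aestronglyMeasurable,
      hk_lint, ENNReal.toReal_ofReal hα.1.le]
  have hKL : KL Gstar Ftil = ENNReal.ofReal (lam * α - Real.log M) := by
    rw [KL, if_pos ⟨habs, hllr_int⟩]
    congr 1
    rw [integral_congr_ae hlogG, integral_sub (hkint.const_mul lam) (integrable_const _),
      integral_const_mul, hkG, integral_const, probReal_univ, smul_eq_mul,
      one_mul]
  refine ⟨?_, Gstar, rfl, hGprob, le_of_eq hk_lint.symm, hKL⟩
  apply le_antisymm
  · exact sInf_le ⟨Gstar, hGprob, le_of_eq hk_lint.symm, hKL.symm⟩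
  · apply le_sInf
    rintro r ⟨G, hGp, hGk, rfl⟩
    rw [KL]
    split_ifs with hcond
    · obtain ⟨hGac, hLint⟩ := hcond
      apply ENNReal.ofReal_le_ofReal
      -- main analytic lower bound
      set L : ℝ → ℝ := fun x => Real.log ((G.rnDeriv Ftil x).toReal) with hLdef
      set rd : ℝ → ℝ≥0∞ := G.rnDeriv Ftil with hrddef
      have hrdm : Measurable rd := Measure.measurable_rnDeriv G Ftil
      have hLm : Measurable L := hrdm.ennreal_toReal.log
      set h : ℝ → ℝ := fun x => Real.exp (lam * k x - Real.log M - L x) with hhdef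
      have hhm : Measurable h := (((hkm.const_mul lam).sub_const _).sub hLm).exp
      have hptw : ∀ x, ENNReal.ofReal (lam * k x) + 1 + ENNReal.ofReal (-L x)
          ≤ ENNReal.ofReal (L x) + ENNReal.ofReal (Real.log M) + ENNReal.ofReal (h x) := by
        intro x
        refine aux_ofReal_ineq _ _ _ _ (by have := hk0 x; positivity) hlogM0 (Real.exp_nonneg _)
          ?_
        have := Real.add_one_le_exp (lam * k x - Real.log M - L x)
        rw [hhdef]
        linarith
      set P : ℝ≥0∞ := ∫⁻ x, ENNReal.ofReal (L x) ∂G with hPdef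
      set N : ℝ≥0∞ := ∫⁻ x, ENNReal.ofReal (-L x) ∂G with hNdef
      have hPfin : P ≠ ∞ := by
        refine ne_top_of_le_ne_top hLint.hasFiniteIntegral.ne ?_
        exact lintegral_mono fun x => Real.ofReal_le_enorm (L x)
      have hNfin : N ≠ ∞ := by
        refine ne_top_of_le_ne_top hLint.hasFiniteIntegral.ne ?_
        refine lintegral_mono fun x => ?_
        calc ENNReal.ofReal (-L x) ≤ ‖-L x‖ₑ := Real.ofReal_le_enorm _
        _ = ‖L x‖ₑ := by rw [enorm_neg]
      -- bound for the `h` term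
      have hrdpos : ∀ᵐ x ∂G, 0 < rd x := Measure.rnDeriv_pos hGac
      have hrdfin : ∀ᵐ x ∂G, rd x < ∞ := hGac.ae_le (Measure.rnDeriv_lt_top G Ftil)
      have hh_eq : ∀ᵐ x ∂G, ENNReal.ofReal (h x) = ρ x * (rd x)⁻¹ := by
        filter_upwards [hrdpos, hrdfin] with x h0 hfin
        have htr : 0 < (rd x).toReal := ENNReal.toReal_pos h0.ne' hfin.ne
        have hexp : h x = Real.exp (lam * k x) / M * ((rd x).toReal)⁻¹ := by
          rw [hhdef]
          simp only
          rw [show lam * k x - Real.log M - L x = lam * k x + (-Real.log M) + (-L x) by ring,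
            Real.exp_add, Real.exp_add, Real.exp_neg, Real.exp_neg, Real.exp_log hM0,
            hLdef]
          simp only
          rw [Real.exp_log htr]
          ring
        rw [hexp, ENNReal.ofReal_mul (by positivity), ENNReal.ofReal_inv_of_pos htr,
          ENNReal.ofReal_toReal hfin.ne, hρdef]
      have hhle : ∫⁻ x, ENNReal.ofReal (h x) ∂G ≤ 1 := by
        calc ∫⁻ x, ENNReal.ofReal (h x) ∂G = ∫⁻ x, ρ x * (rd x)⁻¹ ∂G :=
              lintegral_congr_ae hh_eq
        _ = ∫⁻ x, (rd * fun x => ρ x * (rd x)⁻¹) x ∂Ftil := by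
              conv_lhs => rw [← Measure.withDensity_rnDeriv_eq G Ftil hGac]
              exact lintegral_withDensity_eq_lintegral_mul _ hrdm (hρm.mul hrdm.inv)
        _ ≤ ∫⁻ x, ρ x ∂Ftil := by
              refine lintegral_mono fun x => ?_
              simp only [Pi.mul_apply]
              calc rd x * (ρ x * (rd x)⁻¹) = ρ x * (rd x * (rd x)⁻¹) := by ring
              _ ≤ ρ x * 1 := mul_le_mul_right (ENNReal.mul_inv_le_one _) _
              _ = ρ x := mul_one _
        _ = 1 := hρ1
      -- integrate the pointwise inequality
      have hmain : ∫⁻ x, (ENNReal.ofReal (lam * k x) + 1 + ENNReal.ofReal (-L x)) ∂G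
          ≤ ∫⁻ x, (ENNReal.ofReal (L x) + ENNReal.ofReal (Real.log M) + ENNReal.ofReal (h x))
            ∂G := lintegral_mono hptw
      have hLHS : ∫⁻ x, (ENNReal.ofReal (lam * k x) + 1 + ENNReal.ofReal (-L x)) ∂G
          = (∫⁻ x, ENNReal.ofReal (lam * k x) ∂G) + 1 + N := by
        rw [lintegral_add_right (g := fun x => ENNReal.ofReal (-L x)) _ hLm.neg.ennreal_ofReal, lintegral_add_right _ measurable_const,
          lintegral_const, measure_univ, mul_one]
      have hRHS : ∫⁻ x, (ENNReal.ofReal (L x) + ENNReal.ofReal (Real.log M)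
            + ENNReal.ofReal (h x)) ∂G
          = P + ENNReal.ofReal (Real.log M) + ∫⁻ x, ENNReal.ofReal (h x) ∂G := by
        rw [lintegral_add_right _ hhm.ennreal_ofReal, lintegral_add_right _ measurable_const,
          lintegral_const, measure_univ, mul_one]
      have hlamk : ENNReal.ofReal (lam * α) ≤ ∫⁻ x, ENNReal.ofReal (lam * k x) ∂G := by
        have : ∫⁻ x, ENNReal.ofReal (lam * k x) ∂G
            = ENNReal.ofReal lam * ∫⁻ x, ENNReal.ofReal (k x) ∂G := by
          simp_rw [ENNReal.ofReal_mul hlam]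
          exact lintegral_const_mul _ hkm.ennreal_ofReal
        rw [this, ENNReal.ofReal_mul hlam]
        exact mul_le_mul_right hGk _
      have key : ENNReal.ofReal (lam * α) + 1 + N ≤ P + ENNReal.ofReal (Real.log M) + 1 := by
        calc ENNReal.ofReal (lam * α) + 1 + N
            ≤ (∫⁻ x, ENNReal.ofReal (lam * k x) ∂G) + 1 + N := by
              exact add_le_add_left (add_le_add_left hlamk 1) N
        _ ≤ P + ENNReal.ofReal (Real.log M) + ∫⁻ x, ENNReal.ofReal (h x) ∂G := by
              rw [← hLHS, ← hRHS]; exact hmain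
        _ ≤ P + ENNReal.ofReal (Real.log M) + 1 := add_le_add_right hhle _
      have key2 : ENNReal.ofReal (lam * α) + N ≤ P + ENNReal.ofReal (Real.log M) := by
        have h1 : ENNReal.ofReal (lam * α) + N + 1 ≤ P + ENNReal.ofReal (Real.log M) + 1 := by
          calc ENNReal.ofReal (lam * α) + N + 1 = ENNReal.ofReal (lam * α) + 1 + N := by ring
          _ ≤ _ := key
        exact (ENNReal.add_le_add_iff_right one_ne_top).mp h1
      have hfin2 : P + ENNReal.ofReal (Real.log M) ≠ ∞ :=
        ENNReal.add_ne_top.mpr ⟨hPfin, ENNReal.ofReal_ne_top⟩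
      have key3 : lam * α + N.toReal ≤ P.toReal + Real.log M := by
        have := ENNReal.toReal_mono hfin2 key2
        rwa [ENNReal.toReal_add ENNReal.ofReal_ne_top hNfin,
          ENNReal.toReal_add hPfin ENNReal.ofReal_ne_top,
          ENNReal.toReal_ofReal (by have := hα.1; positivity),
          ENNReal.toReal_ofReal hlogM0] at this
      rw [integral_eq_lintegral_pos_part_sub_lintegral_neg_part hLint]
      have hPeq : (∫⁻ x, ENNReal.ofReal (L x) ∂G) = P := rfl
      linarith [key3]
    · exact le_top
end
end

section
/- Let F be a probability measure on 𝒳, B ⊆ 𝒳 measurable, α ∈ (0,1), and p = F(B) with 0 < p ≤ α. Then inf{ H(G∣F) : G a probability measure on 𝒳 with G(B) ≥ α } = α·log(α/p) + (1−α)·log((1−α)/(1−p)), i.e., the infimum equals the relative entropy between a Bernoulli(α) and a Bernoulli(p) distribution. -/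
open MeasureTheory Filter Topology ENNReal
open scoped Classical

noncomputable section

lemma ite_integrable {X : Type*} [MeasurableSpace X] (μ : Measure X) [IsFiniteMeasure μ]
    {B : Set X} (hB : MeasurableSet B) (a b : ℝ) :
    Integrable (fun x => if x ∈ B then a else b) μ := by
  have : (fun x => if x ∈ B then a else b)
      = fun x => B.indicator (fun _ => a) x + Bᶜ.indicator (fun _ => b) x := by
    funext x
    by_cases hx : x ∈ B <;> simp [Set.indicator_apply, hx]
  rw [this]
  exact ((integrable_const a).indicator hB).add ((integrable_const b).indicator hB.compl)

lemma ite_integral {X : Type*} [MeasurableSpace X] (μ : Measure X) [IsFiniteMeasure μ]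
    {B : Set X} (hB : MeasurableSet B) (a b : ℝ) :
    ∫ x, (if x ∈ B then a else b) ∂μ = (μ B).toReal * a + (μ Bᶜ).toReal * b := by
  have : (fun x => if x ∈ B then a else b)
      = fun x => B.indicator (fun _ => a) x + Bᶜ.indicator (fun _ => b) x := by
    funext x
    by_cases hx : x ∈ B <;> simp [Set.indicator_apply, hx]
  rw [this, integral_add (((integrable_const a).indicator hB))
      (((integrable_const b).indicator hB.compl)),
    integral_indicator_const a hB, integral_indicator_const b hB.compl]
  simp [smul_eq_mul]
  rfl

theorem stmt13 {X : Type*} [MeasurableSpace X] (F : Measure X) [IsProbabilityMeasure F]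
    (B : Set X) (hB : MeasurableSet B) (α p : ℝ) (hα : α ∈ Set.Ioo (0 : ℝ) 1)
    (hp : (F B).toReal = p) (hp0 : 0 < p) (hpα : p ≤ α) :
    sInf { r : ℝ≥0∞ | ∃ G : Measure X, IsProbabilityMeasure G ∧
        ENNReal.ofReal α ≤ G B ∧ r = KL G F }
      = ENNReal.ofReal (α * Real.log (α / p) + (1 - α) * Real.log ((1 - α) / (1 - p))) := by
  obtain ⟨hα0, hα1⟩ := hα
  have hp1 : p < 1 := lt_of_le_of_lt hpα hα1
  set c1 : ℝ := α / p with hc1def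
  set c2 : ℝ := (1 - α) / (1 - p) with hc2def
  have hc1 : 0 < c1 := div_pos hα0 hp0
  have hc2 : 0 < c2 := div_pos (by linarith) (by linarith)
  have hFB : F B = ENNReal.ofReal p := by
    rw [← hp, ENNReal.ofReal_toReal (measure_ne_top F B)]
  have hFBc : F Bᶜ = ENNReal.ofReal (1 - p) := by
    rw [measure_compl hB (measure_ne_top F B), hFB, measure_univ,
      ← ENNReal.ofReal_one, ← ENNReal.ofReal_sub _ hp0.le]
  -- the density of the optimal measure
  set f : X → ℝ≥0∞ := fun x => if x ∈ B then ENNReal.ofReal c1 else ENNReal.ofReal c2 with hfdef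
  have hf_meas : Measurable f := Measurable.ite hB measurable_const measurable_const
  set G₀ : Measure X := F.withDensity f with hG₀def
  have hG₀B : G₀ B = ENNReal.ofReal α := by
    rw [hG₀def, withDensity_apply _ hB,
      setLIntegral_congr_fun hB (fun x hx => if_pos hx),
      setLIntegral_const, hFB, ← ENNReal.ofReal_mul hc1.le, hc1def,
      div_mul_cancel₀ _ hp0.ne']
  have hG₀Bc : G₀ Bᶜ = ENNReal.ofReal (1 - α) := by
    rw [hG₀def, withDensity_apply _ hB.compl,
      setLIntegral_congr_fun hB.compl (fun x hx => if_neg hx),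
      setLIntegral_const, hFBc, ← ENNReal.ofReal_mul hc2.le, hc2def,
      div_mul_cancel₀ _ (by linarith : (1:ℝ) - p ≠ 0)]
  have hG₀prob : IsProbabilityMeasure G₀ := by
    constructor
    rw [← Set.union_compl_self B, measure_union (disjoint_compl_right) hB.compl,
      hG₀B, hG₀Bc, ← ENNReal.ofReal_add hα0.le (by linarith), add_sub_cancel,
      ENNReal.ofReal_one]
  have hG₀F : G₀ ≪ F := withDensity_absolutelyContinuous F f
  have h_rn : G₀.rnDeriv F =ᵐ[F] f := Measure.rnDeriv_withDensity F hf_meas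
  set ℓ : X → ℝ := fun x => if x ∈ B then Real.log c1 else Real.log c2 with hℓdef
  have hℓ_f : ∀ x, Real.log (f x).toReal = ℓ x := by
    intro x
    by_cases hx : x ∈ B <;>
      simp [hfdef, hℓdef, hx, ENNReal.toReal_ofReal hc1.le, ENNReal.toReal_ofReal hc2.le]
  haveI := hG₀prob
  -- compute KL G₀ F
  have h_eqae : (fun x => Real.log ((G₀.rnDeriv F) x).toReal) =ᵐ[G₀] ℓ := by
    filter_upwards [h_rn.filter_mono hG₀F.ae_le] with x hx
    rw [hx, hℓ_f]
  have hKL₀ : KL G₀ F = ENNReal.ofReal (α * Real.log c1 + (1 - α) * Real.log c2) := by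
    have hInt : Integrable (fun x => Real.log ((G₀.rnDeriv F) x).toReal) G₀ :=
      (ite_integrable G₀ hB _ _).congr h_eqae.symm
    rw [KL, if_pos ⟨hG₀F, hInt⟩, integral_congr_ae h_eqae, ite_integral G₀ hB,
      hG₀B, hG₀Bc, ENNReal.toReal_ofReal hα0.le, ENNReal.toReal_ofReal (by linarith : (0:ℝ) ≤ 1 - α)]
  refine le_antisymm (sInf_le ⟨G₀, hG₀prob, le_of_eq hG₀B.symm, hKL₀.symm⟩) (le_sInf ?_)
  rintro r ⟨G, hGprob, hGB, rfl⟩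
  haveI := hGprob
  rw [KL]
  split_ifs with h
  swap
  · exact le_top
  obtain ⟨hac, hint⟩ := h
  apply ENNReal.ofReal_le_ofReal
  set g : X → ℝ := fun x => ((G.rnDeriv F) x).toReal with hgdef
  set fr : X → ℝ := fun x => if x ∈ B then c1 else c2 with hfrdef
  have hfr_pos : ∀ x, 0 < fr x := fun x => by
    by_cases hx : x ∈ B <;> simp [hfrdef, hx, hc1, hc2]
  have hfr_meas : Measurable fr := Measurable.ite hB measurable_const measurable_const
  have hmg : Measurable g := (Measure.measurable_rnDeriv G F).ennreal_toReal
  set t : ℝ := (G B).toReal with htdef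
  have hαt : α ≤ t := by
    have := (ENNReal.toReal_le_toReal ENNReal.ofReal_ne_top (measure_ne_top G B)).mpr hGB
    rwa [ENNReal.toReal_ofReal hα0.le] at this
  have hGBc : (G Bᶜ).toReal = 1 - t := by
    rw [measure_compl hB (measure_ne_top G B), measure_univ,
      ENNReal.toReal_sub_of_le prob_le_one ENNReal.one_ne_top, ENNReal.toReal_one]
  have hg_pos : ∀ᵐ x ∂G, 0 < g x := by
    filter_upwards [Measure.rnDeriv_pos hac, hac.ae_le (Measure.rnDeriv_lt_top G F)]
      with x h1 h2
    exact ENNReal.toReal_pos h1.ne' h2.ne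
  have hpt : ∀ᵐ x ∂G, 1 - fr x / g x ≤ Real.log (g x) - ℓ x := by
    filter_upwards [hg_pos] with x hx
    have h := Real.log_le_sub_one_of_pos (div_pos (hfr_pos x) hx)
    rw [Real.log_div (hfr_pos x).ne' hx.ne'] at h
    have hℓx : ℓ x = Real.log (fr x) := by
      by_cases hxB : x ∈ B <;> simp [hℓdef, hfrdef, hxB]
    linarith
  have hofr_f : (fun x => ENNReal.ofReal (fr x)) = f := by
    funext x
    by_cases hxB : x ∈ B <;> simp [hfdef, hfrdef, hxB]
  have hq_nonneg : ∀ x, 0 ≤ fr x / g x := fun x =>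
    div_nonneg (hfr_pos x).le ENNReal.toReal_nonneg
  have hlint : ∫⁻ x, ENNReal.ofReal (fr x / g x) ∂G ≤ 1 := by
    rw [← MeasureTheory.lintegral_rnDeriv_mul hac (f := fun x => ENNReal.ofReal (fr x / g x))
      (hfr_meas.div hmg).ennreal_ofReal.aemeasurable]
    calc ∫⁻ x, G.rnDeriv F x * ENNReal.ofReal (fr x / g x) ∂F
        ≤ ∫⁻ x, ENNReal.ofReal (fr x) ∂F := by
          refine lintegral_mono_ae ?_
          filter_upwards [Measure.rnDeriv_lt_top G F] with x hx
          by_cases h0 : G.rnDeriv F x = 0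
          · simp [h0]
          · have hgpos : 0 < g x := ENNReal.toReal_pos h0 hx.ne
            have hrw : G.rnDeriv F x = ENNReal.ofReal (g x) :=
              (ENNReal.ofReal_toReal hx.ne).symm
            rw [hrw, ← ENNReal.ofReal_mul ENNReal.toReal_nonneg]
            have : g x * (fr x / g x) = fr x := by field_simp
            rw [this]
      _ = 1 := by
          rw [hofr_f]
          have := hG₀prob.measure_univ
          rw [hG₀def, withDensity_apply f MeasurableSet.univ, setLIntegral_univ] at this
          exact this
  have hq_int : Integrable (fun x => fr x / g x) G := by
    refine ⟨(hfr_meas.div hmg).aestronglyMeasurable, ?_⟩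
    rw [hasFiniteIntegral_iff_ofReal (ae_of_all _ hq_nonneg)]
    exact lt_of_le_of_lt hlint ENNReal.one_lt_top
  have hq_le : ∫ x, fr x / g x ∂G ≤ 1 := by
    rw [integral_eq_lintegral_of_nonneg_ae (ae_of_all _ hq_nonneg)
      (hfr_meas.div hmg).aestronglyMeasurable]
    calc (∫⁻ x, ENNReal.ofReal (fr x / g x) ∂G).toReal
        ≤ (1 : ℝ≥0∞).toReal := ENNReal.toReal_mono ENNReal.one_ne_top hlint
      _ = 1 := ENNReal.toReal_one
  have hℓ_int : Integrable ℓ G := ite_integrable G hB _ _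
  have hmono : ∫ x, (1 - fr x / g x) ∂G ≤ ∫ x, (Real.log (g x) - ℓ x) ∂G :=
    integral_mono_ae ((integrable_const 1).sub hq_int) (hint.sub hℓ_int) hpt
  rw [integral_sub (integrable_const 1) hq_int, integral_sub hint hℓ_int,
    integral_const, probReal_univ, one_smul] at hmono
  have hℓ_val : ∫ x, ℓ x ∂G = t * Real.log c1 + (1 - t) * Real.log c2 := by
    rw [hℓdef, ite_integral G hB, hGBc]
  have hlog1 : 0 ≤ Real.log c1 :=
    Real.log_nonneg ((one_le_div hp0).mpr hpα)
  have hlog2 : Real.log c2 ≤ 0 :=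
    Real.log_nonpos hc2.le ((div_le_one (by linarith)).mpr (by linarith))
  have hstep : α * Real.log c1 + (1 - α) * Real.log c2 ≤ ∫ x, ℓ x ∂G := by
    rw [hℓ_val]
    nlinarith [mul_nonneg (sub_nonneg.mpr hαt) (sub_nonneg.mpr (hlog2.trans hlog1))]
  linarith
end
end

section
/- Let F be a Borel probability measure on 𝒳, A ⊆ 𝒳 measurable, ε > 0, and δ ∈ (0,1) with (1+ε)δ < 1. Suppose there exists a measurable C ⊆ A with F(C) = δ. Then inf{ H(G∣F) : G a probability measure on 𝒳 such that for some measurable C' ⊆ A with F(C') ≥ δ, dG/dF ≥ 1+ε F-almost everywhere on C' } = γ⁺_ε(δ). -/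
open MeasureTheory Filter Topology ENNReal
open scoped Classical
open ProbabilityTheory

noncomputable section

lemma my_integral_llr_nonneg {X : Type*} [MeasurableSpace X] (μ ν : Measure X)
    [IsProbabilityMeasure μ] [IsProbabilityMeasure ν] (hμν : μ ≪ ν)
    (h : Integrable (llr μ ν) μ) : 0 ≤ ∫ x, llr μ ν x ∂μ := by
  set g : X → ℝ≥0∞ := fun x => (μ.rnDeriv ν x)⁻¹ with hg_def
  have hg : Measurable g := (Measure.measurable_rnDeriv μ ν).inv
  have hpos : ∀ᵐ x ∂μ, 0 < μ.rnDeriv ν x := Measure.rnDeriv_pos hμν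
  have hlt : ∀ᵐ x ∂μ, μ.rnDeriv ν x < ⊤ := hμν.ae_le (Measure.rnDeriv_lt_top μ ν)
  have lint : ∫⁻ x, g x ∂μ ≤ 1 := by
    conv_lhs => rw [← Measure.withDensity_rnDeriv_eq μ ν hμν]
    rw [lintegral_withDensity_eq_lintegral_mul ν (Measure.measurable_rnDeriv μ ν) hg]
    calc ∫⁻ x, μ.rnDeriv ν x * g x ∂ν ≤ ∫⁻ _, 1 ∂ν :=
          lintegral_mono fun x => ENNReal.mul_inv_le_one _
      _ = 1 := by simp
  have hint_inv : Integrable (fun x => ((μ.rnDeriv ν x).toReal)⁻¹) μ := by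
    have : Integrable (fun x => (g x).toReal) μ :=
      integrable_toReal_of_lintegral_ne_top hg.aemeasurable
        (lt_of_le_of_lt lint ENNReal.one_lt_top).ne
    simpa [hg_def, ENNReal.toReal_inv] using this
  have hivalle : ∫ x, ((μ.rnDeriv ν x).toReal)⁻¹ ∂μ ≤ 1 := by
    have heq : ∫ x, ((μ.rnDeriv ν x).toReal)⁻¹ ∂μ = (∫⁻ x, g x ∂μ).toReal := by
      rw [← integral_toReal hg.aemeasurable ?_]
      · simp [hg_def, ENNReal.toReal_inv]
      · filter_upwards [hpos] with x hx
        simp [hg_def, ENNReal.inv_lt_top, hx]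
    rw [heq]
    simpa using ENNReal.toReal_mono ENNReal.one_ne_top lint
  have hptwise : ∀ᵐ x ∂μ, -llr μ ν x ≤ ((μ.rnDeriv ν x).toReal)⁻¹ - 1 := by
    filter_upwards [hpos, hlt] with x hx0 hxt
    have ht : 0 < (μ.rnDeriv ν x).toReal := ENNReal.toReal_pos hx0.ne' hxt.ne
    have := Real.log_le_sub_one_of_pos (inv_pos.2 ht)
    rw [Real.log_inv] at this
    simpa [llr] using this
  have := integral_mono_ae h.neg (hint_inv.sub (integrable_const 1)) hptwise
  simp only [Pi.neg_apply, Pi.sub_apply] at this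
  rw [integral_neg, integral_sub hint_inv (integrable_const 1)] at this
  simp only [integral_const, measureReal_def, measure_univ, ENNReal.toReal_one, smul_eq_mul, one_mul] at this
  linarith

lemma gamma_le (ε δ b a : ℝ) (hε : 0 < ε) (hδ0 : 0 < δ) (hδ1 : δ < 1)
    (hεδ : (1 + ε) * δ < 1) (hb : δ ≤ b) (ha : (1 + ε) * b ≤ a) :
    gammaPlus ε δ ≤ Real.log ((1 + ε) * (1 - δ) / (1 - (1 + ε) * δ)) * a
      - Real.log (((1 + ε) * (1 - δ) / (1 - (1 + ε) * δ) - 1) * b + 1) := by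
  obtain ⟨u, hu_def⟩ : ∃ u : ℝ, u = 1 - (1 + ε) * δ := ⟨_, rfl⟩
  obtain ⟨v, hv_def⟩ : ∃ v : ℝ, v = 1 - δ := ⟨_, rfl⟩
  obtain ⟨R, hR_def⟩ : ∃ R : ℝ, R = (1 + ε) * v / u := ⟨_, rfl⟩
  obtain ⟨lam, hlam_def⟩ : ∃ l : ℝ, l = Real.log R := ⟨_, rfl⟩
  rw [← hu_def, ← hv_def, ← hR_def, ← hlam_def]
  have hu : 0 < u := by rw [hu_def]; linarith
  have hv : 0 < v := by rw [hv_def]; linarith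
  have hεp : 0 < 1 + ε := by linarith
  have hRnum : (1 + ε) * v = u + ε := by rw [hu_def, hv_def]; ring
  have hRpos : 0 < R := by rw [hR_def]; positivity
  have hR1 : 1 < R := by
    rw [hR_def, lt_div_iff₀ hu, one_mul, hRnum]; linarith
  have hlam_pos : 0 < lam := hlam_def ▸ Real.log_pos hR1
  have hc : R - 1 = ε / u := by
    rw [hR_def]; field_simp; linarith [hRnum]
  have hi : ε / v ≤ (1 + ε) * lam := by
    have h1 : Real.log R⁻¹ ≤ R⁻¹ - 1 := Real.log_le_sub_one_of_pos (by positivity)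
    rw [Real.log_inv, ← hlam_def] at h1
    have h3 : 1 - R⁻¹ = ε / ((1 + ε) * v) := by
      rw [hR_def, inv_div]
      field_simp
      linarith [hRnum]
    have h4 : ε / ((1 + ε) * v) ≤ lam := by rw [← h3]; linarith
    calc ε / v = (1 + ε) * (ε / ((1 + ε) * v)) := by field_simp
      _ ≤ (1 + ε) * lam := by nlinarith
  have hii : (R - 1) * δ + 1 = v / u := by
    rw [hc]; field_simp; rw [hu_def, hv_def]; ring
  have hcb_pos : 0 < (R - 1) * b + 1 := by nlinarith [hc, div_pos hε hu]
  have hiii : Real.log ((R - 1) * b + 1) ≤ Real.log (v / u) + (ε / v) * (b - δ) := by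
    have h1 : Real.log (((R - 1) * b + 1) / ((R - 1) * δ + 1)) ≤
        ((R - 1) * b + 1) / ((R - 1) * δ + 1) - 1 :=
      Real.log_le_sub_one_of_pos (by rw [hii]; positivity)
    rw [Real.log_div hcb_pos.ne' (by rw [hii]; positivity)] at h1
    have h2 : ((R - 1) * b + 1) / ((R - 1) * δ + 1) - 1 = (ε / v) * (b - δ) := by
      have huv : u - v = -(ε * δ) := by rw [hu_def, hv_def]; ring
      rw [hii, hc]
      field_simp
      linear_combination huv
    rw [h2, hii] at h1
    linarith
  have hiv : lam * ((1 + ε) * b) ≤ lam * a := by nlinarith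
  have hlogR : lam = Real.log (1 + ε) + Real.log v - Real.log u := by
    rw [hlam_def, hR_def, Real.log_div (by positivity) hu.ne', Real.log_mul hεp.ne' hv.ne']
  have hlogvu : Real.log (v / u) = Real.log v - Real.log u := Real.log_div hv.ne' hu.ne'
  have hmono : (ε / v) * (b - δ) ≤ lam * (1 + ε) * (b - δ) := by nlinarith
  have e1 : gammaPlus ε δ = lam * ((1 + ε) * δ) - Real.log (v / u) := by
    rw [gammaPlus, ← hu_def, ← hv_def, Real.log_div hu.ne' hv.ne', hlogR, hlogvu, hu_def]
    ring
  rw [e1]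
  have hexp : lam * (1 + ε) * (b - δ) = lam * ((1 + ε) * b) - lam * ((1 + ε) * δ) := by ring
  linarith [hiii, hiv, hmono, hexp]

theorem stmt14 {X : Type*} [MeasurableSpace X] [MetricSpace X] [CompleteSpace X]
    [TopologicalSpace.SeparableSpace X] [BorelSpace X]
    (F : Measure X) [IsProbabilityMeasure F]
    (A : Set X) (hA : MeasurableSet A) (ε δ : ℝ) (hε : 0 < ε) (hδ : δ ∈ Set.Ioo (0 : ℝ) 1)
    (hεδ : (1 + ε) * δ < 1)
    (hC : ∃ C, C ⊆ A ∧ MeasurableSet C ∧ F C = ENNReal.ofReal δ) :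
    sInf { r : ℝ≥0∞ | ∃ G : Measure X, IsProbabilityMeasure G ∧
        (∃ C', C' ⊆ A ∧ MeasurableSet C' ∧ ENNReal.ofReal δ ≤ F C' ∧
          ∀ᵐ x ∂F, x ∈ C' → 1 + ε ≤ ((G.rnDeriv F) x).toReal) ∧ r = KL G F }
      = ENNReal.ofReal (gammaPlus ε δ) := by
  obtain ⟨C, hCA, hCm, hFC⟩ := hC
  obtain ⟨hδ0, hδ1⟩ := hδ
  have hεp : (0:ℝ) < 1 + ε := by linarith
  have hup : (0:ℝ) < 1 - (1 + ε) * δ := by linarith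
  have hvp : (0:ℝ) < 1 - δ := by linarith
  -- the optimal measure
  obtain ⟨q', hq'⟩ : ∃ q' : ℝ, q' = (1 - (1 + ε) * δ) / (1 - δ) := ⟨_, rfl⟩
  have hq'pos : 0 < q' := by rw [hq']; positivity
  obtain ⟨fd, hfd⟩ : ∃ fd : X → ℝ≥0∞,
      fd = fun x => if x ∈ C then ENNReal.ofReal (1 + ε) else ENNReal.ofReal q' := ⟨_, rfl⟩
  have hfdm : Measurable fd := hfd ▸ Measurable.ite hCm measurable_const measurable_const
  obtain ⟨G, hG⟩ : ∃ G : Measure X, G = F.withDensity fd := ⟨_, rfl⟩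
  have hGC : G C = ENNReal.ofReal ((1 + ε) * δ) := by
    rw [hG, hfd, withDensity_apply _ hCm,
      setLIntegral_congr_fun hCm (fun x (hx : x ∈ C) => if_pos hx),
      setLIntegral_const, hFC, ← ENNReal.ofReal_mul (by linarith)]
  have hGCc : G Cᶜ = ENNReal.ofReal (1 - (1 + ε) * δ) := by
    rw [hG, hfd, withDensity_apply _ hCm.compl,
      setLIntegral_congr_fun hCm.compl (fun x (hx : x ∈ Cᶜ) => if_neg hx),
      setLIntegral_const, prob_compl_eq_one_sub hCm, hFC, ← ENNReal.ofReal_one,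
      ← ENNReal.ofReal_sub _ hδ0.le, ← ENNReal.ofReal_mul hq'pos.le, hq']
    congr 1
    field_simp
  have hGprob : IsProbabilityMeasure G := by
    constructor
    rw [← measure_add_measure_compl (μ := G) hCm, hGC, hGCc,
      ← ENNReal.ofReal_add (by positivity) (by linarith)]
    norm_num
  have hGF : G ≪ F := hG ▸ withDensity_absolutelyContinuous F fd
  have hrn : G.rnDeriv F =ᵐ[F] fd := hG ▸ Measure.rnDeriv_withDensity F hfdm
  obtain ⟨gstep, hgstep⟩ : ∃ g : X → ℝ,
      g = fun x => if x ∈ C then Real.log (1 + ε) else Real.log q' := ⟨_, rfl⟩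
  have hllr_eq : llr G F =ᵐ[G] gstep := by
    filter_upwards [hGF.ae_le hrn] with x hx
    simp only [llr_def]
    rw [hx, hfd, hgstep]
    by_cases hxC : x ∈ C <;>
      simp [hxC, ENNReal.toReal_ofReal hεp.le, ENNReal.toReal_ofReal hq'pos.le]
  have hgstep_eq : gstep = fun x =>
      C.indicator (fun _ => Real.log (1 + ε) - Real.log q') x + Real.log q' := by
    funext x
    by_cases hxC : x ∈ C <;> simp [hgstep, Set.indicator, hxC]
  have hgstep_int : Integrable gstep G := by
    rw [hgstep_eq]
    exact ((integrable_const _).indicator hCm).add (integrable_const _)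
  have hint : Integrable (llr G F) G := (integrable_congr hllr_eq).2 hgstep_int
  have hKLG : KL G F = ENNReal.ofReal (gammaPlus ε δ) := by
    rw [KL, if_pos ⟨hGF, hint⟩]
    congr 1
    have : ∫ x, Real.log ((G.rnDeriv F) x).toReal ∂G = ∫ x, gstep x ∂G :=
      integral_congr_ae hllr_eq
    rw [this, hgstep_eq, integral_add ((integrable_const _).indicator hCm) (integrable_const _),
      integral_indicator_const _ hCm, integral_const, measureReal_def, measureReal_def, hGC, measure_univ,
      ENNReal.toReal_ofReal (by positivity)]
    simp only [smul_eq_mul, ENNReal.toReal_one, one_mul]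
    rw [gammaPlus, ← hq']
    ring
  have hmem : ENNReal.ofReal (gammaPlus ε δ) ∈ { r : ℝ≥0∞ | ∃ G : Measure X,
      IsProbabilityMeasure G ∧
      (∃ C', C' ⊆ A ∧ MeasurableSet C' ∧ ENNReal.ofReal δ ≤ F C' ∧
        ∀ᵐ x ∂F, x ∈ C' → 1 + ε ≤ ((G.rnDeriv F) x).toReal) ∧ r = KL G F } := by
    refine ⟨G, hGprob, ⟨C, hCA, hCm, hFC.ge, ?_⟩, hKLG.symm⟩
    filter_upwards [hrn] with x hx hxC
    rw [hx, hfd]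
    simp [hxC, ENNReal.toReal_ofReal hεp.le]
  refine le_antisymm (sInf_le hmem) (le_sInf ?_)
  rintro r ⟨G', hG'prob, ⟨C', hC'A, hC'm, hFC', hae⟩, rfl⟩
  haveI := hG'prob
  rw [KL]
  split_ifs with h
  · obtain ⟨hG'F, hint'⟩ := h
    refine ENNReal.ofReal_le_ofReal ?_
    have hbδ : δ ≤ (F C').toReal := by
      have := ENNReal.toReal_mono (measure_ne_top F C') hFC'
      rwa [ENNReal.toReal_ofReal hδ0.le] at this
    have hge : ENNReal.ofReal (1 + ε) * F C' ≤ G' C' := by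
      have hres : ∀ᵐ x ∂(F.restrict C'), ENNReal.ofReal (1 + ε) ≤ G'.rnDeriv F x := by
        rw [ae_restrict_iff' hC'm]
        filter_upwards [hae] with x hx hxC
        exact ENNReal.ofReal_le_of_le_toReal (hx hxC)
      calc ENNReal.ofReal (1 + ε) * F C' = ∫⁻ _ in C', ENNReal.ofReal (1 + ε) ∂F :=
            (setLIntegral_const _ _).symm
        _ ≤ ∫⁻ x in C', G'.rnDeriv F x ∂F := lintegral_mono_ae hres
        _ = G' C' := Measure.setLIntegral_rnDeriv hG'F C'
    have hab : (1 + ε) * (F C').toReal ≤ (G' C').toReal := by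
      have := ENNReal.toReal_mono (measure_ne_top G' C') hge
      rwa [ENNReal.toReal_mul, ENNReal.toReal_ofReal hεp.le] at this
    obtain ⟨lam, hlam⟩ : ∃ l : ℝ, l = Real.log ((1 + ε) * (1 - δ) / (1 - (1 + ε) * δ)) :=
      ⟨_, rfl⟩
    have hRpos : (0:ℝ) < (1 + ε) * (1 - δ) / (1 - (1 + ε) * δ) := by positivity
    have hexplam : Real.exp lam = (1 + ε) * (1 - δ) / (1 - (1 + ε) * δ) := by
      rw [hlam, Real.exp_log hRpos]
    obtain ⟨fexp, hfexp⟩ : ∃ f : X → ℝ, f = C'.indicator (fun _ => lam) := ⟨_, rfl⟩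
    have hf_intG : Integrable fexp G' := hfexp ▸ (integrable_const lam).indicator hC'm
    have hfexp_eq : (fun x => Real.exp (fexp x))
        = fun x => C'.indicator (fun _ => Real.exp lam - 1) x + 1 := by
      funext x
      by_cases hxC : x ∈ C' <;> simp [hfexp, Set.indicator, hxC]
    have hexp_int : Integrable (fun x => Real.exp (fexp x)) F := by
      rw [hfexp_eq]
      exact ((integrable_const _).indicator hC'm).add (integrable_const 1)
    have hZ : ∫ x, Real.exp (fexp x) ∂F = (Real.exp lam - 1) * (F C').toReal + 1 := by
      rw [hfexp_eq, integral_add ((integrable_const _).indicator hC'm) (integrable_const 1),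
        integral_indicator_const _ hC'm, integral_const, measureReal_def, measureReal_def, measure_univ]
      simp [smul_eq_mul, mul_comm]
    have hfint : ∫ x, fexp x ∂G' = lam * (G' C').toReal := by
      rw [hfexp, integral_indicator_const _ hC'm, smul_eq_mul, mul_comm, measureReal_def]
    haveI : IsProbabilityMeasure (F.tilted fexp) := isProbabilityMeasure_tilted hexp_int
    have h0 : 0 ≤ ∫ x, llr G' (F.tilted fexp) x ∂G' :=
      my_integral_llr_nonneg _ _ (hG'F.trans (absolutelyContinuous_tilted hexp_int))
        (integrable_llr_tilted_right hG'F hf_intG hint' hexp_int)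
    have heq := integral_llr_tilted_right hG'F hf_intG hexp_int hint'
    rw [heq, hfint, hZ, hexplam] at h0
    have hkey := gamma_le ε δ (F C').toReal (G' C').toReal hε hδ0 hδ1 hεδ hbδ hab
    have hgoal : gammaPlus ε δ ≤ ∫ x, llr G' F x ∂G' := by
      rw [hlam] at h0
      linarith
    exact hgoal
  · exact le_top
end
end

section
/- Let F be a Borel probability measure on 𝒳 and A ⊆ 𝒳 measurable with p = F(A) > 0; let F̃ be the zero-variance sampling distribution, i.e., the probability measure with density dF̃/dF = 1_A/p. Let δ' ∈ (0,1) and ε > 0 with (1+ε)δ' < 1, and suppose there exists a measurable C ⊆ A with F(C) = δ'·p. Then inf{ H(G∣F̃) : G a probability measure on 𝒳 such that for some measurable C' ⊆ A with F(C') ≥ δ'·p, dG/dF̃ ≥ 1+ε F̃-almost everywhere on C' } = γ⁺_ε(δ'). In particular this rate does not depend on p. -/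
open MeasureTheory Filter Topology ENNReal
open scoped Classical

noncomputable section

/-- The zero-variance sampling distribution: density `1_A / F(A)` with respect to `F`. -/
def zeroVar {X : Type*} [MeasurableSpace X] (F : Measure X) (A : Set X) : Measure X :=
  F.withDensity (Set.indicator A fun _ => (F A)⁻¹)

/-! ### Auxiliary real-analysis lemmas -/

def gtAlt (ε s : ℝ) : ℝ :=
  (1 + ε) * s * Real.log (1 + ε) + (1 - (1 + ε) * s) * Real.log (1 - (1 + ε) * s)
    - (1 - (1 + ε) * s) * Real.log (1 - s)

lemma gt_eq_gamma {ε s : ℝ} (hs1 : (1 + ε) * s ≤ 1) (hslt : s < 1) :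
    gammaPlus ε s = gtAlt ε s := by
  unfold gammaPlus gtAlt
  rcases eq_or_lt_of_le hs1 with h | h
  · rw [show (1 : ℝ) - (1+ε)*s = 0 by linarith]
    simp
  · rw [Real.log_div (by linarith) (by linarith)]
    ring

lemma binD_aux {x : ℝ} (hx : 0 < x) : 0 ≤ x - 1 - Real.log x := by
  have := Real.log_le_sub_one_of_pos hx
  linarith

lemma gt_hasDeriv {ε s : ℝ} (hε : 0 < ε) (hs0 : 0 < 1 - (1+ε)*s) (hs1 : s < 1) :
    HasDerivAt (gtAlt ε)
      ((1+ε) * Real.log (1+ε) + (Real.log (1-(1+ε)*s) + 1) * (-(1+ε))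
        - ((-(1+ε)) * Real.log (1-s) + (1-(1+ε)*s) * ((1-s)⁻¹ * (-1)))) s := by
  set c := 1 + ε with hc
  have hcpos : (0:ℝ) < c := by simp [hc]; linarith
  have h1 : HasDerivAt (fun s : ℝ => c * s) c s := by
    simpa using (hasDerivAt_id s).const_mul c
  have h2 : HasDerivAt (fun s : ℝ => 1 - c * s) (-c) s := by
    exact h1.const_sub 1
  have h3 : HasDerivAt (fun x : ℝ => x * Real.log x) (Real.log (1 - c*s) + 1) (1 - c*s) :=
    Real.hasDerivAt_mul_log (ne_of_gt hs0)
  have term2 : HasDerivAt (fun s : ℝ => (1 - c*s) * Real.log (1 - c*s))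
      ((Real.log (1 - c*s) + 1) * (-c)) s := by
    have := HasDerivAt.comp (h := fun s : ℝ => 1 - c*s) s h3 h2; exact this
  have h4 : HasDerivAt (fun s : ℝ => 1 - s) (-1) s := by
    exact (hasDerivAt_id' s).const_sub 1
  have h5 : HasDerivAt (fun s : ℝ => Real.log (1 - s)) ((1-s)⁻¹ * (-1)) s :=
    (Real.hasDerivAt_log (by linarith)).comp s h4
  have term3 : HasDerivAt (fun s : ℝ => (1 - c*s) * Real.log (1 - s))
      ((-c) * Real.log (1-s) + (1 - c*s) * ((1-s)⁻¹ * (-1))) s := h2.mul h5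
  have term1 : HasDerivAt (fun s : ℝ => c * s * Real.log c) (c * Real.log c) s := by
    simpa using h1.mul_const (Real.log c)
  exact (term1.add term2).sub term3

lemma gt_deriv_nonneg {ε s : ℝ} (hε : 0 < ε) (hs0 : 0 < 1 - (1+ε)*s) (hs1 : s < 1) :
    0 ≤ (1+ε) * Real.log (1+ε) + (Real.log (1-(1+ε)*s) + 1) * (-(1+ε))
        - ((-(1+ε)) * Real.log (1-s) + (1-(1+ε)*s) * ((1-s)⁻¹ * (-1))) := by
  set c := 1 + ε with hc
  have hcpos : (0:ℝ) < c := by rw [hc]; linarith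
  have h1s : (0:ℝ) < 1 - s := by linarith
  set x := (1 - c*s) / (c * (1-s)) with hx
  have hxpos : 0 < x := div_pos hs0 (mul_pos hcpos h1s)
  have hlogx : Real.log x = Real.log (1 - c*s) - (Real.log c + Real.log (1-s)) := by
    rw [hx, Real.log_div (ne_of_gt hs0) (ne_of_gt (mul_pos hcpos h1s)),
      Real.log_mul (ne_of_gt hcpos) (ne_of_gt h1s)]
  have key := binD_aux hxpos
  have hxval : (1 - c*s) * (1-s)⁻¹ = c * x := by
    rw [hx]; field_simp
  have hxval2 : (1 - c*s) * ((1-s)⁻¹ * (-1)) = -(c*x) := by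
    rw [← hxval]; ring
  have hclogx : c * Real.log x
      = c * Real.log (1 - c*s) - c * Real.log c - c * Real.log (1-s) := by
    rw [hlogx]; ring
  have key2 : 0 ≤ c*x - c - c * Real.log x := by
    nlinarith [mul_nonneg (le_of_lt hcpos) key]
  rw [hxval2]
  linarith [key2, hclogx]

lemma gt_mono {ε : ℝ} (hε : 0 < ε) :
    MonotoneOn (gtAlt ε) (Set.Icc (0:ℝ) (1/(1+ε))) := by
  have hc : (0:ℝ) < 1 + ε := by linarith
  have hM : (1:ℝ)/(1+ε) < 1 := by rw [div_lt_one hc]; linarith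
  have hfacts : ∀ s ∈ interior (Set.Icc (0:ℝ) (1/(1+ε))), 0 < 1 - (1+ε)*s ∧ s < 1 := by
    intro s hs
    rw [interior_Icc] at hs
    constructor
    · have : (1+ε) * s < (1+ε) * (1/(1+ε)) := by
        apply mul_lt_mul_of_pos_left hs.2 hc
      rw [mul_one_div, div_self (ne_of_gt hc)] at this
      linarith
    · exact lt_trans hs.2 hM
  apply monotoneOn_of_deriv_nonneg (convex_Icc _ _)
  · -- continuity
    unfold gtAlt
    apply ContinuousOn.sub
    · apply ContinuousOn.add
      · exact ((continuous_const.mul continuous_id).mul continuous_const).continuousOn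
      · exact (Real.continuous_mul_log.comp (by continuity)).continuousOn
    · apply ContinuousOn.mul (by fun_prop)
      apply ContinuousOn.log (by fun_prop)
      intro s hs
      have : s < 1 := lt_of_le_of_lt hs.2 hM
      intro h; linarith [h]
  · intro s hs
    obtain ⟨h1, h2⟩ := hfacts s hs
    exact (gt_hasDeriv hε h1 h2).differentiableAt.differentiableWithinAt
  · intro s hs
    obtain ⟨h1, h2⟩ := hfacts s hs
    rw [(gt_hasDeriv hε h1 h2).deriv]
    exact gt_deriv_nonneg hε h1 h2

lemma gamma_mono {ε a b : ℝ} (hε : 0 < ε) (ha : 0 ≤ a) (hab : a ≤ b)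
    (hb : (1+ε) * b ≤ 1) : gammaPlus ε a ≤ gammaPlus ε b := by
  have hc : (0:ℝ) < 1 + ε := by linarith
  have hbM : b ≤ 1/(1+ε) := by
    rw [le_div_iff₀ hc]; linarith
  have haM : a ≤ 1/(1+ε) := le_trans hab hbM
  have hM1 : (1:ℝ)/(1+ε) < 1 := by rw [div_lt_one hc]; linarith
  have ha1 : a < 1 := lt_of_le_of_lt haM hM1
  have hb1 : b < 1 := lt_of_le_of_lt hbM hM1
  rw [gt_eq_gamma (by nlinarith) ha1, gt_eq_gamma hb hb1]
  exact gt_mono hε ⟨ha, haM⟩ ⟨le_trans ha hab, hbM⟩ hab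


def binD (s t : ℝ) : ℝ :=
  t * Real.log t + (1-t) * Real.log (1-t) - t * Real.log s - (1-t) * Real.log (1-s)

lemma binD_hasDeriv {s t : ℝ} (ht0 : 0 < t) (ht1 : t < 1) :
    HasDerivAt (binD s)
      ((Real.log t + 1) + (Real.log (1-t) + 1) * (-1) - Real.log s - (-1) * Real.log (1-s)) t := by
  have h1 : HasDerivAt (fun t : ℝ => t * Real.log t) (Real.log t + 1) t :=
    Real.hasDerivAt_mul_log (ne_of_gt ht0)
  have h2 : HasDerivAt (fun t : ℝ => 1 - t) (-1) t := by
    exact (hasDerivAt_id' t).const_sub 1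
  have h3 : HasDerivAt (fun t : ℝ => (1-t) * Real.log (1-t)) ((Real.log (1-t) + 1) * (-1)) t :=
    (Real.hasDerivAt_mul_log (by linarith : (1:ℝ) - t ≠ 0)).comp t h2
  have h4 : HasDerivAt (fun t : ℝ => t * Real.log s) (Real.log s) t := by
    simpa using (hasDerivAt_id t).mul_const (Real.log s)
  have h5 : HasDerivAt (fun t : ℝ => (1-t) * Real.log (1-s)) ((-1) * Real.log (1-s)) t :=
    h2.mul_const (Real.log (1-s))
  exact ((h1.add h3).sub h4).sub h5

lemma binD_mono {s : ℝ} (hs0 : 0 < s) (hs1 : s < 1) :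
    MonotoneOn (binD s) (Set.Icc s 1) := by
  apply monotoneOn_of_deriv_nonneg (convex_Icc _ _)
  · unfold binD
    apply ContinuousOn.sub
    apply ContinuousOn.sub
    apply ContinuousOn.add
    · exact Real.continuous_mul_log.continuousOn
    · exact (Real.continuous_mul_log.comp (by continuity)).continuousOn
    · exact (continuous_id.mul continuous_const).continuousOn
    · exact ((continuous_const.sub continuous_id).mul continuous_const).continuousOn
  · intro t ht
    rw [interior_Icc] at ht
    exact (binD_hasDeriv (lt_trans hs0 ht.1) ht.2).differentiableAt.differentiableWithinAt
  · intro t ht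
    rw [interior_Icc] at ht
    obtain ⟨hst, ht1⟩ := ht
    rw [(binD_hasDeriv (lt_trans hs0 hst) ht1).deriv]
    have l1 : Real.log s ≤ Real.log t := Real.log_le_log hs0 hst.le
    have l2 : Real.log (1-t) ≤ Real.log (1-s) :=
      Real.log_le_log (by linarith) (by linarith)
    linarith

lemma real_chain {ε δ' s t : ℝ} (hε : 0 < ε) (hδ0 : 0 < δ') (hδs : δ' ≤ s)
    (hts : (1+ε)*s ≤ t) (ht1 : t ≤ 1) :
    gammaPlus ε δ' ≤ t * Real.log (t/s) + (1-t) * Real.log ((1-t)/(1-s)) := by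
  have hc : (0:ℝ) < 1+ε := by linarith
  have hs0 : 0 < s := lt_of_lt_of_le hδ0 hδs
  have hcs1 : (1+ε)*s ≤ 1 := le_trans hts ht1
  have hs1 : s < 1 := by nlinarith
  have hscs : s ≤ (1+ε)*s := by nlinarith
  have ht0 : 0 < t := lt_of_lt_of_le (by positivity) hts
  have hRHS : t * Real.log (t/s) + (1-t) * Real.log ((1-t)/(1-s)) = binD s t := by
    rcases eq_or_lt_of_le ht1 with h | h
    · subst h
      simp [binD, Real.log_div one_ne_zero hs0.ne']
    · unfold binD
      rw [Real.log_div ht0.ne' hs0.ne',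
        Real.log_div (by linarith : (1:ℝ)-t ≠ 0) (by linarith : (1:ℝ)-s ≠ 0)]
      ring
  rw [hRHS]
  calc gammaPlus ε δ' ≤ gammaPlus ε s := gamma_mono hε hδ0.le hδs hcs1
    _ = gtAlt ε s := gt_eq_gamma hcs1 hs1
    _ = binD s ((1+ε)*s) := by
        unfold gtAlt binD
        rw [Real.log_mul hc.ne' hs0.ne']
        ring
    _ ≤ binD s t := binD_mono hs0 hs1 ⟨hscs, hcs1⟩ ⟨le_trans hscs hts, ht1⟩ hts


/-! ### Jensen's inequality for set integrals -/

lemma jensen_set {X : Type*} [MeasurableSpace X] (ν : Measure X) [IsFiniteMeasure ν]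
    {E : Set X} {f : X → ℝ} (hf0 : ∀ x, 0 ≤ f x)
    (hfi : Integrable f ν) (hφi : Integrable (fun x => f x * Real.log (f x)) ν) :
    (∫ x in E, f x ∂ν) * Real.log ((∫ x in E, f x ∂ν) / (ν E).toReal)
      ≤ ∫ x in E, f x * Real.log (f x) ∂ν := by
  by_cases hE0 : ν E = 0
  · rw [Measure.restrict_eq_zero.mpr hE0]
    simp
  · have hne : NeZero (ν.restrict E) := ⟨by rwa [Ne, Measure.restrict_eq_zero]⟩
    have hm : 0 < (ν E).toReal := ENNReal.toReal_pos hE0 (measure_ne_top ν E)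
    have jensen := Real.convexOn_mul_log.map_average_le
      Real.continuous_mul_log.continuousOn isClosed_Ici
      (Filter.Eventually.of_forall fun x => Set.mem_Ici.mpr (hf0 x)) hfi.restrict
      (hφi.restrict : Integrable ((fun x => x * Real.log x) ∘ f) (ν.restrict E))
    rw [average_eq, average_eq, measureReal_restrict_apply_univ, measureReal_def, smul_eq_mul, smul_eq_mul]
      at jensen
    set a := ∫ x in E, f x ∂ν with ha
    set m := (ν E).toReal with hmdef
    set I := ∫ x in E, f x * Real.log (f x) ∂ν with hI
    have h1 : m⁻¹ * a = a / m := inv_mul_eq_div m a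
    rw [h1] at jensen
    have h2 := mul_le_mul_of_nonneg_left jensen hm.le
    have h3 : m * (m⁻¹ * I) = I := by field_simp
    have h4 : m * (a / m * Real.log (a / m)) = a * Real.log (a / m) := by
      field_simp
    rw [h3, h4] at h2
    exact h2


/-! ### Basic facts about `zeroVar` -/

lemma zeroVar_apply {X : Type*} [MeasurableSpace X] (F : Measure X) {A S : Set X}
    (hA : MeasurableSet A) (hS : MeasurableSet S) :
    zeroVar F A S = (F A)⁻¹ * F (A ∩ S) := by
  rw [zeroVar, withDensity_apply _ hS]
  rw [lintegral_indicator hA, Measure.restrict_restrict hA, setLIntegral_const]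


theorem stmt15 {X : Type*} [MeasurableSpace X] [MetricSpace X] [CompleteSpace X]
    [TopologicalSpace.SeparableSpace X] [BorelSpace X]
    (F : Measure X) [IsProbabilityMeasure F]
    (A : Set X) (hA : MeasurableSet A) (hp : 0 < F A)
    (δ' ε : ℝ) (hδ' : δ' ∈ Set.Ioo (0 : ℝ) 1) (hε : 0 < ε) (hεδ : (1 + ε) * δ' < 1)
    (hC : ∃ C, C ⊆ A ∧ MeasurableSet C ∧ F C = ENNReal.ofReal δ' * F A) :
    sInf { r : ℝ≥0∞ | ∃ G : Measure X, IsProbabilityMeasure G ∧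
        (∃ C', C' ⊆ A ∧ MeasurableSet C' ∧ ENNReal.ofReal δ' * F A ≤ F C' ∧
          ∀ᵐ x ∂(zeroVar F A), x ∈ C' → 1 + ε ≤ ((G.rnDeriv (zeroVar F A)) x).toReal) ∧
        r = KL G (zeroVar F A) }
      = ENNReal.ofReal (gammaPlus ε δ') := by
  obtain ⟨hδ0, hδ1⟩ := hδ'
  obtain ⟨C, hCA, hCm, hCF⟩ := hC
  have hεc : (0:ℝ) < 1 + ε := by linarith
  have hFAne : F A ≠ ⊤ := measure_ne_top F A
  have hFA0 : F A ≠ 0 := hp.ne'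
  set ν := zeroVar F A with hνdef
  have hνapp : ∀ {S : Set X}, MeasurableSet S → S ⊆ A → ν S = (F A)⁻¹ * F S := by
    intro S hS hSA
    rw [hνdef, zeroVar_apply F hA hS, Set.inter_eq_self_of_subset_right hSA]
  haveI hνprob : IsProbabilityMeasure ν := by
    constructor
    rw [hνdef, zeroVar_apply F hA MeasurableSet.univ, Set.inter_univ,
      ENNReal.inv_mul_cancel hFA0 hFAne]
  have hνC : ν C = ENNReal.ofReal δ' := by
    rw [hνapp hCm hCA, hCF, mul_comm (ENNReal.ofReal δ') (F A), ← mul_assoc,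
      ENNReal.inv_mul_cancel hFA0 hFAne, one_mul]
  apply le_antisymm
  · -- upper bound: exhibit the optimal G
    set c₀ : ℝ := (1 - (1+ε)*δ') / (1 - δ') with hc₀def
    have hnum : (0:ℝ) < 1 - (1+ε)*δ' := by linarith
    have hden : (0:ℝ) < 1 - δ' := by linarith
    have hc₀pos : 0 < c₀ := div_pos hnum hden
    have hc₀val : c₀ * (1 - δ') = 1 - (1+ε)*δ' := by
      rw [hc₀def, div_mul_cancel₀ _ (ne_of_gt hden)]
    set g : X → ℝ≥0∞ := fun x => if x ∈ C then ENNReal.ofReal (1+ε) else ENNReal.ofReal c₀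
      with hgdef
    have hgmeas : Measurable g := Measurable.ite hCm measurable_const measurable_const
    set G : Measure X := ν.withDensity g with hGdef
    have hνCc : ν Cᶜ = ENNReal.ofReal (1 - δ') := by
      rw [measure_compl hCm (measure_ne_top ν C), hνC, measure_univ,
        show (1:ℝ≥0∞) = ENNReal.ofReal 1 by simp, ← ENNReal.ofReal_sub _ hδ0.le]
    have hGC : G C = ENNReal.ofReal ((1+ε)*δ') := by
      rw [hGdef, withDensity_apply _ hCm]
      rw [setLIntegral_congr_fun hCm
        (fun x (hx : x ∈ C) => (if_pos hx : g x = ENNReal.ofReal (1+ε)))]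
      rw [setLIntegral_const, hνC, ← ENNReal.ofReal_mul (by linarith)]
    have hGCc : G Cᶜ = ENNReal.ofReal (1 - (1+ε)*δ') := by
      rw [hGdef, withDensity_apply _ hCm.compl]
      rw [setLIntegral_congr_fun hCm.compl
        (fun x (hx : x ∈ Cᶜ) => (if_neg hx : g x = ENNReal.ofReal c₀))]
      rw [setLIntegral_const, hνCc, ← ENNReal.ofReal_mul hc₀pos.le, hc₀val]
    haveI hGprob : IsProbabilityMeasure G := by
      constructor
      rw [← measure_add_measure_compl hCm, hGC, hGCc,
        ← ENNReal.ofReal_add (by positivity) (by linarith)]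
      norm_num
    have hac : G ≪ ν := withDensity_absolutelyContinuous ν g
    have hrn : G.rnDeriv ν =ᵐ[ν] g := Measure.rnDeriv_withDensity ν hgmeas
    have hrnG : G.rnDeriv ν =ᵐ[G] g := hac.ae_le hrn
    set h : X → ℝ := fun x => if x ∈ C then Real.log (1+ε) else Real.log c₀ with hhdef
    have haeG : (fun x => Real.log ((G.rnDeriv ν x).toReal)) =ᵐ[G] h := by
      filter_upwards [hrnG] with x hx
      rw [hx, hgdef, hhdef]
      by_cases hxC : x ∈ C
      · simp only [if_pos hxC, ENNReal.toReal_ofReal (by linarith : (0:ℝ) ≤ 1+ε)]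
      · simp only [if_neg hxC, ENNReal.toReal_ofReal hc₀pos.le]
    have hheq : h = fun x => C.indicator (fun _ => Real.log (1+ε)) x
        + Cᶜ.indicator (fun _ => Real.log c₀) x := by
      funext x
      by_cases hxC : x ∈ C
      · simp [hhdef, hxC]
      · simp [hhdef, hxC]
    have hh_int : Integrable h G := by
      rw [hheq]
      exact ((integrable_const _).indicator hCm).add ((integrable_const _).indicator hCm.compl)
    have hint : Integrable (fun x => Real.log ((G.rnDeriv ν x).toReal)) G :=
      hh_int.congr haeG.symm
    have hInt_val : ∫ x, Real.log ((G.rnDeriv ν x).toReal) ∂G = gammaPlus ε δ' := by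
      rw [integral_congr_ae haeG, hheq]
      rw [integral_add ((integrable_const _).indicator hCm)
        ((integrable_const _).indicator hCm.compl)]
      rw [integral_indicator_const _ hCm, integral_indicator_const _ hCm.compl,
        measureReal_def, measureReal_def, hGC, hGCc, ENNReal.toReal_ofReal (by positivity), ENNReal.toReal_ofReal (by linarith)]
      simp only [smul_eq_mul, gammaPlus, hc₀def]
    have hKLval : KL G ν = ENNReal.ofReal (gammaPlus ε δ') := by
      rw [KL, if_pos ⟨hac, hint⟩, hInt_val]
    apply sInf_le
    refine ⟨G, hGprob, ⟨C, hCA, hCm, hCF.ge, ?_⟩, hKLval.symm⟩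
    filter_upwards [hrn] with x hx hxC
    rw [hx, hgdef]
    simp only [if_pos hxC, ENNReal.toReal_ofReal (by linarith : (0:ℝ) ≤ 1+ε), le_refl]
  · -- lower bound
    apply le_sInf
    rintro r ⟨G, hGprob, ⟨C', hC'A, hC'm, hC'F, hae⟩, rfl⟩
    by_cases hKL : G ≪ ν ∧ Integrable (fun x => Real.log ((G.rnDeriv ν x).toReal)) G
    swap
    · rw [KL, if_neg hKL]; exact le_top
    obtain ⟨hac, hint⟩ := hKL
    have hνC'ge : ENNReal.ofReal δ' ≤ ν C' := by
      rw [hνapp hC'm hC'A]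
      calc ENNReal.ofReal δ' = (F A)⁻¹ * (ENNReal.ofReal δ' * F A) := by
            rw [mul_comm (ENNReal.ofReal δ') (F A), ← mul_assoc,
              ENNReal.inv_mul_cancel hFA0 hFAne, one_mul]
        _ ≤ (F A)⁻¹ * F C' := mul_le_mul_right hC'F _
    set f : X → ℝ := fun x => (G.rnDeriv ν x).toReal with hfdef
    have hf0 : ∀ x, 0 ≤ f x := fun x => ENNReal.toReal_nonneg
    set s : ℝ := (ν C').toReal with hsdef
    set t : ℝ := (G C').toReal with htdef
    have hδs : δ' ≤ s := by
      have := ENNReal.toReal_mono (measure_ne_top ν C') hνC'ge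
      rwa [ENNReal.toReal_ofReal hδ0.le] at this
    have ht1 : t ≤ 1 := by
      have h1 : G C' ≤ 1 := prob_le_one
      have := ENNReal.toReal_mono ENNReal.one_ne_top h1
      simpa using this
    have hfint : Integrable f ν := Measure.integrable_toReal_rnDeriv
    have hφint : Integrable (fun x => f x * Real.log (f x)) ν := by
      have := (integrable_rnDeriv_smul_iff hac).mpr hint
      simpa [smul_eq_mul] using this
    have hIval : ∫ x, Real.log (f x) ∂G = ∫ x, f x * Real.log (f x) ∂ν := by
      rw [← integral_rnDeriv_smul hac (f := fun x => Real.log (f x))]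
      simp [smul_eq_mul]
      rfl
    have htC' : ∫ x in C', f x ∂ν = t := Measure.setIntegral_toReal_rnDeriv hac C'
    have hsCc : (ν C'ᶜ).toReal = 1 - s := by
      rw [measure_compl hC'm (measure_ne_top ν C'), measure_univ,
        ENNReal.toReal_sub_of_le prob_le_one ENNReal.one_ne_top, ENNReal.toReal_one]
    have htCc : ∫ x in C'ᶜ, f x ∂ν = 1 - t := by
      rw [Measure.setIntegral_toReal_rnDeriv hac C'ᶜ, measureReal_def,
        measure_compl hC'm (measure_ne_top G C'), measure_univ,
        ENNReal.toReal_sub_of_le prob_le_one ENNReal.one_ne_top, ENNReal.toReal_one]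
    have hts : (1+ε)*s ≤ t := by
      have hres : ∀ᵐ x ∂ν.restrict C', (1+ε) ≤ f x := (ae_restrict_iff' hC'm).mpr hae
      calc (1+ε)*s = ∫ _x in C', (1+ε) ∂ν := by
            rw [setIntegral_const, measureReal_def, smul_eq_mul, mul_comm]
        _ ≤ ∫ x in C', f x ∂ν :=
            integral_mono_ae (integrable_const _) hfint.restrict hres
        _ = t := htC'
    have j1 : t * Real.log (t / s) ≤ ∫ x in C', f x * Real.log (f x) ∂ν := by
      have := jensen_set ν (E := C') hf0 hfint hφint
      rwa [htC'] at this
    have j2 : (1-t) * Real.log ((1-t) / (1-s)) ≤ ∫ x in C'ᶜ, f x * Real.log (f x) ∂ν := by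
      have := jensen_set ν (E := C'ᶜ) hf0 hfint hφint
      rwa [htCc, hsCc] at this
    have hsplit : ∫ x, f x * Real.log (f x) ∂ν
        = (∫ x in C', f x * Real.log (f x) ∂ν) + ∫ x in C'ᶜ, f x * Real.log (f x) ∂ν :=
      (integral_add_compl hC'm hφint).symm
    have hlow : gammaPlus ε δ' ≤ ∫ x, Real.log (f x) ∂G := by
      rw [hIval, hsplit]
      calc gammaPlus ε δ' ≤ t * Real.log (t/s) + (1-t) * Real.log ((1-t)/(1-s)) :=
            real_chain hε hδ0 hδs hts ht1
        _ ≤ _ := add_le_add j1 j2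
    rw [KL, if_pos ⟨hac, hint⟩]
    exact ENNReal.ofReal_le_ofReal hlow
end
end

section
/- Let μ be a probability measure on a measurable space 𝒳 and ψ: 𝒳 → [0,∞) measurable with ∫ e^{σψ} dμ < ∞ for every σ > 0. Then for every K < ∞, lim_{m→∞} sup{ ∫ (ψ − min(ψ, m)) dG : G a probability measure on 𝒳 with H(G∣μ) ≤ K } = 0; that is, the family of measures { G : H(G∣μ) ≤ K } is uniformly integrable with respect to ψ. -/
open MeasureTheory Filter Topology ENNReal
open scoped Classical

noncomputable section

/-- Nonnegativity of relative entropy. -/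
lemma llr_integral_nonneg {X : Type*} [MeasurableSpace X] {G ν : Measure X} [IsProbabilityMeasure G] [IsProbabilityMeasure ν]
    (hac : G ≪ ν) (hi : Integrable (llr G ν) G) : 0 ≤ ∫ x, llr G ν x ∂G := by
  set ρ : X → ℝ := fun x => (G.rnDeriv ν x).toReal with hρ
  have hpos : ∀ᵐ x ∂G, 0 < G.rnDeriv ν x := Measure.rnDeriv_pos hac
  have hlt : ∀ᵐ x ∂G, G.rnDeriv ν x < ⊤ := hac.ae_le (Measure.rnDeriv_lt_top G ν)
  -- integrability of ρ⁻¹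
  have hmeas : Measurable fun x => (ρ x)⁻¹ :=
    ((Measure.measurable_rnDeriv G ν).ennreal_toReal).inv
  have hlint : ∫⁻ x, ENNReal.ofReal ((ρ x)⁻¹) ∂G ≤ 1 := by
    have h1 : ∫⁻ x, ENNReal.ofReal ((ρ x)⁻¹) ∂G ≤ ∫⁻ x, (G.rnDeriv ν x)⁻¹ ∂G := by
      refine lintegral_mono_ae ?_
      filter_upwards [hpos, hlt] with x h1 h2
      rw [show ENNReal.ofReal ((ρ x)⁻¹) = (ENNReal.ofReal (ρ x))⁻¹ by
        rw [ENNReal.ofReal_inv_of_pos (ENNReal.toReal_pos h1.ne' h2.ne)]]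
      rw [ENNReal.ofReal_toReal h2.ne]
    refine h1.trans ?_
    rw [← show ∫⁻ x, G.rnDeriv ν x * (G.rnDeriv ν x)⁻¹ ∂ν = ∫⁻ x, (G.rnDeriv ν x)⁻¹ ∂G from MeasureTheory.lintegral_rnDeriv_mul hac (Measure.measurable_rnDeriv G ν).inv.aemeasurable]
    calc ∫⁻ x, G.rnDeriv ν x * (G.rnDeriv ν x)⁻¹ ∂ν ≤ ∫⁻ _, 1 ∂ν := by
          refine lintegral_mono fun x => ?_
          rcases eq_or_ne (G.rnDeriv ν x) 0 with h | h
          · simp [h]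
          rcases eq_or_ne (G.rnDeriv ν x) ⊤ with h' | h'
          · simp [h']
          · rw [ENNReal.mul_inv_cancel h h']
      _ = 1 := by simp
  have hii : Integrable (fun x => (ρ x)⁻¹) G := by
    refine ⟨hmeas.aestronglyMeasurable, ?_⟩
    rw [hasFiniteIntegral_iff_norm]
    have : ∀ᵐ x ∂G, ENNReal.ofReal ‖(ρ x)⁻¹‖ = ENNReal.ofReal ((ρ x)⁻¹) := by
      filter_upwards [hpos, hlt] with x h1 h2
      rw [Real.norm_of_nonneg (by positivity)]
    rw [lintegral_congr_ae this]
    exact lt_of_le_of_lt hlint ENNReal.one_lt_top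
  have hle : ∀ᵐ x ∂G, -llr G ν x ≤ (ρ x)⁻¹ - 1 := by
    filter_upwards [hpos, hlt] with x h1 h2
    have hρpos : 0 < ρ x := ENNReal.toReal_pos h1.ne' h2.ne
    calc -llr G ν x = Real.log (ρ x)⁻¹ := by rw [llr, ← Real.log_inv]
      _ ≤ (ρ x)⁻¹ - 1 := Real.log_le_sub_one_of_pos (inv_pos.mpr hρpos)
  have h2 : ∫ x, -llr G ν x ∂G ≤ ∫ x, ((ρ x)⁻¹ - 1) ∂G :=
    integral_mono_ae hi.neg (hii.sub (integrable_const 1)) hle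
  have h3 : ∫ x, ((ρ x)⁻¹ - 1) ∂G ≤ 0 := by
    rw [integral_sub hii (integrable_const 1), integral_const]
    simp only [measure_univ, probReal_univ, ENNReal.toReal_one, smul_eq_mul, one_mul]
    have h4 : ∫ x, (ρ x)⁻¹ ∂G ≤ 1 := by
      rw [integral_eq_lintegral_of_nonneg_ae ?_ hmeas.aestronglyMeasurable]
      · calc (∫⁻ x, ENNReal.ofReal ((ρ x)⁻¹) ∂G).toReal ≤ (1 : ℝ≥0∞).toReal :=
            ENNReal.toReal_mono (by simp) hlint
          _ = 1 := by simp
      · filter_upwards [hpos, hlt] with x h1 h2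
        positivity
    linarith
  rw [integral_neg] at h2
  linarith

/-- Change of measure / Donsker–Varadhan inequality. -/
lemma integral_le_llr_add_log {X : Type*} [MeasurableSpace X] {G μ : Measure X} [IsProbabilityMeasure G] [IsProbabilityMeasure μ]
    (hac : G ≪ μ) (hllr : Integrable (llr G μ) G) {g : X → ℝ}
    (hgG : Integrable g G) (hgμ : Integrable (fun x => Real.exp (g x)) μ) :
    ∫ x, g x ∂G ≤ ∫ x, llr G μ x ∂G + Real.log (∫ x, Real.exp (g x) ∂μ) := by
  set ν := μ.tilted g with hν
  have : NeZero μ := ⟨IsProbabilityMeasure.ne_zero μ⟩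
  have hνP : IsProbabilityMeasure ν := isProbabilityMeasure_tilted hgμ
  have hacν : G ≪ ν := hac.trans (absolutelyContinuous_tilted hgμ)
  have hllrν : Integrable (llr G ν) G := integrable_llr_tilted_right hac hgG hllr hgμ
  have h0 : 0 ≤ ∫ x, llr G ν x ∂G := llr_integral_nonneg hacν hllrν
  rw [integral_llr_tilted_right hac hgG hgμ hllr] at h0
  linarith

theorem stmt17 {X : Type*} [MeasurableSpace X] (μ : Measure X) [IsProbabilityMeasure μ]
    (ψ : X → ℝ) (hψ : Measurable ψ) (hψ0 : ∀ x, 0 ≤ ψ x)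
    (hint : ∀ σ : ℝ, 0 < σ → Integrable (fun x => Real.exp (σ * ψ x)) μ)
    (K : ℝ≥0∞) (hK : K ≠ ⊤) :
    Filter.Tendsto (fun m : ℕ =>
        ⨆ G : {G : Measure X // IsProbabilityMeasure G ∧ KL G μ ≤ K},
          ∫⁻ x, ENNReal.ofReal (ψ x - min (ψ x) (m : ℝ)) ∂G.1)
      Filter.atTop (nhds 0) := by
  have hKr : (0:ℝ) ≤ K.toReal := ENNReal.toReal_nonneg
  set φ : ℕ → X → ℝ := fun m x => ψ x - min (ψ x) (m : ℝ) with hφ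
  have hφmeas : ∀ m, Measurable (φ m) := fun m => hψ.sub (hψ.min measurable_const)
  have hφ0 : ∀ m x, 0 ≤ φ m x := fun m x => by
    simp only [hφ, sub_nonneg]; exact min_le_left _ _
  have hφψ : ∀ m x, φ m x ≤ ψ x := fun m x => by
    simp only [hφ]
    have : 0 ≤ min (ψ x) (m : ℝ) := le_min (hψ0 x) (Nat.cast_nonneg m)
    linarith
  rw [ENNReal.tendsto_atTop_zero]
  intro ε hε
  set εr : ℝ := (min ε 1).toReal with hεrdef
  have hmin_ne : min ε 1 ≠ ⊤ := ne_top_of_le_ne_top one_ne_top (min_le_right _ _)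
  have hεr : 0 < εr := ENNReal.toReal_pos (lt_min hε zero_lt_one).ne' hmin_ne
  have hεle : ENNReal.ofReal εr ≤ ε := by
    rw [hεrdef, ENNReal.ofReal_toReal hmin_ne]; exact min_le_left _ _
  set σ : ℝ := (K.toReal + 1) / εr with hσdef
  have hσ : 0 < σ := by positivity
  -- dominated convergence for c m = ∫ exp (σ * φ m x) dμ → 1
  have hcint : ∀ m, Integrable (fun x => Real.exp (σ * φ m x)) μ := by
    intro m
    refine (hint σ hσ).mono' ((hψ.sub (hψ.min measurable_const)).const_mul σ).exp.aestronglyMeasurable ?_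
    refine ae_of_all _ fun x => ?_
    rw [Real.norm_of_nonneg (Real.exp_nonneg _)]
    exact Real.exp_le_exp.mpr (mul_le_mul_of_nonneg_left (hφψ m x) hσ.le)
  have hc : Tendsto (fun m => ∫ x, Real.exp (σ * φ m x) ∂μ) atTop (𝓝 1) := by
    have h1 : (1:ℝ) = ∫ (_ : X), (1:ℝ) ∂μ := by simp
    rw [h1]
    refine tendsto_integral_of_dominated_convergence (fun x => Real.exp (σ * ψ x))
      (fun m => (hcint m).aestronglyMeasurable) (hint σ hσ) (fun m => ?_) ?_
    · refine ae_of_all _ fun x => ?_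
      rw [Real.norm_of_nonneg (Real.exp_nonneg _)]
      exact Real.exp_le_exp.mpr (mul_le_mul_of_nonneg_left (hφψ m x) hσ.le)
    · refine ae_of_all _ fun x => ?_
      have : ∀ᶠ m : ℕ in atTop, Real.exp (σ * φ m x) = 1 := by
        filter_upwards [eventually_ge_atTop ⌈ψ x⌉₊] with m hm
        have hxm : ψ x ≤ (m : ℝ) := (Nat.le_ceil _).trans (Nat.cast_le.mpr hm)
        simp [hφ, min_eq_left hxm]
      exact Tendsto.congr' (Filter.EventuallyEq.symm this) tendsto_const_nhds
  have hcev : ∀ᶠ m : ℕ in atTop, ∫ x, Real.exp (σ * φ m x) ∂μ ≤ Real.exp 1 :=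
    hc.eventually_le_const (by linarith [Real.add_one_le_exp 1])
  obtain ⟨N, hN⟩ := eventually_atTop.mp hcev
  refine ⟨N, fun m hm => ?_⟩
  have hlogc : Real.log (∫ x, Real.exp (σ * φ m x) ∂μ) ≤ 1 := by
    calc Real.log (∫ x, Real.exp (σ * φ m x) ∂μ) ≤ Real.log (Real.exp 1) :=
        Real.log_le_log (integral_exp_pos (hcint m)) (hN m hm)
      _ = 1 := Real.log_exp 1
  refine iSup_le fun ⟨G, hGP, hGK⟩ => ?_
  have : IsProbabilityMeasure G := hGP
  -- unfold KL
  rw [KL] at hGK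
  have hcond : G ≪ μ ∧ Integrable (fun x => Real.log ((G.rnDeriv μ) x).toReal) G := by
    by_contra h
    rw [if_neg h] at hGK
    exact hK (top_le_iff.mp hGK)
  obtain ⟨hac, hllr'⟩ := hcond
  have hllr : Integrable (llr G μ) G := hllr'
  rw [if_pos ⟨hac, hllr'⟩] at hGK
  have hIeq : ∫ x, llr G μ x ∂G = ∫ x, Real.log ((G.rnDeriv μ) x).toReal ∂G := rfl
  have hKle : ∫ x, llr G μ x ∂G ≤ K.toReal := by
    rw [hIeq]
    rcases le_or_gt (∫ x, Real.log ((G.rnDeriv μ) x).toReal ∂G) 0 with h | h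
    · linarith
    · have := ENNReal.toReal_mono hK hGK
      rwa [ENNReal.toReal_ofReal h.le] at this
  -- per-n truncation bound
  have hbound : ∀ n : ℕ, ∫ x, min (φ m x) (n:ℝ) ∂G ≤ εr := by
    intro n
    have hmn : ∀ x, 0 ≤ min (φ m x) (n:ℝ) := fun x => le_min (hφ0 m x) (Nat.cast_nonneg n)
    have hmeasn : Measurable fun x => σ * min (φ m x) (n:ℝ) :=
      ((hφmeas m).min measurable_const).const_mul σ
    have hgG : Integrable (fun x => σ * min (φ m x) (n:ℝ)) G := by
      refine (integrable_const (σ * n)).mono' hmeasn.aestronglyMeasurable (ae_of_all _ fun x => ?_)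
      rw [Real.norm_of_nonneg (mul_nonneg hσ.le (hmn x))]
      exact mul_le_mul_of_nonneg_left (min_le_right _ _) hσ.le
    have hgμ : Integrable (fun x => Real.exp (σ * min (φ m x) (n:ℝ))) μ := by
      refine (hint σ hσ).mono' hmeasn.exp.aestronglyMeasurable (ae_of_all _ fun x => ?_)
      rw [Real.norm_of_nonneg (Real.exp_nonneg _)]
      exact Real.exp_le_exp.mpr (mul_le_mul_of_nonneg_left ((min_le_left _ _).trans (hφψ m x)) hσ.le)
    have hDV := integral_le_llr_add_log hac hllr hgG hgμ
    have hlog2 : Real.log (∫ x, Real.exp (σ * min (φ m x) (n:ℝ)) ∂μ) ≤ 1 := by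
      refine le_trans (Real.log_le_log (integral_exp_pos hgμ) ?_) hlogc
      refine integral_mono hgμ (hcint m) fun x => ?_
      exact Real.exp_le_exp.mpr (mul_le_mul_of_nonneg_left (min_le_left _ _) hσ.le)
    have h1 : σ * ∫ x, min (φ m x) (n:ℝ) ∂G ≤ K.toReal + 1 := by
      rw [← integral_const_mul] -- check name
      linarith
    have h2 : ∫ x, min (φ m x) (n:ℝ) ∂G ≤ (K.toReal + 1) / σ := by
      rw [le_div_iff₀ hσ]
      nlinarith [h1]
    have h3 : (K.toReal + 1) / σ = εr := by
      have h0 : εr ≠ 0 := hεr.ne'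
      rw [hσdef]; field_simp
    linarith [h2, h3.le, h3.ge]
  -- monotone convergence
  have hmono : Monotone (fun (n : ℕ) (x : X) => ENNReal.ofReal (min (φ m x) (n:ℝ))) := by
    intro i j hij x
    exact ENNReal.ofReal_le_ofReal (le_min (min_le_left _ _)
      ((min_le_right _ _).trans (Nat.cast_le.mpr hij)))
  have hsup : ∫⁻ x, ENNReal.ofReal (φ m x) ∂G
      = ⨆ n : ℕ, ∫⁻ x, ENNReal.ofReal (min (φ m x) (n:ℝ)) ∂G := by
    rw [← lintegral_iSup
      (fun n => ((hφmeas m).min measurable_const).ennreal_ofReal) hmono]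
    refine lintegral_congr fun x => ?_
    refine le_antisymm ?_ (iSup_le fun n => ENNReal.ofReal_le_ofReal (min_le_left _ _))
    obtain ⟨n, hn⟩ := exists_nat_ge (φ m x)
    exact le_iSup_of_le n (le_of_eq (by rw [min_eq_left hn]))
  show ∫⁻ x, ENNReal.ofReal (φ m x) ∂G ≤ ε
  rw [hsup]
  refine le_trans (iSup_le fun n => ?_) hεle
  have hmn : ∀ x, 0 ≤ min (φ m x) (n:ℝ) := fun x => le_min (hφ0 m x) (Nat.cast_nonneg n)
  have hIn : Integrable (fun x => min (φ m x) (n:ℝ)) G := by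
    refine (integrable_const (n:ℝ)).mono'
      ((hφmeas m).min measurable_const).aestronglyMeasurable (ae_of_all _ fun x => ?_)
    rw [Real.norm_of_nonneg (hmn x)]
    exact min_le_right _ _
  rw [← ofReal_integral_eq_lintegral_ofReal hIn (ae_of_all _ hmn)]
  exact ENNReal.ofReal_le_ofReal (hbound n)
end
end
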